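/- arXiv:1609.05177 — 6 statements merged into one kernel-verified Lean document; each statement's English description precedes it below -/
import Mathlib

section
/- Let λ: ℝ₊ → ℝ₊ be integrable with ‖λ‖₁ < 1 and first moment m₁ = ∫₀^∞ x λ(x) dx < ∞, and let (a_T) ⊂ (0,1) with a_T → 1. Define ψ^T = ∑_{k≥1} a_T^k λ^{*k} and g^T(x) = ∫_{Tx}^∞ ψ^T(u) du. Then ∫₀^∞ |g^T(x)|² dx ≤ c/T for some constant c independent of T; in particular ∫₀^∞ |g^T(x)|² dx → 0 as T → ∞. -/
open MeasureTheory Filter Set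
open scoped ENNReal

noncomputable def sconv (f g : ℝ → ℝ) : ℝ → ℝ :=
  fun t => ∫ s in (0:ℝ)..t, f s * g (t - s)

/-- `sconvPow f k` is the (k+1)-st scalar convolution power λ^{*(k+1)}. -/
noncomputable def sconvPow (f : ℝ → ℝ) : ℕ → ℝ → ℝ
  | 0 => f
  | (k + 1) => sconv f (sconvPow f k)

namespace GT7

noncomputable def lin (f : ℝ → ℝ) : ℝ≥0∞ := ∫⁻ x, ENNReal.ofReal (f x)

lemma supp_lintegral_Ici {g : ℝ → ℝ} (hgs : ∀ x < (0:ℝ), g x = 0) :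
    ∫⁻ x in Ici (0:ℝ), ENNReal.ofReal (g x) = lin g := by
  have hsplit := lintegral_add_compl (μ := volume) (fun x => ENNReal.ofReal (g x)) (measurableSet_Ici (a := (0:ℝ)))
  have hz : ∫⁻ x in (Ici (0:ℝ))ᶜ, ENNReal.ofReal (g x) = 0 := by
    rw [compl_Ici]
    rw [show (∫⁻ x in Iio (0:ℝ), ENNReal.ofReal (g x)) = ∫⁻ _ in Iio (0:ℝ), (0:ℝ≥0∞) from
      setLIntegral_congr_fun measurableSet_Iio
        (fun x hx => by simp [hgs x hx])]
    simp
  rw [lin, ← hsplit, hz, add_zero]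

lemma supp_lintegral_Ioi {g : ℝ → ℝ} (hgs : ∀ x < (0:ℝ), g x = 0) :
    ∫⁻ x in Ioi (0:ℝ), ENNReal.ofReal (g x) = lin g := by
  rw [← supp_lintegral_Ici hgs]
  exact setLIntegral_congr Ioi_ae_eq_Ici

lemma sconv_eq {f g : ℝ → ℝ} (hfs : ∀ x < (0:ℝ), f x = 0) (t : ℝ) :
    sconv f g t = ∫ s, (Ioc (0:ℝ) t).indicator (fun s => f s * g (t - s)) s := by
  rcases le_or_gt 0 t with h | h
  · rw [sconv, intervalIntegral.integral_of_le h, ← integral_indicator measurableSet_Ioc]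
  · have he : Ioc (0:ℝ) t = ∅ := Ioc_eq_empty (by linarith)
    rw [he]
    simp only [indicator_empty, integral_zero]
    rw [sconv, intervalIntegral.integral_symm, intervalIntegral.integral_of_le h.le]
    rw [integral_Ioc_eq_integral_Ioo]
    rw [setIntegral_congr_fun measurableSet_Ioo
      (fun s hs => by rw [hfs s hs.2, zero_mul])]
    simp

/-- kernel used for both sconv representation and Tonelli -/
noncomputable def ker (f g : ℝ → ℝ) (t s : ℝ) : ℝ≥0∞ :=
  (Ioc (0:ℝ) t).indicator (fun s => ENNReal.ofReal (f s) * ENNReal.ofReal (g (t - s))) s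

lemma ker_uncurry (f g : ℝ → ℝ) :
    Function.uncurry (ker f g) = Set.indicator {q : ℝ × ℝ | 0 < q.2 ∧ q.2 ≤ q.1}
      (fun q => ENNReal.ofReal (f q.2) * ENNReal.ofReal (g (q.1 - q.2))) := by
  ext ⟨t, s⟩
  by_cases h : 0 < s ∧ s ≤ t
  · rw [Function.uncurry]
    simp only [ker]
    rw [Set.indicator_of_mem (by exact h : (t, s) ∈ {q : ℝ × ℝ | 0 < q.2 ∧ q.2 ≤ q.1}),
      Set.indicator_of_mem (Set.mem_Ioc.2 h)]
  · rw [Function.uncurry]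
    simp only [ker]
    rw [Set.indicator_of_notMem (show s ∉ Set.Ioc (0:ℝ) t from fun hc => h (Set.mem_Ioc.1 hc)),
      Set.indicator_of_notMem (show (t,s) ∉ {q : ℝ × ℝ | 0 < q.2 ∧ q.2 ≤ q.1} from h)]

lemma ker_meas {f g : ℝ → ℝ} (hf : Measurable f) (hg : Measurable g) :
    Measurable (Function.uncurry (ker f g)) := by
  rw [ker_uncurry]
  exact Measurable.indicator
    ((hf.comp measurable_snd).ennreal_ofReal.mul
      ((hg.comp (measurable_fst.sub measurable_snd)).ennreal_ofReal))
    ((measurableSet_lt measurable_const measurable_snd).inter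
      (measurableSet_le measurable_snd measurable_fst))

lemma lintegral_ker {f g : ℝ → ℝ} (hf : Measurable f) (hg : Measurable g)
    (hfs : ∀ x < (0:ℝ), f x = 0) (hgs : ∀ x < (0:ℝ), g x = 0) :
    ∫⁻ t, ∫⁻ s, ker f g t s = lin f * lin g := by
  rw [lintegral_lintegral_swap (ker_meas hf hg).aemeasurable]
  have inner : ∀ s : ℝ, (∫⁻ t, ker f g t s)
      = (Ioi (0:ℝ)).indicator (fun s => ENNReal.ofReal (f s) * lin g) s := by
    intro s
    by_cases hs : 0 < s
    · have h1 : ∀ t, ker f g t s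
          = ENNReal.ofReal (f s) * ((Ici (0:ℝ)).indicator (fun u => ENNReal.ofReal (g u)) (t + -s)) := by
        intro t
        by_cases ht : s ≤ t
        · rw [ker, Set.indicator_of_mem (Set.mem_Ioc.2 ⟨hs, ht⟩),
            Set.indicator_of_mem (by simp [Set.mem_Ici]; linarith), ← sub_eq_add_neg]
        · rw [ker, Set.indicator_of_notMem (fun hc => ht (Set.mem_Ioc.1 hc).2),
            Set.indicator_of_notMem (by simp [Set.mem_Ici]; linarith), mul_zero]
      simp only [h1]
      rw [lintegral_const_mul _ (Measurable.comp' (hg.ennreal_ofReal.indicator measurableSet_Ici)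
        (measurable_add_const (-s)))]
      rw [lintegral_add_right_eq_self ((Ici (0:ℝ)).indicator fun u => ENNReal.ofReal (g u)) (-s)]
      rw [lintegral_indicator measurableSet_Ici, supp_lintegral_Ici hgs,
        Set.indicator_of_mem (Set.mem_Ioi.2 hs)]
    · have h1 : ∀ t, ker f g t s = 0 := fun t =>
        Set.indicator_of_notMem (fun hc => hs (Set.mem_Ioc.1 hc).1) _
      simp only [h1, lintegral_zero]
      rw [Set.indicator_of_notMem (by simpa using hs)]
  simp only [inner]
  rw [lintegral_indicator measurableSet_Ioi,
    lintegral_mul_const _ hf.ennreal_ofReal, supp_lintegral_Ioi hfs]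

noncomputable def mom (f : ℝ → ℝ) : ℝ≥0∞ := ∫⁻ x, ENNReal.ofReal (x * f x)

lemma sconv_meas {f g : ℝ → ℝ} (hf : Measurable f) (hg : Measurable g)
    (hfs : ∀ x < (0:ℝ), f x = 0) : Measurable (sconv f g) := by
  have hK : Measurable (Set.indicator {q : ℝ × ℝ | 0 < q.2 ∧ q.2 ≤ q.1}
      (fun q => f q.2 * g (q.1 - q.2))) :=
    Measurable.indicator ((hf.comp measurable_snd).mul
        (hg.comp (measurable_fst.sub measurable_snd)))
      ((measurableSet_lt measurable_const measurable_snd).inter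
        (measurableSet_le measurable_snd measurable_fst))
  have : sconv f g = fun t => ∫ s, Set.indicator {q : ℝ × ℝ | 0 < q.2 ∧ q.2 ≤ q.1}
      (fun q => f q.2 * g (q.1 - q.2)) (t, s) := by
    funext t
    rw [sconv_eq hfs t]
    congr 1
  rw [this]
  exact (hK.stronglyMeasurable.integral_prod_right').measurable

lemma sconv_nonneg' {f g : ℝ → ℝ} (hfn : ∀ x, 0 ≤ f x) (hgn : ∀ x, 0 ≤ g x)
    (hfs : ∀ x < (0:ℝ), f x = 0) (t : ℝ) : 0 ≤ sconv f g t := by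
  rw [sconv_eq hfs t]
  exact integral_nonneg (Set.indicator_nonneg (fun s _ => mul_nonneg (hfn s) (hgn _)))

lemma sconv_supp {f g : ℝ → ℝ} (hfs : ∀ x < (0:ℝ), f x = 0) {t : ℝ} (ht : t < 0) :
    sconv f g t = 0 := by
  rw [sconv_eq hfs t, Ioc_eq_empty (by linarith)]
  simp

/-- pointwise: the real integrand's ofReal is the kernel -/
lemma ofReal_indicator_eq_ker {f g : ℝ → ℝ} (hfn : ∀ x, 0 ≤ f x) (t : ℝ) :
    (fun s => ENNReal.ofReal ((Ioc (0:ℝ) t).indicator (fun s => f s * g (t - s)) s))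
      = ker f g t := by
  funext s
  by_cases h : s ∈ Ioc (0:ℝ) t
  · rw [Set.indicator_of_mem h, ker, Set.indicator_of_mem h, ENNReal.ofReal_mul (hfn s)]
  · rw [Set.indicator_of_notMem h, ker, Set.indicator_of_notMem h, ENNReal.ofReal_zero]

lemma sconv_toReal {f g : ℝ → ℝ} (hf : Measurable f) (hg : Measurable g)
    (hfn : ∀ x, 0 ≤ f x) (hgn : ∀ x, 0 ≤ g x) (hfs : ∀ x < (0:ℝ), f x = 0) (t : ℝ) :
    sconv f g t = (∫⁻ s, ker f g t s).toReal := by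
  have hm : Measurable fun s => (Ioc (0:ℝ) t).indicator (fun s => f s * g (t - s)) s :=
    (hf.mul (Measurable.comp' hg (measurable_const.sub measurable_id))).indicator measurableSet_Ioc
  have h := integral_eq_lintegral_of_nonneg_ae (μ := volume)
    (Filter.Eventually.of_forall (Set.indicator_nonneg (fun s _ => mul_nonneg (hfn s) (hgn _))))
    hm.aestronglyMeasurable
  rw [sconv_eq hfs t, h]
  congr 1
  exact lintegral_congr (fun s => congrFun (ofReal_indicator_eq_ker hfn t) s)

lemma inner_meas {f g : ℝ → ℝ} (hf : Measurable f) (hg : Measurable g) :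
    Measurable (fun t => ∫⁻ s, ker f g t s) :=
  Measurable.lintegral_prod_right' (ker_meas hf hg)

lemma lin_sconv {f g : ℝ → ℝ} (hf : Measurable f) (hg : Measurable g)
    (hfn : ∀ x, 0 ≤ f x) (hgn : ∀ x, 0 ≤ g x)
    (hfs : ∀ x < (0:ℝ), f x = 0) (hgs : ∀ x < (0:ℝ), g x = 0)
    (hIf : lin f ≠ ⊤) (hIg : lin g ≠ ⊤) :
    lin (sconv f g) = lin f * lin g := by
  have hfin : ∀ᵐ t : ℝ, (∫⁻ s, ker f g t s) ≠ ⊤ := by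
    have h1 : ∫⁻ t, ∫⁻ s, ker f g t s = lin f * lin g := lintegral_ker hf hg hfs hgs
    have := ae_lt_top (inner_meas hf hg) (by rw [h1]; exact ENNReal.mul_ne_top hIf hIg)
    filter_upwards [this] with t ht using ht.ne
  have : (fun t => ENNReal.ofReal (sconv f g t)) =ᵐ[volume] (fun t => ∫⁻ s, ker f g t s) := by
    filter_upwards [hfin] with t ht
    rw [sconv_toReal hf hg hfn hgn hfs t, ENNReal.ofReal_toReal ht]
  rw [lin, lintegral_congr_ae this, lintegral_ker hf hg hfs hgs]

lemma sconv_integrable {f g : ℝ → ℝ} (hf : Measurable f) (hg : Measurable g)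
    (hfn : ∀ x, 0 ≤ f x) (hgn : ∀ x, 0 ≤ g x)
    (hfs : ∀ x < (0:ℝ), f x = 0) (hgs : ∀ x < (0:ℝ), g x = 0)
    (hIf : lin f ≠ ⊤) (hIg : lin g ≠ ⊤) : Integrable (sconv f g) := by
  refine ⟨(sconv_meas hf hg hfs).aestronglyMeasurable, ?_⟩
  rw [hasFiniteIntegral_iff_ofReal
    (Filter.Eventually.of_forall (sconv_nonneg' hfn hgn hfs))]
  rw [show (∫⁻ t, ENNReal.ofReal (sconv f g t)) = lin (sconv f g) from rfl,
    lin_sconv hf hg hfn hgn hfs hgs hIf hIg]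
  exact (ENNReal.mul_ne_top hIf hIg).lt_top

lemma ker_add_decomp {f g : ℝ → ℝ} (hfs : ∀ x < (0:ℝ), f x = 0) (t s : ℝ) :
    ENNReal.ofReal t * ker f g t s
      = ker (fun s => s * f s) g t s + ker f (fun s => s * g s) t s := by
  by_cases h : s ∈ Ioc (0:ℝ) t
  · rw [ker, ker, ker, Set.indicator_of_mem h, Set.indicator_of_mem h, Set.indicator_of_mem h]
    have hs0 : (0:ℝ) ≤ s := le_of_lt h.1
    have hts : (0:ℝ) ≤ t - s := sub_nonneg.2 h.2
    rw [ENNReal.ofReal_mul hs0, ENNReal.ofReal_mul hts,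
      show t = s + (t - s) by ring, ENNReal.ofReal_add hs0 hts]
    ring_nf
  · rw [ker, ker, ker, Set.indicator_of_notMem h, Set.indicator_of_notMem h,
      Set.indicator_of_notMem h, mul_zero, add_zero]

lemma mom_sconv {f g : ℝ → ℝ} (hf : Measurable f) (hg : Measurable g)
    (hfn : ∀ x, 0 ≤ f x) (hgn : ∀ x, 0 ≤ g x)
    (hfs : ∀ x < (0:ℝ), f x = 0) (hgs : ∀ x < (0:ℝ), g x = 0)
    (hIf : lin f ≠ ⊤) (hIg : lin g ≠ ⊤) :
    mom (sconv f g) = mom f * lin g + lin f * mom g := by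
  have hfin : ∀ᵐ t : ℝ, (∫⁻ s, ker f g t s) ≠ ⊤ := by
    have h1 : ∫⁻ t, ∫⁻ s, ker f g t s = lin f * lin g := lintegral_ker hf hg hfs hgs
    have := ae_lt_top (inner_meas hf hg) (by rw [h1]; exact ENNReal.mul_ne_top hIf hIg)
    filter_upwards [this] with t ht using ht.ne
  have step1 : (fun t => ENNReal.ofReal (t * sconv f g t))
      =ᵐ[volume] (fun t => ENNReal.ofReal t * ∫⁻ s, ker f g t s) := by
    filter_upwards [hfin] with t ht
    rcases lt_or_ge t 0 with h | h
    · rw [sconv_supp hfs h, mul_zero, ENNReal.ofReal_zero,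
        ENNReal.ofReal_of_nonpos h.le, zero_mul]
    · rw [sconv_toReal hf hg hfn hgn hfs t, ENNReal.ofReal_mul h, ENNReal.ofReal_toReal ht]
  have hf1 : Measurable (fun s => s * f s) := measurable_id.mul hf
  have hg1 : Measurable (fun s => s * g s) := measurable_id.mul hg
  have hf1s : ∀ x < (0:ℝ), x * f x = 0 := fun x hx => by rw [hfs x hx, mul_zero]
  have hg1s : ∀ x < (0:ℝ), x * g x = 0 := fun x hx => by rw [hgs x hx, mul_zero]
  calc mom (sconv f g) = ∫⁻ t, ENNReal.ofReal t * ∫⁻ s, ker f g t s :=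
        lintegral_congr_ae step1
    _ = ∫⁻ t, ∫⁻ s, ENNReal.ofReal t * ker f g t s := by
        refine lintegral_congr fun t => ?_
        exact (lintegral_const_mul _ (Measurable.indicator
          ((hf.comp' measurable_id).ennreal_ofReal.mul
            ((hg.comp' (measurable_const.sub measurable_id)).ennreal_ofReal))
          measurableSet_Ioc)).symm
    _ = ∫⁻ t, ∫⁻ s, (ker (fun s => s * f s) g t s + ker f (fun s => s * g s) t s) := by
        simp only [ker_add_decomp hfs]
    _ = (∫⁻ t, ∫⁻ s, ker (fun s => s * f s) g t s)
        + ∫⁻ t, ∫⁻ s, ker f (fun s => s * g s) t s := by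
        rw [← lintegral_add_left (inner_meas hf1 hg)]
        refine lintegral_congr fun t => ?_
        exact lintegral_add_left (Measurable.indicator
          ((hf1.comp' measurable_id).ennreal_ofReal.mul
            ((hg.comp' (measurable_const.sub measurable_id)).ennreal_ofReal))
          measurableSet_Ioc) _
    _ = mom f * lin g + lin f * mom g := by
        rw [lintegral_ker hf1 hg hf1s hgs, lintegral_ker hf hg1 hfs hg1s]
        rfl

lemma pow_props {lam : ℝ → ℝ} (hmeas : Measurable lam) (hnn : ∀ x, 0 ≤ lam x)
    (hsupp : ∀ x < (0:ℝ), lam x = 0) :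
    ∀ k : ℕ, Measurable (sconvPow lam k) ∧ (∀ x, 0 ≤ sconvPow lam k x)
    ∧ (∀ x < (0:ℝ), sconvPow lam k x = 0) := by
  intro k
  induction k with
  | zero => exact ⟨hmeas, hnn, hsupp⟩
  | succ k ih =>
    obtain ⟨h1, h2, h3⟩ := ih
    exact ⟨sconv_meas hmeas h1 hsupp, fun x => sconv_nonneg' hnn h2 hsupp x,
      fun x hx => sconv_supp hsupp hx⟩

lemma lin_pow {lam : ℝ → ℝ} (hmeas : Measurable lam) (hnn : ∀ x, 0 ≤ lam x)
    (hsupp : ∀ x < (0:ℝ), lam x = 0) (hL : lin lam ≠ ⊤) :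
    ∀ k : ℕ, lin (sconvPow lam k) = lin lam ^ (k+1) := by
  intro k
  induction k with
  | zero => exact (pow_one _).symm
  | succ k ih =>
    obtain ⟨h1, h2, h3⟩ := pow_props hmeas hnn hsupp k
    rw [show sconvPow lam (k+1) = sconv lam (sconvPow lam k) from rfl,
      lin_sconv hmeas h1 hnn h2 hsupp h3 hL (by rw [ih]; exact ENNReal.pow_ne_top hL),
      ih, ← pow_succ']

lemma mom_pow {lam : ℝ → ℝ} (hmeas : Measurable lam) (hnn : ∀ x, 0 ≤ lam x)
    (hsupp : ∀ x < (0:ℝ), lam x = 0) (hL : lin lam ≠ ⊤) (hM : mom lam ≠ ⊤) :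
    ∀ k : ℕ, mom (sconvPow lam k) = (k+1 : ℕ) * lin lam ^ k * mom lam := by
  intro k
  induction k with
  | zero => simp [sconvPow]
  | succ k ih =>
    obtain ⟨h1, h2, h3⟩ := pow_props hmeas hnn hsupp k
    rw [show sconvPow lam (k+1) = sconv lam (sconvPow lam k) from rfl,
      mom_sconv hmeas h1 hnn h2 hsupp h3 hL
        (by rw [lin_pow hmeas hnn hsupp hL k]; exact ENNReal.pow_ne_top hL),
      lin_pow hmeas hnn hsupp hL k, ih]
    push_cast
    ring


lemma tsum_eq_toReal {f : ℕ → ℝ} (hf : ∀ n, 0 ≤ f n) :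
    ∑' n, f n = (∑' n, ENNReal.ofReal (f n)).toReal := by
  by_cases h : Summable f
  · rw [← ENNReal.ofReal_tsum_of_nonneg hf h, ENNReal.toReal_ofReal (tsum_nonneg hf)]
  · rw [tsum_eq_zero_of_not_summable h]
    by_cases h2 : ∑' n, ENNReal.ofReal (f n) = ⊤
    · rw [h2]; simp
    · exact absurd ((ENNReal.summable_toReal h2).congr
        (fun n => ENNReal.toReal_ofReal (hf n))) h

end GT7

set_option maxHeartbeats 1000000 in
/-- With ψ^T = ∑_{k≥1} a_T^k λ^{*k} and g^T(x) = ∫_{Tx}^∞ ψ^T, one has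
∫₀^∞ |g^T(x)|² dx ≤ c/T uniformly in T ≥ 1, and in particular the L² norm of g^T
tends to zero as T → ∞. -/
theorem gT_L2_bound (lam : ℝ → ℝ)
    (hnn : ∀ x, 0 ≤ lam x) (hsupp : ∀ x < (0:ℝ), lam x = 0)
    (hmeas : Measurable lam)
    (hint : IntegrableOn lam (Set.Ioi 0))
    (hnorm : ∫ x in Set.Ioi (0:ℝ), lam x < 1)
    (hm : IntegrableOn (fun x => x * lam x) (Set.Ioi 0))
    (a : ℝ → ℝ) (ha : ∀ T, a T ∈ Set.Ioo (0:ℝ) 1)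
    (haT : Tendsto a atTop (nhds 1))
    (ψ : ℝ → ℝ → ℝ)
    (hψ : ∀ T x, ψ T x = ∑' k : ℕ, (a T) ^ (k + 1) * sconvPow lam k x)
    (g : ℝ → ℝ → ℝ)
    (hg : ∀ T x, g T x = ∫ u in Set.Ioi (T * x), ψ T u) :
    (∃ c : ℝ, 0 < c ∧ ∀ T, 1 ≤ T → (∫ x in Set.Ioi (0:ℝ), (g T x) ^ 2) ≤ c / T) ∧
    Tendsto (fun T => ∫ x in Set.Ioi (0:ℝ), (g T x) ^ 2) atTop (nhds 0) := by
  classical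
  -- whole-line integrability of lam and x * lam
  have h0ae : ∀ᵐ x : ℝ, x ≠ (0:ℝ) := by
    rw [ae_iff]
    convert Real.volume_singleton (a := (0:ℝ)) using 2
    ext x; simp
  have hIic : IntegrableOn lam (Set.Iic 0) := by
    refine (integrable_zero _ _ _).congr ?_
    rw [EventuallyEq, ae_restrict_iff' measurableSet_Iic]
    filter_upwards [h0ae] with x hx hxm
    exact (hsupp x (lt_of_le_of_ne hxm hx)).symm
  have hlam_int : Integrable lam := by
    rw [← integrableOn_univ, ← Set.Iic_union_Ioi (a := (0:ℝ))]
    exact hIic.union hint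
  have hc0 : ∫ x in Set.Iic (0:ℝ), lam x = 0 := by
    rw [← setIntegral_congr_set (Iio_ae_eq_Iic (a := (0:ℝ)))]
    calc ∫ x in Set.Iio (0:ℝ), lam x = ∫ _x in Set.Iio (0:ℝ), (0:ℝ) :=
          setIntegral_congr_fun measurableSet_Iio (fun x hx => hsupp x hx)
      _ = 0 := by simp
  have hInt_l : ∫ x, lam x = ∫ x in Set.Ioi (0:ℝ), lam x := by
    have h := integral_add_compl (measurableSet_Ioi (a := (0:ℝ))) hlam_int (μ := volume)
    rw [Set.compl_Ioi, hc0, add_zero] at h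
    exact h.symm
  set l : ℝ := ∫ x in Set.Ioi (0:ℝ), lam x with hldef
  have hl0 : 0 ≤ l := setIntegral_nonneg measurableSet_Ioi (fun x _ => hnn x)
  have hl1 : l < 1 := hnorm
  have hL : GT7.lin lam = ENNReal.ofReal l := by
    rw [GT7.lin, ← ofReal_integral_eq_lintegral_ofReal hlam_int (Filter.Eventually.of_forall hnn),
      hInt_l]
  have hLne : GT7.lin lam ≠ ⊤ := by rw [hL]; exact ENNReal.ofReal_ne_top
  -- moment of lam
  have hlamm_nn : ∀ x, 0 ≤ x * lam x := fun x => by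
    rcases lt_or_ge x 0 with h | h
    · rw [hsupp x h, mul_zero]
    · exact mul_nonneg h (hnn x)
  have hIicm : IntegrableOn (fun x => x * lam x) (Set.Iic 0) := by
    refine (integrable_zero _ _ _).congr ?_
    rw [EventuallyEq, ae_restrict_iff' measurableSet_Iic]
    filter_upwards [h0ae] with x hx hxm
    rw [hsupp x (lt_of_le_of_ne hxm hx), mul_zero]; rfl
  have hlamm_int : Integrable (fun x => x * lam x) := by
    rw [← integrableOn_univ, ← Set.Iic_union_Ioi (a := (0:ℝ))]
    exact hIicm.union hm
  have hcm : ∫ x in Set.Iic (0:ℝ), x * lam x = 0 := by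
    rw [← setIntegral_congr_set (Iio_ae_eq_Iic (a := (0:ℝ)))]
    calc ∫ x in Set.Iio (0:ℝ), x * lam x = ∫ _x in Set.Iio (0:ℝ), (0:ℝ) :=
          setIntegral_congr_fun measurableSet_Iio (fun x hx => by rw [hsupp x hx, mul_zero])
      _ = 0 := by simp
  have hInt_m : ∫ x, x * lam x = ∫ x in Set.Ioi (0:ℝ), x * lam x := by
    have h := integral_add_compl (measurableSet_Ioi (a := (0:ℝ))) hlamm_int (μ := volume)
    rw [Set.compl_Ioi, hcm, add_zero] at h
    exact h.symm
  set m1 : ℝ := ∫ x in Set.Ioi (0:ℝ), x * lam x with hm1def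
  have hm10 : 0 ≤ m1 :=
    setIntegral_nonneg measurableSet_Ioi (fun x hx => mul_nonneg (le_of_lt hx) (hnn x))
  have hM1 : GT7.mom lam = ENNReal.ofReal m1 := by
    rw [GT7.mom, ← ofReal_integral_eq_lintegral_ofReal hlamm_int
      (Filter.Eventually.of_forall hlamm_nn), hInt_m]
  have hM1ne : GT7.mom lam ≠ ⊤ := by rw [hM1]; exact ENNReal.ofReal_ne_top
  -- constants
  set M : ℝ := ∑' k : ℕ, l ^ (k+1) with hMdef
  set m2 : ℝ := ∑' k : ℕ, ((k:ℝ)+1) * l ^ k * m1 with hm2def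
  have sumM : Summable (fun k : ℕ => l ^ (k+1)) :=
    ((summable_geometric_of_lt_one hl0 hl1).mul_left l).congr (fun k => (pow_succ' l k).symm)
  have summ2 : Summable (fun k : ℕ => ((k:ℝ)+1) * l ^ k * m1) := by
    have s1 : Summable (fun k : ℕ => (k:ℝ) * l ^ k) := by
      simpa using summable_pow_mul_geometric_of_norm_lt_one 1
        (show ‖l‖ < 1 by rwa [Real.norm_of_nonneg hl0])
    have s2 := summable_geometric_of_lt_one hl0 hl1
    exact ((s1.add s2).mul_right m1).congr (fun k => by ring)
  have hM0 : 0 ≤ M := tsum_nonneg (fun k => pow_nonneg hl0 _)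
  have hm20 : 0 ≤ m2 := tsum_nonneg
    (fun k => mul_nonneg (mul_nonneg (by positivity) (pow_nonneg hl0 _)) hm10)
  set c : ℝ := M^2 + m2^2 + 1 with hcdef
  have hcpos : 0 < c := by positivity
  have key : ∀ T : ℝ, 1 ≤ T → (∫ x in Set.Ioi (0:ℝ), (g T x) ^ 2) ≤ c / T := by
    intro T hT
    have hT0 : 0 < T := lt_of_lt_of_le one_pos hT
    have ha0 : 0 < a T := (ha T).1
    have ha1 : a T < 1 := (ha T).2
    set S : ℝ → ℝ≥0∞ := fun x => ∑' k : ℕ, ENNReal.ofReal (a T ^ (k+1) * sconvPow lam k x)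
      with hSdef
    have hterm_nn : ∀ (k : ℕ) x, 0 ≤ a T ^ (k+1) * sconvPow lam k x := fun k x =>
      mul_nonneg (pow_nonneg ha0.le _) ((GT7.pow_props hmeas hnn hsupp k).2.1 x)
    have htermmeas : ∀ k : ℕ, Measurable (fun x => ENNReal.ofReal (a T ^ (k+1) * sconvPow lam k x)) :=
      fun k => (measurable_const.mul (GT7.pow_props hmeas hnn hsupp k).1).ennreal_ofReal
    have hψtoReal : ∀ x, ψ T x = (S x).toReal := fun x => by
      rw [hψ T x, GT7.tsum_eq_toReal (fun k => hterm_nn k x)]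
    have hψmeas : Measurable (ψ T) := by
      rw [show ψ T = fun x => (S x).toReal from funext hψtoReal]
      exact (Measurable.ennreal_tsum htermmeas).ennreal_toReal
    have hψnn : ∀ x, 0 ≤ ψ T x := fun x => by
      rw [hψtoReal x]; exact ENNReal.toReal_nonneg
    have hψle : ∀ x, ENNReal.ofReal (ψ T x) ≤ S x := fun x => by
      rw [hψtoReal x]; exact ENNReal.ofReal_toReal_le
    -- L¹ bound for ψ
    have hlinterm : ∀ k : ℕ, (∫⁻ x, ENNReal.ofReal (a T ^ (k+1) * sconvPow lam k x))
        ≤ ENNReal.ofReal (l ^ (k+1)) := by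
      intro k
      obtain ⟨hk1, hk2, hk3⟩ := GT7.pow_props hmeas hnn hsupp k
      calc ∫⁻ x, ENNReal.ofReal (a T ^ (k+1) * sconvPow lam k x)
          = ∫⁻ x, ENNReal.ofReal (a T ^ (k+1)) * ENNReal.ofReal (sconvPow lam k x) :=
            lintegral_congr (fun x => ENNReal.ofReal_mul (pow_nonneg ha0.le _))
        _ = ENNReal.ofReal (a T ^ (k+1)) * GT7.lin (sconvPow lam k) :=
            lintegral_const_mul _ hk1.ennreal_ofReal
        _ = ENNReal.ofReal (a T ^ (k+1)) * (ENNReal.ofReal l) ^ (k+1) := by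
            rw [GT7.lin_pow hmeas hnn hsupp hLne k, hL]
        _ = ENNReal.ofReal (a T ^ (k+1) * l ^ (k+1)) := by
            rw [← ENNReal.ofReal_pow hl0, ← ENNReal.ofReal_mul (pow_nonneg ha0.le _)]
        _ ≤ ENNReal.ofReal (l ^ (k+1)) := ENNReal.ofReal_le_ofReal
            (mul_le_of_le_one_left (pow_nonneg hl0 _) (pow_le_one₀ ha0.le ha1.le))
    have hSlint : ∫⁻ x, S x ≤ ENNReal.ofReal M := by
      rw [hSdef, lintegral_tsum (fun k => (htermmeas k).aemeasurable)]
      calc ∑' k : ℕ, ∫⁻ x, ENNReal.ofReal (a T ^ (k+1) * sconvPow lam k x)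
          ≤ ∑' k : ℕ, ENNReal.ofReal (l ^ (k+1)) := ENNReal.tsum_le_tsum hlinterm
        _ = ENNReal.ofReal M :=
            (ENNReal.ofReal_tsum_of_nonneg (fun k => pow_nonneg hl0 _) sumM).symm
    have hψlin : (∫⁻ x, ENNReal.ofReal (ψ T x)) ≤ ENNReal.ofReal M :=
      le_trans (lintegral_mono hψle) hSlint
    have hψint : Integrable (ψ T) := by
      refine ⟨hψmeas.aestronglyMeasurable, ?_⟩
      rw [hasFiniteIntegral_iff_ofReal (Filter.Eventually.of_forall hψnn)]
      exact lt_of_le_of_lt hψlin ENNReal.ofReal_lt_top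
    have hψI : ∫ x, ψ T x ≤ M := by
      rw [integral_eq_lintegral_of_nonneg_ae (Filter.Eventually.of_forall hψnn)
        hψmeas.aestronglyMeasurable]
      calc (∫⁻ x, ENNReal.ofReal (ψ T x)).toReal ≤ (ENNReal.ofReal M).toReal :=
            ENNReal.toReal_mono ENNReal.ofReal_ne_top hψlin
        _ = M := ENNReal.toReal_ofReal hM0
    -- moment bound for ψ
    have hmomterm : ∀ k : ℕ,
        (∫⁻ x in Set.Ioi (0:ℝ), ENNReal.ofReal x * ENNReal.ofReal (a T ^ (k+1) * sconvPow lam k x))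
        ≤ ENNReal.ofReal (((k:ℝ)+1) * l ^ k * m1) := by
      intro k
      obtain ⟨hk1, hk2, hk3⟩ := GT7.pow_props hmeas hnn hsupp k
      have hkcast : ((k+1:ℕ) : ℝ≥0∞) = ENNReal.ofReal ((k:ℝ)+1) := by
        rw [← ENNReal.ofReal_natCast]; norm_num
      have hstep : ∀ᵐ x ∂(volume.restrict (Set.Ioi (0:ℝ))),
          ENNReal.ofReal x * ENNReal.ofReal (a T ^ (k+1) * sconvPow lam k x)
          = ENNReal.ofReal (a T ^ (k+1)) * ENNReal.ofReal (x * sconvPow lam k x) := by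
        filter_upwards [ae_restrict_mem measurableSet_Ioi] with x hx
        rw [ENNReal.ofReal_mul (pow_nonneg ha0.le _), ENNReal.ofReal_mul (le_of_lt hx)]
        ring
      calc ∫⁻ x in Set.Ioi (0:ℝ), ENNReal.ofReal x * ENNReal.ofReal (a T ^ (k+1) * sconvPow lam k x)
          = ∫⁻ x in Set.Ioi (0:ℝ), ENNReal.ofReal (a T ^ (k+1)) * ENNReal.ofReal (x * sconvPow lam k x) :=
            lintegral_congr_ae hstep
        _ = ENNReal.ofReal (a T ^ (k+1)) * ∫⁻ x in Set.Ioi (0:ℝ), ENNReal.ofReal (x * sconvPow lam k x) :=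
            lintegral_const_mul _ ((measurable_id.mul hk1).ennreal_ofReal)
        _ ≤ ENNReal.ofReal (a T ^ (k+1)) * GT7.mom (sconvPow lam k) :=
            mul_le_mul_right (setLIntegral_le_lintegral _ _) _
        _ = ENNReal.ofReal (a T ^ (k+1)) *
            (ENNReal.ofReal ((k:ℝ)+1) * (ENNReal.ofReal l) ^ k * ENNReal.ofReal m1) := by
            rw [GT7.mom_pow hmeas hnn hsupp hLne hM1ne k, hL, hM1, hkcast]
        _ = ENNReal.ofReal (a T ^ (k+1) * (((k:ℝ)+1) * l ^ k * m1)) := by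
            rw [← ENNReal.ofReal_pow hl0, ← ENNReal.ofReal_mul (by positivity),
              ← ENNReal.ofReal_mul (by positivity), ← ENNReal.ofReal_mul (pow_nonneg ha0.le _)]
        _ ≤ ENNReal.ofReal (((k:ℝ)+1) * l ^ k * m1) := ENNReal.ofReal_le_ofReal
            (mul_le_of_le_one_left (by positivity) (pow_le_one₀ ha0.le ha1.le))
    have hmomS : (∫⁻ x in Set.Ioi (0:ℝ), ENNReal.ofReal x * S x) ≤ ENNReal.ofReal m2 := by
      calc ∫⁻ x in Set.Ioi (0:ℝ), ENNReal.ofReal x * S x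
          = ∫⁻ x in Set.Ioi (0:ℝ), ∑' k : ℕ,
              ENNReal.ofReal x * ENNReal.ofReal (a T ^ (k+1) * sconvPow lam k x) := by
            refine lintegral_congr fun x => ?_
            rw [hSdef]
            exact ENNReal.tsum_mul_left.symm
        _ = ∑' k : ℕ, ∫⁻ x in Set.Ioi (0:ℝ),
              ENNReal.ofReal x * ENNReal.ofReal (a T ^ (k+1) * sconvPow lam k x) :=
            lintegral_tsum (fun k =>
              (ENNReal.measurable_ofReal.mul (htermmeas k)).aemeasurable)
        _ ≤ ∑' k : ℕ, ENNReal.ofReal (((k:ℝ)+1) * l ^ k * m1) := ENNReal.tsum_le_tsum hmomterm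
        _ = ENNReal.ofReal m2 := (ENNReal.ofReal_tsum_of_nonneg
            (fun k => mul_nonneg (mul_nonneg (by positivity) (pow_nonneg hl0 _)) hm10) summ2).symm
    have hmomlint : (∫⁻ x in Set.Ioi (0:ℝ), ENNReal.ofReal (x * ψ T x)) ≤ ENNReal.ofReal m2 := by
      refine le_trans (lintegral_mono_ae ?_) hmomS
      filter_upwards [ae_restrict_mem measurableSet_Ioi] with x hx
      rw [ENNReal.ofReal_mul (le_of_lt hx)]
      exact mul_le_mul_right (hψle x) _
    have hxψnn_ae : 0 ≤ᵐ[volume.restrict (Set.Ioi (0:ℝ))] (fun u => u * ψ T u) := by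
      rw [EventuallyLE, ae_restrict_iff' measurableSet_Ioi]
      exact Filter.Eventually.of_forall (fun x hx => mul_nonneg (le_of_lt hx) (hψnn x))
    have hmomint : IntegrableOn (fun u => u * ψ T u) (Set.Ioi 0) := by
      refine ⟨(measurable_id.mul hψmeas).aestronglyMeasurable, ?_⟩
      rw [hasFiniteIntegral_iff_ofReal hxψnn_ae]
      exact lt_of_le_of_lt hmomlint ENNReal.ofReal_lt_top
    have hmomψ : ∫ x in Set.Ioi (0:ℝ), x * ψ T x ≤ m2 := by
      rw [integral_eq_lintegral_of_nonneg_ae hxψnn_ae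
        (measurable_id.mul hψmeas).aestronglyMeasurable]
      exact le_trans (ENNReal.toReal_mono ENNReal.ofReal_ne_top hmomlint)
        (le_of_eq (ENNReal.toReal_ofReal hm20))
    -- g facts
    have hgnn : ∀ x, 0 ≤ g T x := fun x => by
      rw [hg]; exact setIntegral_nonneg measurableSet_Ioi (fun u _ => hψnn u)
    have hgleM : ∀ x, g T x ≤ M := fun x => by
      rw [hg]
      exact le_trans (setIntegral_le_integral hψint (Filter.Eventually.of_forall hψnn)) hψI
    have hgmar : ∀ x, 0 < x → g T x ≤ m2 / (T * x) := by
      intro x hx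
      have hb : 0 < T * x := mul_pos hT0 hx
      rw [hg]
      calc ∫ u in Set.Ioi (T*x), ψ T u
          ≤ ∫ u in Set.Ioi (T*x), (1/(T*x)) * (u * ψ T u) := by
            refine setIntegral_mono_on hψint.integrableOn
              ((hmomint.mono_set (Set.Ioi_subset_Ioi hb.le)).const_mul _) measurableSet_Ioi ?_
            intro u hu
            rw [Set.mem_Ioi] at hu
            have h1 : (1:ℝ) ≤ u / (T*x) := (one_le_div hb).2 hu.le
            calc ψ T u = 1 * ψ T u := (one_mul _).symm
              _ ≤ (u/(T*x)) * ψ T u := mul_le_mul_of_nonneg_right h1 (hψnn u)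
              _ = 1/(T*x) * (u * ψ T u) := by ring
        _ = (1/(T*x)) * ∫ u in Set.Ioi (T*x), u * ψ T u := integral_const_mul _ _
        _ ≤ (1/(T*x)) * ∫ u in Set.Ioi (0:ℝ), u * ψ T u := by
            refine mul_le_mul_of_nonneg_left ?_ (by positivity)
            exact setIntegral_mono_set hmomint hxψnn_ae
              (HasSubset.Subset.eventuallyLE (Set.Ioi_subset_Ioi hb.le))
        _ ≤ (1/(T*x)) * m2 := mul_le_mul_of_nonneg_left hmomψ (by positivity)
        _ = m2 / (T*x) := by ring
    have hganti : Antitone (g T) := by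
      intro x y hxy
      rw [hg T x, hg T y]
      exact setIntegral_mono_set hψint.integrableOn (Filter.Eventually.of_forall (fun u => hψnn u))
        (HasSubset.Subset.eventuallyLE (Set.Ioi_subset_Ioi (by nlinarith)))
    have hgmeas : Measurable (g T) := hganti.measurable
    -- domination
    have hT1 : 0 < 1/T := by positivity
    set D : ℝ → ℝ := fun x => if x ≤ 1/T then M^2 else (m2/T)^2 * x ^ (-2:ℝ) with hDdef
    have hDIoc : IntegrableOn D (Set.Ioc 0 (1/T)) := by
      refine (integrableOn_const (C := M^2) measure_Ioc_lt_top.ne).congr_fun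
        ?_ measurableSet_Ioc
      intro x hx
      exact (if_pos hx.2).symm
    have hDIoi : IntegrableOn D (Set.Ioi (1/T)) := by
      have h1 : IntegrableOn (fun x : ℝ => x ^ (-2:ℝ)) (Set.Ioi (1/T)) :=
        integrableOn_Ioi_rpow_of_lt (a := (-2:ℝ)) (by norm_num) hT1
      have h2 : IntegrableOn (fun x : ℝ => (m2/T)^2 * x ^ (-2:ℝ)) (Set.Ioi (1/T)) :=
        h1.const_mul ((m2/T)^2)
      refine h2.congr_fun ?_ measurableSet_Ioi
      intro x hx
      rw [Set.mem_Ioi] at hx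
      exact (if_neg (not_le.2 hx)).symm
    have hsplit : Set.Ioi (0:ℝ) = Set.Ioc 0 (1/T) ∪ Set.Ioi (1/T) :=
      (Set.Ioc_union_Ioi_eq_Ioi hT1.le).symm
    have hDint : IntegrableOn D (Set.Ioi 0) := by rw [hsplit]; exact hDIoc.union hDIoi
    have hgD : ∀ x ∈ Set.Ioi (0:ℝ), (g T x)^2 ≤ D x := by
      intro x hx
      rw [Set.mem_Ioi] at hx
      by_cases hcx : x ≤ 1/T
      · rw [hDdef]
        simp only [if_pos hcx]
        exact pow_le_pow_left₀ (hgnn x) (hgleM x) 2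
      · rw [hDdef]
        simp only [if_neg hcx]
        have hb : 0 < T * x := mul_pos hT0 hx
        calc (g T x)^2 ≤ (m2/(T*x))^2 := pow_le_pow_left₀ (hgnn x) (hgmar x hx) 2
          _ = (m2/T)^2 * x ^ (-2:ℝ) := by
              rw [show x ^ (-2:ℝ) = (x^2)⁻¹ by
                rw [Real.rpow_neg hx.le, show ((2:ℝ)) = ((2:ℕ):ℝ) by norm_num,
                  Real.rpow_natCast]]
              rw [div_pow, div_pow, mul_pow, division_def, division_def, mul_inv]
              ring
    have hg2int : IntegrableOn (fun x => (g T x)^2) (Set.Ioi 0) := by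
      refine Integrable.mono hDint ((hgmeas.pow_const 2).aestronglyMeasurable) ?_
      refine (ae_restrict_iff' measurableSet_Ioi).2 (Filter.Eventually.of_forall fun x hx => ?_)
      have h1 := hgD x hx
      have hDnn : 0 ≤ D x := le_trans (sq_nonneg _) h1
      rw [Real.norm_of_nonneg (sq_nonneg _), Real.norm_of_nonneg hDnn]
      exact h1
    have hbound : ∫ x in Set.Ioi (0:ℝ), (g T x)^2 ≤ ∫ x in Set.Ioi (0:ℝ), D x :=
      setIntegral_mono_on hg2int hDint measurableSet_Ioi hgD
    have hDval : ∫ x in Set.Ioi (0:ℝ), D x = M^2 * (1/T) + (m2/T)^2 * T := by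
      rw [hsplit, setIntegral_union (Set.Ioc_disjoint_Ioi le_rfl) measurableSet_Ioi hDIoc hDIoi]
      congr 1
      · calc ∫ x in Set.Ioc (0:ℝ) (1/T), D x = ∫ _x in Set.Ioc (0:ℝ) (1/T), M^2 :=
              setIntegral_congr_fun measurableSet_Ioc (fun x hx => if_pos hx.2)
          _ = M^2 * (1/T) := by
              rw [setIntegral_const, Real.volume_real_Ioc, smul_eq_mul, sub_zero,
                max_eq_left hT1.le]
              ring
      · calc ∫ x in Set.Ioi (1/T), D x
            = ∫ x in Set.Ioi (1/T), (m2/T)^2 * x ^ (-2:ℝ) :=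
              setIntegral_congr_fun measurableSet_Ioi
                (fun x hx => if_neg (not_le.2 hx))
          _ = (m2/T)^2 * ∫ x in Set.Ioi (1/T), x ^ (-2:ℝ) := integral_const_mul _ _
          _ = (m2/T)^2 * T := by
              rw [integral_Ioi_rpow_of_lt (by norm_num) hT1]
              norm_num
              rw [Real.rpow_neg_one]
              field_simp
              simp
    calc ∫ x in Set.Ioi (0:ℝ), (g T x)^2 ≤ M^2 * (1/T) + (m2/T)^2 * T :=
          hbound.trans (le_of_eq hDval)
      _ = (M^2 + m2^2)/T := by field_simp
      _ ≤ c/T := div_le_div_of_nonneg_right (by rw [hcdef]; linarith) hT0.le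
  refine ⟨⟨c, hcpos, key⟩, ?_⟩
  have h1 : Tendsto (fun T : ℝ => c / T) atTop (nhds 0) := by
    simpa [div_eq_mul_inv] using tendsto_inv_atTop_zero.const_mul c
  refine tendsto_of_tendsto_of_tendsto_of_le_of_le' tendsto_const_nhds h1 ?_ ?_
  · exact Filter.Eventually.of_forall
      (fun T => setIntegral_nonneg measurableSet_Ioi (fun x _ => sq_nonneg _))
  · filter_upwards [eventually_ge_atTop (1:ℝ)] with T hT using key T hT
end

section
/- Let λ: ℝ₊ → ℝ₊ be integrable with ‖λ‖₁ = 1. Suppose there exist α ∈ (1/2,1) and C > 0 with α x^α ∫_x^∞ λ(s) ds → C as x → ∞. Then the Laplace transform satisfies λ̂(z) := ∫₀^∞ λ(x) e^{−zx} dx = 1 − (C/α) Γ(1−α) z^α + o(z^α) as z → 0⁺. -/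
open MeasureTheory Filter Asymptotics

open Set Real in
theorem aux_int (lam : ℝ → ℝ) (hsupp : ∀ x < (0:ℝ), lam x = 0)
    (hint : IntegrableOn lam (Set.Ioi 0)) (a : ℝ) : IntegrableOn lam (Set.Ioi a) := by
  rcases le_or_gt 0 a with h | h
  · exact hint.mono_set (Set.Ioi_subset_Ioi h)
  · have h1 : IntegrableOn lam (Set.Ioo a 0) := by
      rw [integrableOn_congr_fun (g := fun _ => (0:ℝ)) (fun x hx => hsupp x hx.2) measurableSet_Ioo]
      exact integrableOn_zero
    have h2 : IntegrableOn lam {(0:ℝ)} := by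
      rw [integrableOn_singleton_iff]
      exact Or.inr (by simp)
    refine ((h1.union h2).union hint).mono_set ?_
    intro x hx
    rcases lt_trichotomy x 0 with h' | h' | h'
    · exact Or.inl (Or.inl ⟨hx, h'⟩)
    · exact Or.inl (Or.inr (by simp [h']))
    · exact Or.inr h'

-- key identity: for z > 0,
-- ∫_{Ioi 0} lam x e^{-zx} dx = 1 - ∫_{Ioi 0} T(u/z) e^{-u} du
theorem aux_identity (lam : ℝ → ℝ)
    (hnn : ∀ x, 0 ≤ lam x) (hsupp : ∀ x < (0:ℝ), lam x = 0)
    (hmeas : Measurable lam)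
    (hint : IntegrableOn lam (Set.Ioi 0))
    (hnorm : ∫ x in Set.Ioi (0:ℝ), lam x = 1)
    {z : ℝ} (hz : 0 < z) :
    ∫ x in Set.Ioi (0:ℝ), lam x * Real.exp (-(z * x)) =
      1 - ∫ u in Set.Ioi (0:ℝ), (∫ s in Set.Ioi (u / z), lam s) * Real.exp (-u) := by
  set T : ℝ → ℝ := fun x => ∫ s in Set.Ioi x, lam s with hTdef
  -- integrability of lam * exp
  have hexpint : IntegrableOn (fun x : ℝ => Real.exp (-(z * x))) (Set.Ioi 0) := by
    have := exp_neg_integrableOn_Ioi 0 hz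
    simpa [neg_mul] using this
  have hmeas2 : AEStronglyMeasurable (fun x => lam x * Real.exp (-(z * x)))
      (volume.restrict (Set.Ioi (0:ℝ))) :=
    (hmeas.mul (by fun_prop)).aestronglyMeasurable
  have hintlam : IntegrableOn (fun x => lam x * Real.exp (-(z * x))) (Set.Ioi 0) := by
    refine Integrable.mono hint hmeas2 ?_
    filter_upwards [ae_restrict_mem measurableSet_Ioi] with x hx
    have h1 : Real.exp (-(z * x)) ≤ 1 := Real.exp_le_one_iff.mpr (by nlinarith [hx.out])
    have h2 : (0:ℝ) ≤ Real.exp (-(z * x)) := (Real.exp_pos _).le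
    simp only [Real.norm_eq_abs, abs_mul, abs_of_nonneg (hnn x), abs_of_nonneg h2]
    nlinarith [hnn x]
  -- step 1 : 1 - lhs = ∫ lam s (1 - e^{-zs})
  have step1 : (1:ℝ) - ∫ x in Set.Ioi (0:ℝ), lam x * Real.exp (-(z * x)) =
      ∫ s in Set.Ioi (0:ℝ), lam s * (1 - Real.exp (-(z * s))) := by
    nth_rewrite 1 [← hnorm]
    rw [← integral_sub hint hintlam]
    exact integral_congr_ae (Filter.Eventually.of_forall fun s => by ring)
  -- step 2: 1 - e^{-zs} = ∫_{Ioi 0} indicator (Iio s) (z e^{-zx}) dx for s > 0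
  have step2 : ∀ s : ℝ, 0 < s →
      (1:ℝ) - Real.exp (-(z * s)) =
        ∫ x in Set.Ioi (0:ℝ), Set.indicator (Set.Iio s) (fun x => z * Real.exp (-(z * x))) x := by
    intro s hs
    rw [setIntegral_indicator measurableSet_Iio, Set.Ioi_inter_Iio,
      ← MeasureTheory.integral_Ioc_eq_integral_Ioo,
      ← intervalIntegral.integral_of_le hs.le]
    have : ∀ x ∈ Set.uIcc (0:ℝ) s, HasDerivAt (fun x => -Real.exp (-(z * x)))
        (z * Real.exp (-(z * x))) x := by
      intro x _
      have h1 : HasDerivAt (fun x : ℝ => -(z * x)) (-z) x := by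
        simpa using ((hasDerivAt_id x).const_mul z).fun_neg
      have := (Real.hasDerivAt_exp (-(z * x))).comp x h1
      refine this.neg.congr_deriv ?_
      ring
    rw [intervalIntegral.integral_eq_sub_of_hasDerivAt this]
    · simp only [mul_zero, neg_zero, Real.exp_zero]; ring
    · apply ContinuousOn.intervalIntegrable
      fun_prop
  -- Fubini
  set G : ℝ × ℝ → ℝ := fun p => lam p.1 * (z * Real.exp (-(z * p.2))) with hGdef
  set S : Set (ℝ × ℝ) := {p : ℝ × ℝ | p.2 < p.1} with hSdef
  have hSmeas : MeasurableSet S := measurableSet_lt measurable_snd measurable_fst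
  have hexpz : Integrable (fun x : ℝ => z * Real.exp (-(z * x)))
      (volume.restrict (Set.Ioi (0:ℝ))) := hexpint.const_mul z
  have hGint : Integrable G
      ((volume.restrict (Set.Ioi (0:ℝ))).prod (volume.restrict (Set.Ioi (0:ℝ)))) :=
    hint.mul_prod hexpz
  have hFint : Integrable (S.indicator G)
      ((volume.restrict (Set.Ioi (0:ℝ))).prod (volume.restrict (Set.Ioi (0:ℝ)))) :=
    hGint.indicator hSmeas
  have swap : (∫ s in Set.Ioi (0:ℝ), ∫ x in Set.Ioi (0:ℝ), S.indicator G (s, x))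
      = ∫ x in Set.Ioi (0:ℝ), ∫ s in Set.Ioi (0:ℝ), S.indicator G (s, x) := by
    apply integral_integral_swap (f := fun s x => S.indicator G (s, x))
    exact hFint
  have lhs_eq : (∫ s in Set.Ioi (0:ℝ), ∫ x in Set.Ioi (0:ℝ), S.indicator G (s, x))
      = ∫ s in Set.Ioi (0:ℝ), lam s * (1 - Real.exp (-(z * s))) := by
    refine setIntegral_congr_fun measurableSet_Ioi (fun s hs => ?_)
    have hpt : ∀ x : ℝ, S.indicator G (s, x)
        = lam s * Set.indicator (Set.Iio s) (fun x => z * Real.exp (-(z * x))) x := by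
      intro x
      by_cases h : x < s
      · rw [Set.indicator_of_mem (by exact h : (s,x) ∈ S),
          Set.indicator_of_mem (by exact h)]
      · rw [Set.indicator_of_notMem (by exact h : ¬ (s,x) ∈ S),
          Set.indicator_of_notMem (by exact h), mul_zero]
    simp_rw [hpt]
    rw [integral_const_mul, ← step2 s hs]
  have rhs_eq : (∫ x in Set.Ioi (0:ℝ), ∫ s in Set.Ioi (0:ℝ), S.indicator G (s, x))
      = ∫ x in Set.Ioi (0:ℝ), z * Real.exp (-(z * x)) * T x := by
    refine setIntegral_congr_fun measurableSet_Ioi (fun x hx => ?_)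
    have hpt : ∀ s : ℝ, S.indicator G (s, x)
        = Set.indicator (Set.Ioi x) lam s * (z * Real.exp (-(z * x))) := by
      intro s
      by_cases h : x < s
      · rw [Set.indicator_of_mem (by exact h : (s,x) ∈ S),
          Set.indicator_of_mem (by exact h : s ∈ Set.Ioi x)]
      · rw [Set.indicator_of_notMem (by exact h : ¬ (s,x) ∈ S),
          Set.indicator_of_notMem (by exact h : ¬ s ∈ Set.Ioi x), zero_mul]
    simp_rw [hpt]
    rw [integral_mul_const, setIntegral_indicator measurableSet_Ioi,
      Set.inter_eq_self_of_subset_right (Set.Ioi_subset_Ioi (le_of_lt hx.out))]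
    ring
  have subst : (∫ x in Set.Ioi (0:ℝ), z * Real.exp (-(z * x)) * T x)
      = ∫ u in Set.Ioi (0:ℝ), T (u / z) * Real.exp (-u) := by
    have hg : (∫ x in Set.Ioi (0:ℝ), T x * Real.exp (-(z * x)))
        = ∫ x in Set.Ioi (0:ℝ), (fun u => T (u / z) * Real.exp (-u)) (z * x) := by
      refine setIntegral_congr_fun measurableSet_Ioi (fun x _ => ?_)
      simp only []
      rw [mul_div_cancel_left₀ _ hz.ne']
    have := integral_comp_mul_left_Ioi (fun u => T (u / z) * Real.exp (-u)) 0 hz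
    rw [mul_zero] at this
    have h2 : (∫ x in Set.Ioi (0:ℝ), z * Real.exp (-(z * x)) * T x)
        = z * ∫ x in Set.Ioi (0:ℝ), T x * Real.exp (-(z * x)) := by
      rw [← integral_const_mul]
      exact setIntegral_congr_fun measurableSet_Ioi (fun x _ => by ring)
    rw [h2, hg, this, smul_eq_mul, ← mul_assoc, mul_inv_cancel₀ hz.ne', one_mul]
  have final := step1
  rw [lhs_eq.symm.trans (swap.trans (rhs_eq.trans subst))] at final
  linarith

/-- heavy tail ⇒ Laplace transform expansion
λ̂(z) = 1 − (C/α) Γ(1−α) z^α + o(z^α) as z → 0⁺. -/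
theorem laplace_heavy_tail (lam : ℝ → ℝ)
    (hnn : ∀ x, 0 ≤ lam x) (hsupp : ∀ x < (0:ℝ), lam x = 0)
    (hmeas : Measurable lam)
    (hint : IntegrableOn lam (Set.Ioi 0))
    (hnorm : ∫ x in Set.Ioi (0:ℝ), lam x = 1)
    (α C : ℝ) (hα : α ∈ Set.Ioo (1/2 : ℝ) 1) (hC : 0 < C)
    (htail : Tendsto (fun x : ℝ => α * x ^ α * ∫ s in Set.Ioi x, lam s)
      atTop (nhds C)) :
    (fun z : ℝ => (∫ x in Set.Ioi (0:ℝ), lam x * Real.exp (-(z * x))) -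
        (1 - C / α * Real.Gamma (1 - α) * z ^ α))
      =o[nhdsWithin 0 (Set.Ioi 0)] fun z : ℝ => z ^ α := by
  obtain ⟨hα1, hα2⟩ := hα
  have hα0 : (0:ℝ) < α := lt_trans one_half_pos hα1
  set T : ℝ → ℝ := fun x => ∫ s in Set.Ioi x, lam s with hTdef
  have hTanti : Antitone T := by
    intro a b hab
    exact setIntegral_mono_set (aux_int lam hsupp hint a)
      (Filter.Eventually.of_forall fun x => hnn x) ((Set.Ioi_subset_Ioi hab).eventuallyLE)
  have hTmeas : Measurable T := hTanti.measurable
  have hTnn : ∀ x, 0 ≤ T x := fun x => setIntegral_nonneg measurableSet_Ioi fun s _ => hnn s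
  have hT1 : ∀ x : ℝ, 0 ≤ x → T x ≤ 1 := fun x hx => hnorm ▸ hTanti hx
  have hTC : Tendsto (fun x => x ^ α * T x) atTop (nhds (C / α)) := by
    have h := htail.const_mul (α⁻¹)
    have heq : (fun x => α⁻¹ * (α * x ^ α * T x)) = fun x => x ^ α * T x := by
      funext x; field_simp
    rw [heq] at h
    rwa [show α⁻¹ * C = C / α by rw [div_eq_inv_mul]] at h
  obtain ⟨N, hN⟩ : ∃ N : ℝ, ∀ x ≥ N, x ^ α * T x ≤ C / α + 1 :=
    Filter.eventually_atTop.mp (hTC.eventually (eventually_le_nhds (lt_add_one (C/α))))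
  set N' : ℝ := max N 1 with hN'def
  have hN'pos : (0:ℝ) < N' := lt_of_lt_of_le one_pos (le_max_right N 1)
  set M : ℝ := max (N' ^ α) (C / α + 1) with hMdef
  have hMbound : ∀ x : ℝ, 0 < x → x ^ α * T x ≤ M := by
    intro x hx
    rcases le_or_gt x N' with h | h
    · refine le_trans ?_ (le_max_left _ _)
      calc x ^ α * T x ≤ N' ^ α * 1 :=
            mul_le_mul (Real.rpow_le_rpow hx.le h hα0.le) (hT1 x hx.le) (hTnn x)
              (Real.rpow_nonneg hN'pos.le α)
        _ = N' ^ α := mul_one _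
    · exact le_trans (hN x (le_trans (le_max_left N 1) h.le)) (le_max_right _ _)
  have hM0 : 0 ≤ M := le_trans (Real.rpow_nonneg hN'pos.le α) (le_max_left _ _)
  have hαlt : (0:ℝ) < 1 - α := by linarith
  have hGammaInt : IntegrableOn (fun u : ℝ => Real.exp (-u) * u ^ (-α)) (Set.Ioi 0) := by
    have h := Real.GammaIntegral_convergent hαlt
    simpa [show (1:ℝ) - α - 1 = -α by ring] using h
  set J : ℝ → ℝ := fun z => ∫ u in Set.Ioi (0:ℝ),
      ((u / z) ^ α * T (u / z)) * (Real.exp (-u) * u ^ (-α)) with hJdef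
  set K : ℝ := C / α * Real.Gamma (1 - α) with hKdef
  have hJtendsto : Tendsto J (nhdsWithin 0 (Set.Ioi 0)) (nhds K) := by
    have hlim : K = ∫ u in Set.Ioi (0:ℝ), C / α * (Real.exp (-u) * u ^ (-α)) := by
      rw [integral_const_mul, hKdef, Real.Gamma_eq_integral hαlt]
      congr 1
      exact setIntegral_congr_fun measurableSet_Ioi fun u _ => by
        rw [show (1:ℝ) - α - 1 = -α by ring]
    rw [hlim]
    refine tendsto_integral_filter_of_dominated_convergence
      (fun u => M * (Real.exp (-u) * u ^ (-α))) ?_ ?_ (hGammaInt.const_mul M) ?_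
    · filter_upwards [self_mem_nhdsWithin] with z hz
      have hmble : Measurable fun u : ℝ =>
          ((u / z) ^ α * T (u / z)) * (Real.exp (-u) * (u ^ α)⁻¹) := by
        have h1 : Measurable fun u : ℝ => (u / z) ^ α :=
          (Real.continuous_rpow_const hα0.le).measurable.comp (measurable_id.div_const z)
        have h2 : Measurable fun u : ℝ => T (u / z) := hTmeas.comp (measurable_id.div_const z)
        have h3 : Measurable fun u : ℝ => (u ^ α)⁻¹ :=
          (Real.continuous_rpow_const hα0.le).measurable.inv
        exact (h1.mul h2).mul ((measurable_id.neg.exp).mul h3)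
      refine hmble.aestronglyMeasurable.congr ?_
      filter_upwards [ae_restrict_mem measurableSet_Ioi] with u hu
      rw [Real.rpow_neg (le_of_lt hu)]
    · filter_upwards [self_mem_nhdsWithin] with z hz
      filter_upwards [ae_restrict_mem measurableSet_Ioi] with u hu
      have h1 : 0 ≤ (u / z) ^ α * T (u / z) :=
        mul_nonneg (Real.rpow_nonneg (div_nonneg (le_of_lt hu) hz.out.le) α) (hTnn _)
      have h2 : 0 ≤ Real.exp (-u) * u ^ (-α) :=
        mul_nonneg (Real.exp_pos _).le (Real.rpow_nonneg (le_of_lt hu) _)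
      rw [Real.norm_eq_abs, abs_of_nonneg (mul_nonneg h1 h2)]
      exact mul_le_mul_of_nonneg_right (hMbound (u / z) (div_pos hu hz.out)) h2
    · filter_upwards [ae_restrict_mem measurableSet_Ioi] with u hu
      have h1 : Tendsto (fun z : ℝ => u / z) (nhdsWithin 0 (Set.Ioi 0)) atTop := by
        simp_rw [div_eq_mul_inv]
        exact tendsto_inv_nhdsGT_zero.const_mul_atTop hu
      exact ((hTC.comp h1).mul_const _)
  have key : ∀ z : ℝ, 0 < z →
      (∫ x in Set.Ioi (0:ℝ), lam x * Real.exp (-(z * x))) = 1 - z ^ α * J z := by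
    intro z hz
    rw [aux_identity lam hnn hsupp hmeas hint hnorm hz]
    congr 1
    rw [hJdef, ← integral_const_mul]
    refine setIntegral_congr_fun measurableSet_Ioi fun u hu => ?_
    have hu0 : (0:ℝ) < u := hu
    have hzα : (0:ℝ) < z ^ α := Real.rpow_pos_of_pos hz α
    have huα : (0:ℝ) < u ^ α := Real.rpow_pos_of_pos hu0 α
    rw [Real.div_rpow hu0.le hz.le, Real.rpow_neg hu0.le]
    field_simp
    ring
  refine (isLittleO_iff_tendsto' ?_).mpr ?_
  · filter_upwards [self_mem_nhdsWithin] with z hz h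
    exact absurd h (Real.rpow_pos_of_pos hz α).ne'
  · have heq : ∀ᶠ z in nhdsWithin 0 (Set.Ioi 0),
        K - J z = ((∫ x in Set.Ioi (0:ℝ), lam x * Real.exp (-(z * x))) -
          (1 - K * z ^ α)) / z ^ α := by
      filter_upwards [self_mem_nhdsWithin] with z hz
      rw [key z hz.out]
      have hzα : z ^ α ≠ 0 := (Real.rpow_pos_of_pos hz.out α).ne'
      field_simp
      ring
    have h0 : Tendsto (fun z => K - J z) (nhdsWithin 0 (Set.Ioi 0)) (nhds 0) := by
      have := (tendsto_const_nhds (x := K) (f := nhdsWithin (0:ℝ) (Set.Ioi 0))).sub hJtendsto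
      simpa using this
    exact Tendsto.congr' heq h0
end

section
/- Let α ∈ (1/2,1), λ* > 0, C > 0, and set λ = αλ*/(C Γ(1−α)). Let λ₁: ℝ₊ → ℝ₊ be integrable with ‖λ₁‖₁ = 1 satisfying the heavy-tail condition αx^α ∫_x^∞ λ₁ → C. Let a_T ∈ (0,1) with T^α(1−a_T) → λ*, and define ρ₁^T(x) = T(1−a_T) ∑_{k≥1} a_T^k λ₁^{*k}(Tx). Then for every z > 0 the Laplace transform ρ̂₁^T(z) = (1−a_T) a_T λ̂₁(z/T)/(1 − a_T λ̂₁(z/T)) converges as T → ∞ to λ/(λ + z^α), the Laplace transform of the Mittag-Leffler density f^{α,λ}. -/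
open MeasureTheory Filter

open Set
open scoped Convolution

lemma sconv_eq_conv {f g : ℝ → ℝ} (hfs : ∀ x < (0:ℝ), f x = 0) (hgs : ∀ x < (0:ℝ), g x = 0)
    (t : ℝ) : sconv f g t = ∫ u, f u * g (t - u) := by
  rcases lt_trichotomy t 0 with ht | ht | ht
  · have h1 : sconv f g t = 0 := by
      rw [sconv, intervalIntegral.integral_congr (g := fun _ => (0:ℝ)) ?_,
        intervalIntegral.integral_zero]
      intro u hu
      rw [Set.uIcc_of_ge ht.le] at hu
      rcases lt_or_eq_of_le hu.2 with h | h
      · simp [hfs u h]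
      · simp [h, hgs t ht]
    have h2 : (∫ u, f u * g (t - u)) = 0 := by
      rw [show (fun u => f u * g (t - u)) = fun _ => (0:ℝ) from ?_, integral_zero]
      ext u
      rcases lt_or_ge u 0 with h | h
      · simp [hfs u h]
      · simp [hgs (t - u) (by linarith)]
    rw [h1, h2]
  · subst ht
    have h2 : (∫ u, f u * g (0 - u)) = 0 := by
      refine integral_eq_zero_of_ae ?_
      filter_upwards [compl_mem_ae_iff.mpr (Real.volume_singleton (a := 0))] with u hu
      simp only [Set.mem_compl_iff, Set.mem_singleton_iff] at hu
      rcases lt_or_ge u 0 with h | h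
      · simp [hfs u h]
      · rcases h.lt_or_eq with h | h
        · exact (mul_eq_zero_of_right _ (hgs (0 - u) (by linarith)) : f u * g (0 - u) = 0)
        · exact absurd h.symm hu
    have h2' : (∫ s, f s * g (-s)) = 0 := by simpa using h2
    simp [sconv, h2']
  · have key : (fun u => f u * g (t - u)) =ᵐ[volume] (Set.Ioc 0 t).indicator
        (fun u => f u * g (t - u)) := by
      filter_upwards [compl_mem_ae_iff.mpr (Real.volume_singleton (a := 0))] with u hu
      simp only [Set.mem_compl_iff, Set.mem_singleton_iff] at hu
      by_cases h : u ∈ Set.Ioc 0 t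
      · rw [Set.indicator_of_mem h]
      · rw [Set.indicator_of_notMem h]
        simp only [Set.mem_Ioc, not_and_or, not_lt, not_le] at h
        rcases h with h | h
        · rcases h.lt_or_eq with h | h
          · simp [hfs u h]
          · exact absurd h hu
        · simp [hgs (t - u) (by linarith)]
    rw [sconv, intervalIntegral.integral_of_le ht.le, ← integral_indicator measurableSet_Ioc,
      integral_congr_ae key.symm]

lemma integrable_of_supp {f : ℝ → ℝ} (hfs : ∀ x < (0:ℝ), f x = 0) (hm : AEStronglyMeasurable f volume)
    (hi : IntegrableOn f (Set.Ioi 0)) : Integrable f := by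
  rw [← integrableOn_univ, ← Set.Iic_union_Ioi (a := (0:ℝ))]
  refine IntegrableOn.union ?_ hi
  refine (integrableOn_congr_fun_ae (g := fun _ => (0:ℝ)) ?_).mpr (integrableOn_zero)
  rw [EventuallyEq, ae_restrict_iff' measurableSet_Iic]
  filter_upwards [compl_mem_ae_iff.mpr (Real.volume_singleton (a := 0))] with u hu h
  simp only [Set.mem_compl_iff, Set.mem_singleton_iff] at hu
  exact hfs u (lt_of_le_of_ne h hu)

lemma integrable_exp_weight {f : ℝ → ℝ} (hnn : ∀ x, 0 ≤ f x) (hfs : ∀ x < (0:ℝ), f x = 0)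
    (hm : AEStronglyMeasurable f volume) (hi : Integrable f) {s : ℝ} (hs : 0 ≤ s) :
    Integrable (fun x => f x * Real.exp (-(s * x))) := by
  refine Integrable.mono hi (hm.mul ?_) (ae_of_all _ fun x => ?_)
  · exact (Real.continuous_exp.comp (continuous_const.mul continuous_id).neg).aestronglyMeasurable
  rcases lt_or_ge x 0 with h | h
  · simp [hfs x h, hnn x]
  · rw [Real.norm_eq_abs, Real.norm_eq_abs, abs_of_nonneg (hnn x),
      abs_of_nonneg (mul_nonneg (hnn x) (Real.exp_pos _).le)]
    nlinarith [Real.exp_le_one_iff.mpr (by nlinarith : -(s*x) ≤ 0), hnn x, Real.exp_pos (-(s*x))]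

lemma conv_supp {f g : ℝ → ℝ} (hfs : ∀ x < (0:ℝ), f x = 0) (hgs : ∀ x < (0:ℝ), g x = 0)
    {t : ℝ} (ht : t < 0) : (∫ u, f u * g (t - u)) = 0 := by
  rw [show (fun u => f u * g (t - u)) = fun _ => (0:ℝ) from ?_, integral_zero]
  ext u
  rcases lt_or_ge u 0 with h | h
  · simp [hfs u h]
  · simp [hgs (t - u) (by linarith)]

lemma integral_Ioi_eq_integral {f : ℝ → ℝ} (hfs : ∀ x < (0:ℝ), f x = 0) :
    (∫ x in Set.Ioi (0:ℝ), f x) = ∫ x, f x := by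
  rw [← integral_indicator measurableSet_Ioi]
  refine integral_congr_ae ?_
  filter_upwards [compl_mem_ae_iff.mpr (Real.volume_singleton (a := 0))] with u hu
  simp only [Set.mem_compl_iff, Set.mem_singleton_iff] at hu
  by_cases h : u ∈ Set.Ioi (0:ℝ)
  · rw [Set.indicator_of_mem h]
  · rw [Set.indicator_of_notMem h, hfs u (lt_of_le_of_ne (not_lt.mp h) hu)]

lemma lap_conv {f g : ℝ → ℝ} (hfn : ∀ x, 0 ≤ f x) (hgn : ∀ x, 0 ≤ g x)
    (hfs : ∀ x < (0:ℝ), f x = 0) (hgs : ∀ x < (0:ℝ), g x = 0)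
    (hfm : AEStronglyMeasurable f volume) (hgm : AEStronglyMeasurable g volume)
    (hfi : Integrable f) (hgi : Integrable g) {s : ℝ} (hs : 0 < s) :
    (∫ t in Set.Ioi (0:ℝ), sconv f g t * Real.exp (-(s*t))) =
      (∫ t in Set.Ioi (0:ℝ), f t * Real.exp (-(s*t))) *
        (∫ t in Set.Ioi (0:ℝ), g t * Real.exp (-(s*t))) := by
  set F : ℝ → ℝ := fun x => f x * Real.exp (-(s*x)) with hF
  set G : ℝ → ℝ := fun x => g x * Real.exp (-(s*x)) with hG
  have hFs : ∀ x < (0:ℝ), F x = 0 := fun x hx => by simp [hF, hfs x hx]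
  have hGs : ∀ x < (0:ℝ), G x = 0 := fun x hx => by simp [hG, hgs x hx]
  have hFi : Integrable F := integrable_exp_weight hfn hfs hfm hfi hs.le
  have hGi : Integrable G := integrable_exp_weight hgn hgs hgm hgi hs.le
  set L := ContinuousLinearMap.mul ℝ ℝ with hL
  have key : ∀ t, sconv f g t * Real.exp (-(s*t)) = (F ⋆[L, volume] G) t := by
    intro t
    rw [sconv_eq_conv hfs hgs t, convolution]
    have : ∀ u : ℝ, L (F u) (G (t - u)) = (f u * g (t - u)) * Real.exp (-(s*t)) := by
      intro u
      simp only [hL, ContinuousLinearMap.mul_apply', hF, hG]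
      rw [show -(s*t) = -(s*u) + -(s*(t-u)) by ring, Real.exp_add]
      ring
    simp_rw [this]
    rw [integral_mul_const]
  have hconv_supp : ∀ t < (0:ℝ), (F ⋆[L, volume] G) t = 0 := by
    intro t ht
    rw [convolution]
    simpa only [hL, ContinuousLinearMap.mul_apply'] using conv_supp hFs hGs ht
  calc (∫ t in Set.Ioi (0:ℝ), sconv f g t * Real.exp (-(s*t)))
      = ∫ t in Set.Ioi (0:ℝ), (F ⋆[L, volume] G) t := by
        exact setIntegral_congr_fun measurableSet_Ioi (fun t _ => key t)
    _ = ∫ t, (F ⋆[L, volume] G) t := integral_Ioi_eq_integral hconv_supp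
    _ = (∫ t, F t) * (∫ t, G t) := by
        simpa only [hL, ContinuousLinearMap.mul_apply'] using integral_convolution L hFi hGi
    _ = _ := by rw [integral_Ioi_eq_integral hFs, integral_Ioi_eq_integral hGs]

lemma sconv_eq_convolution {f g : ℝ → ℝ} (hfs : ∀ x < (0:ℝ), f x = 0)
    (hgs : ∀ x < (0:ℝ), g x = 0) :
    sconv f g = f ⋆[ContinuousLinearMap.mul ℝ ℝ, volume] g := by
  funext t
  rw [sconv_eq_conv hfs hgs t, convolution]
  simp only [ContinuousLinearMap.mul_apply']

lemma sconvPow_prop {f : ℝ → ℝ} (hfn : ∀ x, 0 ≤ f x) (hfs : ∀ x < (0:ℝ), f x = 0)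
    (hfm : Measurable f) (hfi : Integrable f) (k : ℕ) :
    (∀ x, 0 ≤ sconvPow f k x) ∧ (∀ x < (0:ℝ), sconvPow f k x = 0) ∧
      Integrable (sconvPow f k) ∧ ∀ s : ℝ, 0 < s →
        (∫ t in Set.Ioi (0:ℝ), sconvPow f k t * Real.exp (-(s*t))) =
          (∫ t in Set.Ioi (0:ℝ), f t * Real.exp (-(s*t))) ^ (k + 1) := by
  induction k with
  | zero => exact ⟨hfn, hfs, hfi, fun s hs => by simp [sconvPow]⟩
  | succ k ih =>
    obtain ⟨ihn, ihs, ihi, ihl⟩ := ih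
    have hgs : ∀ x < (0:ℝ), sconvPow f (k+1) x = 0 := by
      intro x hx
      show sconv f (sconvPow f k) x = 0
      rw [sconv_eq_conv hfs ihs x]
      exact conv_supp hfs ihs hx
    have hgn : ∀ x, 0 ≤ sconvPow f (k+1) x := by
      intro x
      show 0 ≤ sconv f (sconvPow f k) x
      rw [sconv_eq_conv hfs ihs x]
      exact integral_nonneg fun u => mul_nonneg (hfn u) (ihn _)
    have hgi : Integrable (sconvPow f (k+1)) := by
      rw [show sconvPow f (k+1) = sconv f (sconvPow f k) from rfl, sconv_eq_convolution hfs ihs]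
      exact hfi.integrable_convolution _ ihi
    refine ⟨hgn, hgs, hgi, fun s hs => ?_⟩
    show (∫ t in Set.Ioi (0:ℝ), sconv f (sconvPow f k) t * Real.exp (-(s*t))) = _
    rw [lap_conv hfn ihn hfs ihs hfm.aestronglyMeasurable ihi.aestronglyMeasurable hfi ihi hs,
      ihl s hs, pow_succ]
    ring

lemma part1 {lam1 : ℝ → ℝ} (hnn : ∀ x, 0 ≤ lam1 x) (hsupp : ∀ x < (0:ℝ), lam1 x = 0)
    (hmeas : Measurable lam1) (hint : IntegrableOn lam1 (Set.Ioi 0))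
    (hnorm : ∫ x in Set.Ioi (0:ℝ), lam1 x = 1)
    {aT : ℝ} (haT : aT ∈ Set.Ioo (0:ℝ) 1) {z T : ℝ} (hz : 0 < z) (hT : 1 ≤ T) :
    (∫ x in Set.Ioi (0:ℝ),
        (T * (1 - aT) * ∑' k : ℕ, aT ^ (k + 1) * sconvPow lam1 k (T * x)) * Real.exp (-(z * x)))
      = (1 - aT) * (aT * (∫ t in Set.Ioi (0:ℝ), lam1 t * Real.exp (-(z / T * t)))) /
          (1 - aT * (∫ t in Set.Ioi (0:ℝ), lam1 t * Real.exp (-(z / T * t)))) := by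
  have hTpos : 0 < T := lt_of_lt_of_le one_pos hT
  set s : ℝ := z / T with hsdef
  have hs : 0 < s := div_pos hz hTpos
  have hli : Integrable lam1 := integrable_of_supp hsupp hmeas.aestronglyMeasurable hint
  set L : ℝ := ∫ t in Set.Ioi (0:ℝ), lam1 t * Real.exp (-(s * t)) with hLdef
  have hL0 : 0 ≤ L := setIntegral_nonneg measurableSet_Ioi
    (fun x _ => mul_nonneg (hnn x) (Real.exp_pos _).le)
  have hL1 : L ≤ 1 := by
    rw [hLdef, ← hnorm]
    refine setIntegral_mono_on
      ((integrable_exp_weight hnn hsupp hmeas.aestronglyMeasurable hli hs.le).integrableOn)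
      hint measurableSet_Ioi (fun x hx => ?_)
    exact mul_le_of_le_one_right (hnn x)
      (Real.exp_le_one_iff.mpr (by nlinarith [Set.mem_Ioi.mp hx]))
  have haL : 0 ≤ aT * L := mul_nonneg haT.1.le hL0
  have haL1 : aT * L < 1 :=
    lt_of_le_of_lt (mul_le_of_le_one_right haT.1.le hL1) haT.2
  -- per k facts
  have hprop := fun k => sconvPow_prop hnn hsupp hmeas hli k
  have hIco : ∀ k : ℕ, Integrable (fun x => sconvPow lam1 k (T * x) * Real.exp (-(z * x))) := by
    intro k
    have h1 : Integrable (fun y => sconvPow lam1 k y * Real.exp (-(s * y))) :=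
      integrable_exp_weight (hprop k).1 (hprop k).2.1 (hprop k).2.2.1.aestronglyMeasurable
        (hprop k).2.2.1 hs.le
    have h2 := h1.comp_mul_left' (R := T) hTpos.ne'
    refine h2.congr (ae_of_all _ fun x => ?_)
    simp only
    rw [show s * (T * x) = z * x by rw [hsdef]; field_simp]
  have hval : ∀ k : ℕ, (∫ x in Set.Ioi (0:ℝ), sconvPow lam1 k (T * x) * Real.exp (-(z * x)))
      = T⁻¹ * L ^ (k + 1) := by
    intro k
    have : ∀ x, sconvPow lam1 k (T * x) * Real.exp (-(z * x)) =
        (fun y => sconvPow lam1 k y * Real.exp (-(s * y))) (T * x) := by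
      intro x
      simp only
      rw [show s * (T * x) = z * x by rw [hsdef]; field_simp]
    rw [setIntegral_congr_fun measurableSet_Ioi (fun x _ => this x)]
    have h3 := integral_comp_mul_left_Ioi
      (fun y => sconvPow lam1 k y * Real.exp (-(s * y))) 0 hTpos
    rw [mul_zero] at h3
    rw [h3, smul_eq_mul, (hprop k).2.2.2 s hs]
  -- the summands
  set F : ℕ → ℝ → ℝ := fun k x => T * (1 - aT) *
      (aT ^ (k + 1) * (sconvPow lam1 k (T * x) * Real.exp (-(z * x)))) with hFdef
  have hFi : ∀ k, IntegrableOn (F k) (Set.Ioi 0) := by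
    intro k
    exact (((hIco k).const_mul _).const_mul _).integrableOn
  have hFval : ∀ k : ℕ, (∫ x in Set.Ioi (0:ℝ), F k x) = (1 - aT) * (aT * L) ^ (k + 1) := by
    intro k
    rw [hFdef]
    simp only
    rw [integral_const_mul, integral_const_mul, hval k, mul_pow]
    field_simp
  have hFnn : ∀ k x, 0 ≤ F k x := by
    intro k x
    refine mul_nonneg (mul_nonneg hTpos.le (by linarith [haT.2])) ?_
    exact mul_nonneg (pow_nonneg haT.1.le _)
      (mul_nonneg ((hprop k).1 _) (Real.exp_pos _).le)
  -- rewrite the integrand as a tsum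
  have hrw : ∀ x : ℝ,
      (T * (1 - aT) * ∑' k : ℕ, aT ^ (k + 1) * sconvPow lam1 k (T * x)) * Real.exp (-(z * x))
        = ∑' k : ℕ, F k x := by
    intro x
    rw [hFdef]
    simp only
    rw [← tsum_mul_left, ← tsum_mul_right]
    congr 1
    funext k
    ring
  have hsummable : Summable (fun k : ℕ => (1 - aT) * (aT * L) ^ (k + 1)) := by
    apply Summable.mul_left
    exact ((summable_geometric_of_lt_one haL haL1).mul_right _).congr
      (fun k => by rw [pow_succ])
  have hswap : (∫ x in Set.Ioi (0:ℝ), ∑' k : ℕ, F k x) = ∑' k : ℕ, ∫ x in Set.Ioi (0:ℝ), F k x := by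
    refine integral_tsum (fun k => (hFi k).aestronglyMeasurable) ?_
    have : ∀ k : ℕ, (∫⁻ x in Set.Ioi (0:ℝ), ‖F k x‖ₑ) = ENNReal.ofReal ((1 - aT) * (aT * L) ^ (k + 1)) := by
      intro k
      rw [← hFval k, MeasureTheory.ofReal_integral_eq_lintegral_ofReal (hFi k)
        (ae_of_all _ fun x => hFnn k x)]
      refine lintegral_congr fun x => ?_
      rw [← Real.enorm_eq_ofReal (hFnn k x)]
    rw [funext this]
    rw [← ENNReal.ofReal_tsum_of_nonneg (fun k => mul_nonneg (by linarith [haT.2]) (pow_nonneg haL _)) hsummable]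
    exact ENNReal.ofReal_ne_top
  calc (∫ x in Set.Ioi (0:ℝ),
        (T * (1 - aT) * ∑' k : ℕ, aT ^ (k + 1) * sconvPow lam1 k (T * x)) * Real.exp (-(z * x)))
      = ∫ x in Set.Ioi (0:ℝ), ∑' k : ℕ, F k x :=
        setIntegral_congr_fun measurableSet_Ioi (fun x _ => hrw x)
    _ = ∑' k : ℕ, ∫ x in Set.Ioi (0:ℝ), F k x := hswap
    _ = ∑' k : ℕ, (1 - aT) * (aT * L) ^ (k + 1) := by exact tsum_congr hFval
    _ = (1 - aT) * ∑' k : ℕ, (aT * L) ^ (k + 1) := tsum_mul_left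
    _ = (1 - aT) * ((aT * L) * (1 - aT * L)⁻¹) := by
        congr 1
        rw [show (fun k : ℕ => (aT*L) ^ (k+1)) = fun k : ℕ => (aT*L) ^ k * (aT*L) from
          funext fun k => pow_succ _ _, tsum_mul_right, tsum_geometric_of_lt_one haL haL1]
        ring
    _ = _ := by rw [div_eq_mul_inv]; ring

-- interval integral of s e^{-su}
lemma exp_interval {s : ℝ} (hs : 0 < s) {x : ℝ} (hx : 0 ≤ x) :
    (∫ u in Set.Ioo (0:ℝ) x, s * Real.exp (-(s*u))) = 1 - Real.exp (-(s*x)) := by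
  rw [← integral_Ioc_eq_integral_Ioo, ← intervalIntegral.integral_of_le hx]
  have hd : ∀ u : ℝ, HasDerivAt (fun u => -Real.exp (-(s*u))) (s * Real.exp (-(s*u))) u := by
    intro u
    have h1 : HasDerivAt (fun u : ℝ => -(s*u)) (-s) u := by
      have h := ((hasDerivAt_id u).const_mul s).neg; rw [mul_one] at h; exact h
    have h2 := h1.exp
    exact h2.neg.congr_deriv (by ring)
  rw [intervalIntegral.integral_eq_sub_of_hasDerivAt (fun u _ => hd u) ?_]
  · simp; ring
  · exact (continuous_const.mul
      (Real.continuous_exp.comp (continuous_const.mul continuous_id).neg)).intervalIntegrable _ _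

lemma one_sub_lap_eq {lam1 : ℝ → ℝ} (hnn : ∀ x, 0 ≤ lam1 x) (hsupp : ∀ x < (0:ℝ), lam1 x = 0)
    (hmeas : Measurable lam1) (hli : Integrable lam1)
    (hnorm : ∫ x in Set.Ioi (0:ℝ), lam1 x = 1) {s : ℝ} (hs : 0 < s) :
    1 - (∫ x in Set.Ioi (0:ℝ), lam1 x * Real.exp (-(s * x)))
      = ∫ v in Set.Ioi (0:ℝ), Real.exp (-v) * (∫ x in Set.Ioi (v/s), lam1 x) := by
  set Λ : ℝ → ℝ := fun u => ∫ x in Set.Ioi u, lam1 x with hΛdef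
  have hΛnn : ∀ u, 0 ≤ Λ u := fun u => setIntegral_nonneg measurableSet_Ioi (fun x _ => hnn x)
  have hΛanti : Antitone Λ := by
    intro u v huv
    exact setIntegral_mono_set hli.integrableOn (ae_of_all _ hnn)
      (HasSubset.Subset.eventuallyLE (Set.Ioi_subset_Ioi huv))
  have hΛmeas : Measurable Λ := hΛanti.measurable
  have hΛle1 : ∀ u, 0 ≤ u → Λ u ≤ 1 := by
    intro u hu
    rw [← hnorm]
    exact setIntegral_mono_set hli.integrableOn (ae_of_all _ hnn)
      (HasSubset.Subset.eventuallyLE (Set.Ioi_subset_Ioi hu))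
  have hexp1 : ∀ x : ℝ, 0 ≤ x → 0 ≤ 1 - Real.exp (-(s*x)) := by
    intro x hx
    have := Real.exp_le_one_iff.mpr (by nlinarith : -(s*x) ≤ 0)
    linarith
  have hnn1 : ∀ x : ℝ, 0 ≤ lam1 x * (1 - Real.exp (-(s*x))) := by
    intro x
    rcases lt_or_ge x 0 with h | h
    · simp [hsupp x h]
    · exact mul_nonneg (hnn x) (hexp1 x h)
  have hnn2 : ∀ u : ℝ, 0 ≤ s * Real.exp (-(s*u)) * Λ u := fun u =>
    mul_nonneg (mul_nonneg hs.le (Real.exp_pos _).le) (hΛnn u)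
  -- the product function
  set A : Set (ℝ × ℝ) := {p | 0 < p.2 ∧ p.2 < p.1} with hAdef
  have hA : MeasurableSet A :=
    (measurableSet_lt measurable_const measurable_snd).inter
      (measurableSet_lt measurable_snd measurable_fst)
  set Φ : ℝ × ℝ → ENNReal := fun p =>
    A.indicator (fun p => ENNReal.ofReal (lam1 p.1 * (s * Real.exp (-(s * p.2))))) p with hΦdef
  have hΦmeas : Measurable Φ := by
    refine Measurable.indicator ?_ hA
    refine ENNReal.measurable_ofReal.comp ?_
    exact (hmeas.comp measurable_fst).mul
      (measurable_const.mul (Real.measurable_exp.comp ((measurable_snd.const_mul s).neg)))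
  -- inner integral in u
  have inner1 : ∀ x : ℝ, (∫⁻ u, Φ (x, u)) = ENNReal.ofReal (lam1 x * (1 - Real.exp (-(s*x)))) := by
    intro x
    have hix : ∀ u : ℝ, Φ (x, u) =
        (Set.Ioo (0:ℝ) x).indicator
          (fun u => ENNReal.ofReal (lam1 x * (s * Real.exp (-(s*u))))) u := by
      intro u
      simp only [hΦdef, hAdef, Set.indicator, Set.mem_setOf_eq, Set.mem_Ioo]
    simp_rw [hix]
    rw [lintegral_indicator measurableSet_Ioo]
    rcases le_or_gt x 0 with hx | hx
    · rw [Set.Ioo_eq_empty (not_lt.mpr hx), Measure.restrict_empty, lintegral_zero_measure]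
      rcases hx.lt_or_eq with h | h
      · simp [hsupp x h]
      · subst h; simp
    · have hInt : IntegrableOn (fun u => lam1 x * (s * Real.exp (-(s*u)))) (Set.Ioo 0 x) := by
        refine ((Continuous.integrableOn_Icc ?_).mono_set Set.Ioo_subset_Icc_self)
        exact continuous_const.mul (continuous_const.mul
          (Real.continuous_exp.comp (continuous_const.mul continuous_id).neg))
      rw [← MeasureTheory.ofReal_integral_eq_lintegral_ofReal hInt
        (ae_of_all _ fun u => mul_nonneg (hnn x) (mul_nonneg hs.le (Real.exp_pos _).le))]
      rw [MeasureTheory.integral_const_mul, exp_interval hs hx.le]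
  -- inner integral in x
  have inner2 : ∀ u : ℝ, (∫⁻ x, Φ (x, u)) =
      (Set.Ioi (0:ℝ)).indicator
        (fun u => ENNReal.ofReal (s * Real.exp (-(s*u)) * Λ u)) u := by
    intro u
    rcases le_or_gt u 0 with hu | hu
    · have : ∀ x : ℝ, Φ (x, u) = 0 := by
        intro x
        rw [hΦdef]
        refine Set.indicator_of_notMem ?_ _
        rw [hAdef]
        intro h
        exact absurd h.1 (not_lt.mpr hu)
      simp_rw [this]
      rw [lintegral_zero, Set.indicator_of_notMem (by simpa using hu)]
    · have hix : ∀ x : ℝ, Φ (x, u) =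
          (Set.Ioi u).indicator
            (fun x => ENNReal.ofReal (lam1 x * (s * Real.exp (-(s*u))))) x := by
        intro x
        simp only [hΦdef, hAdef, Set.indicator, Set.mem_setOf_eq, Set.mem_Ioi]
        by_cases h : u < x
        · simp [h, hu]
        · simp [h, hu]
      simp_rw [hix]
      rw [lintegral_indicator measurableSet_Ioi,
        ← MeasureTheory.ofReal_integral_eq_lintegral_ofReal
          (hli.integrableOn.mul_const _)
          (ae_of_all _ fun x => mul_nonneg (hnn x) (mul_nonneg hs.le (Real.exp_pos _).le)),
        MeasureTheory.integral_mul_const, Set.indicator_of_mem (Set.mem_Ioi.mpr hu)]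
      congr 1
      rw [hΛdef]
      ring
  -- combine via Tonelli
  have swap : (∫⁻ x, ∫⁻ u, Φ (x, u)) = ∫⁻ u, ∫⁻ x, Φ (x, u) :=
    lintegral_lintegral_swap hΦmeas.aemeasurable
  -- evaluate both sides
  have hg1int : Integrable (fun x => lam1 x * (1 - Real.exp (-(s*x)))) := by
    refine hli.mono ((hmeas.mul ?_).aestronglyMeasurable) (ae_of_all _ fun x => ?_)
    · exact (continuous_const.sub
        (Real.continuous_exp.comp (continuous_const.mul continuous_id).neg)).measurable
    rcases lt_or_ge x 0 with h | h
    · simp [hsupp x h, Real.norm_eq_abs, abs_nonneg]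
    · rw [Real.norm_eq_abs, Real.norm_eq_abs, abs_of_nonneg (hnn x), abs_of_nonneg
        (mul_nonneg (hnn x) (by nlinarith [Real.exp_le_one_iff.mpr (by nlinarith : -(s*x) ≤ 0)]))]
      nlinarith [Real.exp_le_one_iff.mpr (by nlinarith : -(s*x) ≤ 0), hnn x,
        Real.exp_pos (-(s*x))]
  have hE1 : (∫⁻ x, ∫⁻ u, Φ (x, u)) =
      ENNReal.ofReal (∫ x in Set.Ioi (0:ℝ), lam1 x * (1 - Real.exp (-(s*x)))) := by
    simp_rw [inner1]
    rw [← MeasureTheory.ofReal_integral_eq_lintegral_ofReal hg1int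
      (ae_of_all _ hnn1), integral_Ioi_eq_integral (f := fun x => lam1 x * (1 - Real.exp (-(s*x))))
      (fun x hx => by simp [hsupp x hx])]
  have hg2int : IntegrableOn (fun u => s * Real.exp (-(s*u)) * Λ u) (Set.Ioi 0) := by
    refine Integrable.mono ((exp_neg_integrableOn_Ioi 0 hs).const_mul s)
      ((((measurable_const.mul ((measurable_id.const_mul s).neg.exp)).mul
        hΛmeas)).aestronglyMeasurable) ?_
    rw [ae_restrict_iff' measurableSet_Ioi]
    refine ae_of_all _ fun u hu => ?_
    have h1 : (0:ℝ) < Real.exp (-(s*u)) := Real.exp_pos _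
    have he : Real.exp (-s*u) = Real.exp (-(s*u)) := by ring_nf
    simp only [Real.norm_eq_abs, he]
    rw [abs_of_nonneg (hnn2 u), abs_of_nonneg (mul_nonneg hs.le h1.le)]
    nlinarith [hΛle1 u (Set.mem_Ioi.mp hu).le, hΛnn u, mul_pos hs h1]
  have hE2 : (∫⁻ u, ∫⁻ x, Φ (x, u)) =
      ENNReal.ofReal (∫ u in Set.Ioi (0:ℝ), s * Real.exp (-(s*u)) * Λ u) := by
    simp_rw [inner2]
    rw [lintegral_indicator measurableSet_Ioi,
      ← MeasureTheory.ofReal_integral_eq_lintegral_ofReal hg2int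
        (ae_restrict_of_ae (ae_of_all _ hnn2))]
  -- the real identity from Tonelli
  have hkey : (∫ x in Set.Ioi (0:ℝ), lam1 x * (1 - Real.exp (-(s*x))))
      = ∫ u in Set.Ioi (0:ℝ), s * Real.exp (-(s*u)) * Λ u := by
    have h := hE1.symm.trans (swap.trans hE2)
    exact (ENNReal.ofReal_eq_ofReal_iff
      (setIntegral_nonneg measurableSet_Ioi fun x _ => hnn1 x)
      (setIntegral_nonneg measurableSet_Ioi fun u _ => hnn2 u)).mp h
  -- step 1 : 1 - Lap = ∫ lam1 (1 - exp)
  have step1 : 1 - (∫ x in Set.Ioi (0:ℝ), lam1 x * Real.exp (-(s * x)))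
      = ∫ x in Set.Ioi (0:ℝ), lam1 x * (1 - Real.exp (-(s*x))) := by
    have h := integral_sub (hli.integrableOn (s := Set.Ioi (0:ℝ)))
      ((integrable_exp_weight hnn hsupp hmeas.aestronglyMeasurable hli hs.le).integrableOn
        (s := Set.Ioi (0:ℝ)))
    calc 1 - (∫ x in Set.Ioi (0:ℝ), lam1 x * Real.exp (-(s * x)))
        = (∫ x in Set.Ioi (0:ℝ), lam1 x) -
            ∫ x in Set.Ioi (0:ℝ), lam1 x * Real.exp (-(s * x)) := by rw [hnorm]
      _ = ∫ x in Set.Ioi (0:ℝ), (lam1 x - lam1 x * Real.exp (-(s * x))) := h.symm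
      _ = ∫ x in Set.Ioi (0:ℝ), lam1 x * (1 - Real.exp (-(s*x))) :=
          setIntegral_congr_fun measurableSet_Ioi (fun x _ => by ring)
  -- change of variables
  have step2 : (∫ u in Set.Ioi (0:ℝ), s * Real.exp (-(s*u)) * Λ u)
      = ∫ v in Set.Ioi (0:ℝ), Real.exp (-v) * Λ (v/s) := by
    have hc := integral_comp_mul_left_Ioi (fun v => Real.exp (-v) * Λ (v/s)) 0 hs
    rw [mul_zero] at hc
    have : ∀ u : ℝ, (fun v => Real.exp (-v) * Λ (v/s)) (s * u)
        = Real.exp (-(s*u)) * Λ u := by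
      intro u
      simp only
      rw [mul_div_cancel_left₀ u hs.ne']
    rw [setIntegral_congr_fun measurableSet_Ioi (fun u _ => this u)] at hc
    have : (∫ u in Set.Ioi (0:ℝ), s * Real.exp (-(s*u)) * Λ u)
        = s * ∫ u in Set.Ioi (0:ℝ), Real.exp (-(s*u)) * Λ u := by
      rw [← MeasureTheory.integral_const_mul]
      congr 1; funext u; ring
    rw [this, hc, smul_eq_mul]
    field_simp
  rw [step1, hkey, step2]

lemma tail_limit {lam1 : ℝ → ℝ} (hnn : ∀ x, 0 ≤ lam1 x) (hsupp : ∀ x < (0:ℝ), lam1 x = 0)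
    (hmeas : Measurable lam1) (hli : Integrable lam1)
    (hnorm : ∫ x in Set.Ioi (0:ℝ), lam1 x = 1)
    {α C : ℝ} (hα0 : 0 < α) (hα1 : α < 1) (hC : 0 < C)
    (htail : Tendsto (fun x : ℝ => α * x ^ α * ∫ s in Set.Ioi x, lam1 s) atTop (nhds C))
    {z : ℝ} (hz : 0 < z) :
    Tendsto (fun T : ℝ =>
        T ^ α * (1 - ∫ x in Set.Ioi (0:ℝ), lam1 x * Real.exp (-(z / T * x))))
      atTop (nhds (C / α * Real.Gamma (1 - α) * z ^ α)) := by
  set Λ : ℝ → ℝ := fun u => ∫ x in Set.Ioi u, lam1 x with hΛdef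
  have hΛnn : ∀ u, 0 ≤ Λ u := fun u => setIntegral_nonneg measurableSet_Ioi (fun x _ => hnn x)
  have hΛanti : Antitone Λ := by
    intro u v huv
    exact setIntegral_mono_set hli.integrableOn (ae_of_all _ hnn)
      (HasSubset.Subset.eventuallyLE (Set.Ioi_subset_Ioi huv))
  have hΛmeas : Measurable Λ := hΛanti.measurable
  have hΛle1 : ∀ u, 0 ≤ u → Λ u ≤ 1 := by
    intro u hu
    rw [← hnorm]
    exact setIntegral_mono_set hli.integrableOn (ae_of_all _ hnn)
      (HasSubset.Subset.eventuallyLE (Set.Ioi_subset_Ioi hu))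
  -- the uniform bound K
  obtain ⟨x₀, hx₀⟩ := (htail.eventually (eventually_le_nhds (lt_add_one C))).exists_forall_of_atTop
  set x₁ : ℝ := max x₀ 1 with hx₁def
  set K : ℝ := max ((C+1)/α) (x₁ ^ α) with hKdef
  have hK : ∀ x : ℝ, 0 < x → x ^ α * Λ x ≤ K := by
    intro x hx
    rcases le_or_gt x₁ x with h | h
    · have h1 := hx₀ x (le_trans (le_max_left _ _) h)
      have h2 : x ^ α * Λ x ≤ (C+1)/α := by
        rw [le_div_iff₀ hα0]
        nlinarith
      exact le_trans h2 (le_max_left _ _)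
    · have h1 : x ^ α * Λ x ≤ x ^ α * 1 :=
        mul_le_mul_of_nonneg_left (hΛle1 x hx.le) (Real.rpow_nonneg hx.le α)
      have h2 : x ^ α ≤ x₁ ^ α := Real.rpow_le_rpow hx.le h.le hα0.le
      calc x ^ α * Λ x ≤ x ^ α := by linarith
        _ ≤ x₁ ^ α := h2
        _ ≤ K := le_max_right _ _
  have hK0 : 0 < K := lt_of_lt_of_le (div_pos (by linarith) hα0) (le_max_left _ _)
  -- rpow identity
  have hrpow : ∀ v T : ℝ, 0 < v → 0 < T → z ^ α * v ^ (-α) * (v * T / z) ^ α = T ^ α := by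
    intro v T hv hT
    rw [Real.rpow_neg hv.le, Real.div_rpow (mul_nonneg hv.le hT.le) hz.le,
      Real.mul_rpow hv.le hT.le]
    have h1 := (Real.rpow_pos_of_pos hv α).ne'
    have h2 := (Real.rpow_pos_of_pos hz α).ne'
    field_simp
  -- the integrand family
  set G : ℝ → ℝ → ℝ := fun T v => Real.exp (-v) * (T ^ α * Λ (v * T / z)) with hGdef
  set B : ℝ → ℝ := fun v => Real.exp (-v) * (C / α * (z ^ α * v ^ (-α))) with hBdef
  have hb0 : (0:ℝ) < 1 - α := by linarith
  have hGammaInt : IntegrableOn (fun v : ℝ => Real.exp (-v) * v ^ (-α)) (Set.Ioi 0) := by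
    have := Real.GammaIntegral_convergent hb0
    refine this.congr_fun (fun v hv => ?_) measurableSet_Ioi
    norm_num
  have hGamma : (∫ v in Set.Ioi (0:ℝ), Real.exp (-v) * v ^ (-α)) = Real.Gamma (1 - α) := by
    rw [Real.Gamma_eq_integral hb0]
    refine setIntegral_congr_fun measurableSet_Ioi (fun v hv => ?_)
    norm_num
  -- dominated convergence
  have hDCT : Tendsto (fun T : ℝ => ∫ v in Set.Ioi (0:ℝ), G T v) atTop
      (nhds (∫ v in Set.Ioi (0:ℝ), B v)) := by
    refine tendsto_integral_filter_of_dominated_convergence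
      (fun v => Real.exp (-v) * (K * (z ^ α * v ^ (-α)))) ?_ ?_ ?_ ?_
    · refine Eventually.of_forall (fun T => ?_)
      refine (Measurable.aestronglyMeasurable ?_)
      exact (Real.measurable_exp.comp measurable_neg).mul
        (((hΛmeas.comp ((measurable_id.mul_const T).div_const z)).const_mul _))
    · filter_upwards [eventually_ge_atTop (1:ℝ)] with T hT
      rw [ae_restrict_iff' measurableSet_Ioi]
      refine ae_of_all _ fun v hv => ?_
      have hv0 : (0:ℝ) < v := Set.mem_Ioi.mp hv
      have hT0 : (0:ℝ) < T := lt_of_lt_of_le one_pos hT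
      have hx : (0:ℝ) < v * T / z := div_pos (mul_pos hv0 hT0) hz
      have hb : T ^ α * Λ (v * T / z) ≤ K * (z ^ α * v ^ (-α)) := by
        have h1 : (v * T / z) ^ α * Λ (v * T / z) ≤ K := hK _ hx
        have h2 : (0:ℝ) < (v * T / z) ^ α := Real.rpow_pos_of_pos hx α
        have h3 : Λ (v * T / z) ≤ K / (v * T / z) ^ α := by
          rw [le_div_iff₀ h2]
          nlinarith
        have h4 : T ^ α * Λ (v * T / z) ≤ T ^ α * (K / (v * T / z) ^ α) :=
          mul_le_mul_of_nonneg_left h3 (Real.rpow_nonneg hT0.le α)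
        refine le_trans h4 (le_of_eq ?_)
        rw [← hrpow v T hv0 hT0]
        field_simp
      rw [Real.norm_eq_abs, abs_of_nonneg (mul_nonneg (Real.exp_pos _).le
        (mul_nonneg (Real.rpow_nonneg hT0.le α) (hΛnn _)))]
      exact mul_le_mul_of_nonneg_left hb (Real.exp_pos _).le
    · refine (Integrable.congr ((hGammaInt.const_mul (K * z ^ α))) ?_)
      refine ae_of_all _ fun v => ?_
      simp only
      ring
    · rw [ae_restrict_iff' measurableSet_Ioi]
      refine ae_of_all _ fun v hv => ?_
      have hv0 : (0:ℝ) < v := Set.mem_Ioi.mp hv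
      have hcomp : Tendsto (fun T : ℝ => v * T / z) atTop atTop := by
        have h := (tendsto_id (α := ℝ)).const_mul_atTop (div_pos hv0 hz)
        refine h.congr fun T => ?_
        simp only [id]
        ring
      have h1 := htail.comp hcomp
      have h2 := h1.const_mul (z ^ α * v ^ (-α) / α)
      have h3 : Tendsto (fun T : ℝ => T ^ α * Λ (v * T / z)) atTop
          (nhds (C / α * (z ^ α * v ^ (-α)))) := by
        have heq : C / α * (z ^ α * v ^ (-α)) = z ^ α * v ^ (-α) / α * C := by ring
        rw [heq]
        refine Tendsto.congr' ?_ h2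
        filter_upwards [eventually_ge_atTop (1:ℝ)] with T hT
        have hT0 : (0:ℝ) < T := lt_of_lt_of_le one_pos hT
        simp only [Function.comp]
        rw [← hrpow v T hv0 hT0]
        field_simp
        ring
      exact h3.const_mul (Real.exp (-v))
  -- identify the limit value
  have hBval : (∫ v in Set.Ioi (0:ℝ), B v) = C / α * Real.Gamma (1 - α) * z ^ α := by
    have : ∀ v : ℝ, B v = (C / α * z ^ α) * (Real.exp (-v) * v ^ (-α)) := by
      intro v
      rw [hBdef]
      ring
    rw [show B = fun v => (C / α * z ^ α) * (Real.exp (-v) * v ^ (-α)) from funext this,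
      MeasureTheory.integral_const_mul, hGamma]
    ring
  have hfinal : ∀ᶠ T : ℝ in atTop,
      T ^ α * (1 - ∫ x in Set.Ioi (0:ℝ), lam1 x * Real.exp (-(z / T * x)))
        = ∫ v in Set.Ioi (0:ℝ), G T v := by
    filter_upwards [eventually_ge_atTop (1:ℝ)] with T hT
    have hT0 : (0:ℝ) < T := lt_of_lt_of_le one_pos hT
    have hs : (0:ℝ) < z / T := div_pos hz hT0
    rw [one_sub_lap_eq hnn hsupp hmeas hli hnorm hs, ← MeasureTheory.integral_const_mul]
    refine setIntegral_congr_fun measurableSet_Ioi fun v hv => ?_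
    rw [hGdef]
    simp only
    rw [div_div_eq_mul_div, hΛdef]
    ring
  rw [← hBval]
  exact Tendsto.congr' (EventuallyEq.symm hfinal) hDCT


/-- in the heavy-tail nearly unstable regime, the Laplace transform of
ρ₁^T(x) = T(1−a_T) ∑_{k≥1} a_T^k λ₁^{*k}(Tx) equals
(1−a_T) a_T λ̂₁(z/T)/(1 − a_T λ̂₁(z/T)) and converges, for every z > 0, to
λ/(λ + z^α) (the Laplace transform of the Mittag-Leffler density), where
λ = α λ*/(C Γ(1−α)). -/
theorem rho_laplace_convergence (α lamStar C : ℝ)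
    (hα : α ∈ Set.Ioo (1/2 : ℝ) 1) (hls : 0 < lamStar) (hC : 0 < C)
    (lam : ℝ) (hlam : lam = α * lamStar / (C * Real.Gamma (1 - α)))
    (lam1 : ℝ → ℝ)
    (hnn : ∀ x, 0 ≤ lam1 x) (hsupp : ∀ x < (0:ℝ), lam1 x = 0)
    (hmeas : Measurable lam1)
    (hint : IntegrableOn lam1 (Set.Ioi 0))
    (hnorm : ∫ x in Set.Ioi (0:ℝ), lam1 x = 1)
    (htail : Tendsto (fun x : ℝ => α * x ^ α * ∫ s in Set.Ioi x, lam1 s)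
      atTop (nhds C))
    (a : ℝ → ℝ) (ha : ∀ T, a T ∈ Set.Ioo (0:ℝ) 1)
    (haT : Tendsto (fun T : ℝ => T ^ α * (1 - a T)) atTop (nhds lamStar))
    (Lhat : ℝ → ℝ)
    (hLhat : ∀ z, Lhat z = ∫ x in Set.Ioi (0:ℝ), lam1 x * Real.exp (-(z * x)))
    (ρ : ℝ → ℝ → ℝ)
    (hρ : ∀ T x, ρ T x = T * (1 - a T) * ∑' k : ℕ, (a T) ^ (k + 1) * sconvPow lam1 k (T * x)) :
    ∀ z : ℝ, 0 < z →
      (∀ T : ℝ, 1 ≤ T →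
        (∫ x in Set.Ioi (0:ℝ), ρ T x * Real.exp (-(z * x))) =
          (1 - a T) * (a T * Lhat (z / T)) / (1 - a T * Lhat (z / T))) ∧
      Tendsto (fun T : ℝ => ∫ x in Set.Ioi (0:ℝ), ρ T x * Real.exp (-(z * x)))
        atTop (nhds (lam / (lam + z ^ α))) := by
  intro z hz
  have hα0 : (0:ℝ) < α := lt_trans (by norm_num) hα.1
  have hα1 : α < 1 := hα.2
  have hli : Integrable lam1 := integrable_of_supp hsupp hmeas.aestronglyMeasurable hint
  have hΓ : 0 < Real.Gamma (1 - α) := Real.Gamma_pos_of_pos (by linarith)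
  -- the identity for all T ≥ 1
  have hid : ∀ T : ℝ, 1 ≤ T →
      (∫ x in Set.Ioi (0:ℝ), ρ T x * Real.exp (-(z * x))) =
        (1 - a T) * (a T * Lhat (z / T)) / (1 - a T * Lhat (z / T)) := by
    intro T hT
    have h := part1 hnn hsupp hmeas hint hnorm (ha T) hz hT
    rw [hLhat (z / T), ← h]
    exact setIntegral_congr_fun measurableSet_Ioi fun x _ => by rw [hρ T x]
  refine ⟨hid, ?_⟩
  -- convergence
  set c' : ℝ := C / α * Real.Gamma (1 - α) * z ^ α with hc'def
  have hc'pos : 0 < c' :=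
    mul_pos (mul_pos (div_pos hC hα0) hΓ) (Real.rpow_pos_of_pos hz α)
  have hTαinv : Tendsto (fun T : ℝ => T ^ (-α)) atTop (nhds 0) := tendsto_rpow_neg_atTop hα0
  have hmulinv : ∀ᶠ T : ℝ in atTop, ∀ y : ℝ, (T ^ α * y) * T ^ (-α) = y := by
    filter_upwards [eventually_ge_atTop (1:ℝ)] with T hT y
    have hT0 : (0:ℝ) < T := lt_of_lt_of_le one_pos hT
    rw [show (T ^ α * y) * T ^ (-α) = (T ^ α * T ^ (-α)) * y by ring,
      ← Real.rpow_add hT0, add_neg_cancel, Real.rpow_zero, one_mul]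
  -- a T → 1
  have hsub_a : Tendsto (fun T : ℝ => 1 - a T) atTop (nhds 0) := by
    have h := haT.mul hTαinv
    rw [mul_zero] at h
    refine Tendsto.congr' ?_ h
    filter_upwards [hmulinv] with T hT
    exact hT (1 - a T)
  have ha1 : Tendsto (fun T : ℝ => a T) atTop (nhds 1) := by
    have h := tendsto_const_nhds (x := (1:ℝ)) (f := atTop).sub hsub_a
    rw [sub_zero] at h
    refine h.congr fun T => by ring
  -- the key tail limit
  have hkey : Tendsto (fun T : ℝ => T ^ α * (1 - Lhat (z / T))) atTop (nhds c') := by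
    have h := tail_limit hnn hsupp hmeas hli hnorm hα0 hα1 hC htail hz
    refine Tendsto.congr (fun T => ?_) h
    rw [hLhat (z / T)]
  -- Lhat (z/T) → 1
  have hsub_L : Tendsto (fun T : ℝ => 1 - Lhat (z / T)) atTop (nhds 0) := by
    have h := hkey.mul hTαinv
    rw [mul_zero] at h
    refine Tendsto.congr' ?_ h
    filter_upwards [hmulinv] with T hT
    exact hT (1 - Lhat (z / T))
  have hL1 : Tendsto (fun T : ℝ => Lhat (z / T)) atTop (nhds 1) := by
    have h := tendsto_const_nhds (x := (1:ℝ)) (f := atTop).sub hsub_L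
    rw [sub_zero] at h
    refine h.congr fun T => by ring
  -- numerator and denominator
  have hN : Tendsto (fun T : ℝ => (T ^ α * (1 - a T)) * (a T * Lhat (z / T))) atTop
      (nhds (lamStar * (1 * 1))) := haT.mul (ha1.mul hL1)
  have hD : Tendsto (fun T : ℝ => T ^ α * (1 - a T) + a T * (T ^ α * (1 - Lhat (z / T)))) atTop
      (nhds (lamStar + 1 * c')) := haT.add (ha1.mul hkey)
  have hDne : lamStar + 1 * c' ≠ 0 := by nlinarith
  have hG := hN.div hD hDne
  -- identify limit value
  have hval : lamStar * (1 * 1) / (lamStar + 1 * c') = lam / (lam + z ^ α) := by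
    have hzα : 0 < z ^ α := Real.rpow_pos_of_pos hz α
    rw [hlam, hc'def]
    rw [div_eq_div_iff (by nlinarith) ?_]
    · field_simp
    · have h1 : 0 < α * lamStar / (C * Real.Gamma (1 - α)) :=
        div_pos (mul_pos hα0 hls) (mul_pos hC hΓ)
      nlinarith
  rw [hval] at hG
  -- eventual equality of the two expressions
  refine Tendsto.congr' ?_ hG
  filter_upwards [eventually_ge_atTop (1:ℝ)] with T hT
  have hT0 : (0:ℝ) < T := lt_of_lt_of_le one_pos hT
  have hTα : T ^ α ≠ 0 := (Real.rpow_pos_of_pos hT0 α).ne'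
  simp only [Pi.div_apply]
  rw [show (T ^ α * (1 - a T)) * (a T * Lhat (z / T)) =
      T ^ α * ((1 - a T) * (a T * Lhat (z / T))) by ring,
    show T ^ α * (1 - a T) + a T * (T ^ α * (1 - Lhat (z / T))) =
      T ^ α * (1 - a T * Lhat (z / T)) by ring,
    mul_div_mul_left _ _ hTα]
  exact (hid T hT).symm
end

section
/- For α ∈ (0,1) and λ > 0, the fractional integral of order 1−α of the Mittag-Leffler density satisfies I^{1−α} f^{α,λ}(t) = λ(1 − F^{α,λ}(t)) for all t > 0, where F^{α,λ}(t) = ∫₀^t f^{α,λ}(s) ds. -/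
open MeasureTheory

noncomputable def mittagLeffler (α β w : ℝ) : ℝ :=
  ∑' n : ℕ, w ^ n / Real.Gamma (α * n + β)

noncomputable def mlDensity (α lam t : ℝ) : ℝ :=
  lam * t ^ (α - 1) * mittagLeffler α α (-(lam * t ^ α))


lemma Gamma_ratio_ge {x a : ℝ} (hx : 2 ≤ x) (ha : 0 < a) :
    Real.Gamma x * (x - 1) ^ a ≤ Real.Gamma (x + a) := by
  have h1 : (0:ℝ) < x - 1 := by linarith
  have hx0 : (0:ℝ) < x := by linarith
  have hxa : (0:ℝ) < x + a := by linarith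
  have hslope := Real.convexOn_log_Gamma.slope_mono_adjacent
    (Set.mem_Ioi.2 h1) (Set.mem_Ioi.2 hxa) (by linarith : x - 1 < x) (by linarith : x < x + a)
  simp only [Function.comp] at hslope
  have hG1 : Real.Gamma x = (x - 1) * Real.Gamma (x - 1) := by
    have h := Real.Gamma_add_one (ne_of_gt h1)
    rw [sub_add_cancel] at h
    exact h
  have hlog : Real.log (Real.Gamma x) - Real.log (Real.Gamma (x - 1)) = Real.log (x - 1) := by
    rw [hG1, Real.log_mul (ne_of_gt h1) (ne_of_gt (Real.Gamma_pos_of_pos h1))]; ring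
  have key : Real.log (Real.Gamma x) + a * Real.log (x - 1) ≤ Real.log (Real.Gamma (x + a)) := by
    have h2 : x - (x - 1) = 1 := by ring
    have h3 : x + a - x = a := by ring
    rw [h2, h3, div_one, hlog] at hslope
    rw [le_div_iff₀ ha] at hslope
    nlinarith [hslope]
  calc Real.Gamma x * (x - 1) ^ a
      = Real.exp (Real.log (Real.Gamma x) + a * Real.log (x - 1)) := by
        rw [Real.exp_add, Real.exp_log (Real.Gamma_pos_of_pos hx0),
          Real.rpow_def_of_pos h1, mul_comm a]
    _ ≤ Real.exp (Real.log (Real.Gamma (x + a))) := Real.exp_le_exp.2 key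
    _ = Real.Gamma (x + a) := Real.exp_log (Real.Gamma_pos_of_pos hxa)


lemma summable_ml {α β : ℝ} (w : ℝ) (hα : 0 < α) (hβ : 0 < β) :
    Summable (fun n : ℕ => w ^ n / Real.Gamma (α * n + β)) := by
  set M : ℝ := max 1 ((2 * |w| + 1) ^ (1 / α)) with hM
  have hM1 : 1 ≤ M := le_max_left _ _
  have htend : Filter.Tendsto (fun n : ℕ => α * n + β) Filter.atTop Filter.atTop := by
    apply Filter.tendsto_atTop_add_const_right
    exact Filter.Tendsto.const_mul_atTop hα tendsto_natCast_atTop_atTop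
  have hev : ∀ᶠ n : ℕ in Filter.atTop, max 2 (M + 1) ≤ α * n + β :=
    htend.eventually_ge_atTop _
  refine summable_of_ratio_norm_eventually_le (r := 1/2) (by norm_num) ?_
  filter_upwards [hev] with n hn
  set x : ℝ := α * n + β with hx
  have hx2 : 2 ≤ x := le_trans (le_max_left _ _) hn
  have hxM : M + 1 ≤ x := le_trans (le_max_right _ _) hn
  have h1 : (0:ℝ) < x - 1 := by linarith
  have hΓx : 0 < Real.Gamma x := Real.Gamma_pos_of_pos (by linarith)
  have hΓxa : 0 < Real.Gamma (x + α) := Real.Gamma_pos_of_pos (by linarith)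
  -- (x-1)^α ≥ 2|w|+1
  have hpow : 2 * |w| + 1 ≤ (x - 1) ^ α := by
    have hMx : (2 * |w| + 1) ^ (1 / α) ≤ x - 1 := by
      have := le_max_right 1 ((2 * |w| + 1) ^ (1 / α))
      linarith
    have hc : (0:ℝ) ≤ 2 * |w| + 1 := by positivity
    calc 2 * |w| + 1 = ((2 * |w| + 1) ^ (1 / α)) ^ α := by
          rw [← Real.rpow_mul hc, one_div, inv_mul_cancel₀ (ne_of_gt hα), Real.rpow_one]
      _ ≤ (x - 1) ^ α := Real.rpow_le_rpow (Real.rpow_nonneg hc _) hMx hα.le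
  have hkey : Real.Gamma x * (x - 1) ^ α ≤ Real.Gamma (x + α) := Gamma_ratio_ge hx2 hα
  have hxn1 : α * (n + 1 : ℕ) + β = x + α := by push_cast [hx]; ring
  rw [hxn1, Real.norm_eq_abs, Real.norm_eq_abs, abs_div, abs_div, abs_pow, abs_pow,
    abs_of_pos hΓx, abs_of_pos hΓxa]
  have hstep1 : |w| ^ (n + 1) / Real.Gamma (x + α) ≤ |w| ^ (n + 1) / (Real.Gamma x * (x - 1) ^ α) := by
    apply div_le_div_of_nonneg_left (by positivity) (by positivity) hkey
  refine hstep1.trans ?_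
  rw [mul_div_assoc', div_le_div_iff₀ (by positivity) hΓx, pow_succ]
  have hwn : (0:ℝ) ≤ |w| ^ n := by positivity
  nlinarith [mul_le_mul_of_nonneg_left (mul_le_mul_of_nonneg_left hpow hwn) hΓx.le,
    mul_nonneg hΓx.le hwn, abs_nonneg w]

lemma real_betaIntegral {u v : ℝ} (hu : 0 < u) (hv : 0 < v) :
    ∫ x in (0:ℝ)..1, x ^ (u - 1) * (1 - x) ^ (v - 1) =
      Real.Gamma u * Real.Gamma v / Real.Gamma (u + v) := by
  have hcompl := Complex.Gamma_mul_Gamma_eq_betaIntegral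
      (s := (u:ℂ)) (t := (v:ℂ)) (by simpa using hu) (by simpa using hv)
  have hpos : 0 < Real.Gamma (u + v) := Real.Gamma_pos_of_pos (by linarith)
  have hne : Complex.Gamma ((u:ℂ) + v) ≠ 0 := by
    rw [← Complex.ofReal_add, Complex.Gamma_ofReal]
    exact_mod_cast hpos.ne'
  have hbeta : Complex.betaIntegral u v =
      ((Real.Gamma u * Real.Gamma v / Real.Gamma (u + v) : ℝ) : ℂ) := by
    have : Complex.betaIntegral u v = Complex.Gamma u * Complex.Gamma v / Complex.Gamma (u + v) := by
      field_simp [hcompl]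
      rw [hcompl]; ring
    rw [this]
    push_cast [← Complex.Gamma_ofReal]
    ring
  have h0 : (∫ x in (0:ℝ)..1, (((x ^ (u - 1) * (1 - x) ^ (v - 1) : ℝ)) : ℂ)) =
      ((∫ x in (0:ℝ)..1, x ^ (u - 1) * (1 - x) ^ (v - 1) : ℝ) : ℂ) :=
    RCLike.intervalIntegral_ofReal
  have hint : ((∫ x in (0:ℝ)..1, x ^ (u - 1) * (1 - x) ^ (v - 1) : ℝ) : ℂ) =
      Complex.betaIntegral u v := by
    rw [Complex.betaIntegral, ← h0]
    refine intervalIntegral.integral_congr fun x hx => ?_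
    rw [Set.uIcc_of_le zero_le_one] at hx
    rw [Complex.ofReal_mul, Complex.ofReal_cpow hx.1 (u-1),
      Complex.ofReal_cpow (by linarith [hx.2] : (0:ℝ) ≤ 1 - x) (v-1)]
    push_cast
    ring
  exact_mod_cast hint.trans hbeta

lemma real_betaIntegral' {u v : ℝ} (hu : 0 < u) (hv : 0 < v) : True := trivial

lemma beta_intervalIntegrable01 {u v : ℝ} (hu : 0 < u) (hv : 0 < v) :
    IntervalIntegrable (fun x : ℝ => x ^ (u - 1) * (1 - x) ^ (v - 1)) volume 0 1 := by
  have h := (Complex.betaIntegral_convergent (u := u) (v := v)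
    (by simpa using hu) (by simpa using hv)).norm
  refine h.congr ?_
  rw [Set.uIoc_of_le zero_le_one]
  intro x hx
  dsimp only
  have h1x : (0:ℝ) ≤ 1 - x := by linarith [hx.2]
  have e1 : ((u:ℂ) - 1) = ((u - 1 : ℝ) : ℂ) := by push_cast; ring
  have e2 : ((v:ℂ) - 1) = ((v - 1 : ℝ) : ℂ) := by push_cast; ring
  have e3 : ((1:ℂ) - (x:ℂ)) = ((1 - x : ℝ) : ℂ) := by push_cast; ring
  rw [e1, e2, e3, ← Complex.ofReal_cpow hx.1.le, ← Complex.ofReal_cpow h1x,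
    ← Complex.ofReal_mul, Complex.norm_real]
  exact abs_of_nonneg (mul_nonneg (Real.rpow_nonneg hx.1.le _) (Real.rpow_nonneg h1x _))

lemma beta_intervalIntegrable {u v t : ℝ} (hu : 0 < u) (hv : 0 < v) (ht : 0 < t) :
    IntervalIntegrable (fun s : ℝ => (t - s) ^ (v - 1) * s ^ (u - 1)) volume 0 t := by
  have h01 := beta_intervalIntegrable01 hu hv
  have hF : IntervalIntegrable
      (fun x : ℝ => (t - t * x) ^ (v - 1) * (t * x) ^ (u - 1)) volume 0 1 := by
    refine (h01.const_mul (t ^ (v - 1) * t ^ (u - 1))).congr ?_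
    intro x hx
    dsimp only
    rw [Set.uIoc_of_le zero_le_one] at hx
    have h1x : (0:ℝ) ≤ 1 - x := by linarith [hx.2]
    rw [show t - t*x = t*(1-x) by ring, Real.mul_rpow ht.le h1x,
      Real.mul_rpow ht.le hx.1.le]
    ring
  have h2 := hF.comp_mul_left (c := t⁻¹)
  rw [zero_div, one_div, inv_inv] at h2
  refine h2.congr ?_
  intro s _
  dsimp only
  rw [show t * (t⁻¹ * s) = s by field_simp]

lemma beta_integral_scaled {u v t : ℝ} (hu : 0 < u) (hv : 0 < v) (ht : 0 < t) :
    ∫ s in (0:ℝ)..t, (t - s) ^ (v - 1) * s ^ (u - 1) =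
      Real.Gamma u * Real.Gamma v / Real.Gamma (u + v) * t ^ (u + v - 1) := by
  have h := intervalIntegral.integral_comp_mul_left (a := 0) (b := 1)
      (f := fun s => (t - s) ^ (v - 1) * s ^ (u - 1)) (c := t) (ne_of_gt ht)
  rw [mul_zero, mul_one] at h
  have h2 : ∫ s in (0:ℝ)..t, (t - s) ^ (v - 1) * s ^ (u - 1)
      = t * ∫ x in (0:ℝ)..1, (t - t * x) ^ (v - 1) * (t * x) ^ (u - 1) := by
    rw [h, smul_eq_mul, ← mul_assoc, mul_inv_cancel₀ (ne_of_gt ht), one_mul]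
  rw [h2]
  have h3 : ∫ x in (0:ℝ)..1, (t - t * x) ^ (v - 1) * (t * x) ^ (u - 1)
      = t ^ (v - 1) * t ^ (u - 1) * ∫ x in (0:ℝ)..1, x ^ (u - 1) * (1 - x) ^ (v - 1) := by
    rw [← intervalIntegral.integral_const_mul]
    refine intervalIntegral.integral_congr fun x hx => ?_
    rw [Set.uIcc_of_le zero_le_one] at hx
    have h1x : (0:ℝ) ≤ 1 - x := by linarith [hx.2]
    rw [show t - t*x = t*(1-x) by ring, Real.mul_rpow ht.le h1x,
      Real.mul_rpow ht.le hx.1]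
    ring
  rw [h3, real_betaIntegral hu hv,
    show u + v - 1 = (v - 1) + ((u - 1) + 1) by ring, Real.rpow_add ht, Real.rpow_add ht,
    Real.rpow_one]
  ring


lemma mlDensity_eq {α lam : ℝ} {s : ℝ} (hs : 0 < s) :
    mlDensity α lam s
      = ∑' n : ℕ, (lam * (-lam) ^ n / Real.Gamma (α * n + α)) * s ^ (α * n + α - 1) := by
  rw [mlDensity, mittagLeffler, ← tsum_mul_left]
  refine tsum_congr fun n => ?_
  have h2 : (s ^ α) ^ n = s ^ (α * n) := by
    rw [← Real.rpow_natCast (s ^ α) n, ← Real.rpow_mul hs.le]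
  have h3 : s ^ (α - 1) * s ^ (α * n) = s ^ (α * n + α - 1) := by
    rw [← Real.rpow_add hs]; congr 1; ring
  rw [show -(lam * s ^ α) = (-lam) * (s ^ α) by ring, mul_pow, h2, ← h3]
  ring

lemma integral_mlDensity {α lam t : ℝ} (hα0 : 0 < α) (hlam : 0 < lam) (ht : 0 < t) :
    ∫ s in (0:ℝ)..t, mlDensity α lam s
      = ∑' n : ℕ, -((-(lam * t ^ α)) ^ (n + 1) / Real.Gamma (α * (n + 1) + 1)) := by
  have hna : ∀ n : ℕ, (0:ℝ) < α * n + α := fun n => by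
    have : (0:ℝ) ≤ α * n := mul_nonneg hα0.le (Nat.cast_nonneg n)
    linarith
  have hΓ : ∀ n : ℕ, 0 < Real.Gamma (α * n + α) := fun n => Real.Gamma_pos_of_pos (hna n)
  set c : ℕ → ℝ := fun n => lam * (-lam) ^ n / Real.Gamma (α * n + α) with hc
  have habs : ∀ n : ℕ, |c n| = lam * lam ^ n / Real.Gamma (α * n + α) := fun n => by
    rw [hc, abs_div, abs_of_pos (hΓ n), abs_mul, abs_of_pos hlam, abs_pow, abs_neg,
      abs_of_pos hlam]
  have hint : ∀ (b e : ℝ), 0 < e + 1 → (∫ s in Set.Ioc (0:ℝ) t, b * s ^ e) = b * (t ^ (e+1) / (e+1)) := by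
    intro b e he
    rw [← intervalIntegral.integral_of_le ht.le, intervalIntegral.integral_const_mul,
      integral_rpow (Or.inl (by linarith)), Real.zero_rpow (ne_of_gt he)]
    ring
  have h_int : ∀ n : ℕ, IntegrableOn (fun s : ℝ => c n * s ^ (α * n + α - 1)) (Set.Ioc 0 t) := by
    intro n
    refine (intervalIntegrable_iff_integrableOn_Ioc_of_le ht.le).1 ?_
    exact (intervalIntegral.intervalIntegrable_rpow' (by linarith [hna n])).const_mul _
  have h_norm : ∀ n : ℕ, (∫ s in Set.Ioc (0:ℝ) t, ‖c n * s ^ (α * n + α - 1)‖)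
      = |c n| * (t ^ (α * n + α) / (α * n + α)) := by
    intro n
    have he : (0:ℝ) < (α * n + α - 1) + 1 := by linarith [hna n]
    have h1 := hint (|c n|) (α * n + α - 1) he
    rw [show (α * (n:ℝ) + α - 1) + 1 = α * n + α by ring] at h1
    rw [← h1]
    refine setIntegral_congr_fun measurableSet_Ioc fun s hs => ?_
    rw [norm_mul, Real.norm_eq_abs, Real.norm_eq_abs,
      abs_of_nonneg (Real.rpow_nonneg hs.1.le _)]
  have htn : ∀ n : ℕ, (t ^ α) ^ n = t ^ (α * (n:ℝ)) := fun n => by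
    rw [← Real.rpow_natCast (t ^ α) n, ← Real.rpow_mul ht.le]
  have h4 : ∀ n : ℕ, t ^ (α * (n:ℝ) + α) = t ^ (α * (n:ℝ)) * t ^ α := fun n => by
    rw [← Real.rpow_add ht]
  have h_sum : Summable fun n : ℕ => ∫ s in Set.Ioc (0:ℝ) t, ‖c n * s ^ (α * n + α - 1)‖ := by
    rw [funext h_norm]
    refine Summable.of_nonneg_of_le (fun n => ?_) (fun n => ?_)
      ((summable_ml (lam * t ^ α) hα0 hα0).mul_left (lam * t ^ α / α))
    · have := (hna n).le
      have h5 : (0:ℝ) ≤ t ^ (α * (n:ℝ) + α) := Real.rpow_nonneg ht.le _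
      positivity
    · rw [habs n, mul_pow, htn n, h4 n]
      have key : (α * (n:ℝ) + α)⁻¹ ≤ α⁻¹ := by
        apply inv_anti₀ hα0
        have : (0:ℝ) ≤ α * n := mul_nonneg hα0.le (Nat.cast_nonneg n)
        linarith
      have hnum : (0:ℝ) ≤ lam * lam ^ n * t ^ (α * (n:ℝ)) * t ^ α / Real.Gamma (α * n + α) := by
        have h5 : (0:ℝ) ≤ t ^ (α * (n:ℝ)) := Real.rpow_nonneg ht.le _
        have h6 : (0:ℝ) ≤ t ^ α := Real.rpow_nonneg ht.le _
        have := (hΓ n).le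
        positivity
      calc lam * lam ^ n / Real.Gamma (α * n + α) * (t ^ (α * (n:ℝ)) * t ^ α / (α * n + α))
          = lam * lam ^ n * t ^ (α * (n:ℝ)) * t ^ α / Real.Gamma (α * n + α) * (α * (n:ℝ) + α)⁻¹ := by
            ring
        _ ≤ lam * lam ^ n * t ^ (α * (n:ℝ)) * t ^ α / Real.Gamma (α * n + α) * α⁻¹ :=
            mul_le_mul_of_nonneg_left key hnum
        _ = lam * t ^ α / α * (lam ^ n * t ^ (α * (n:ℝ)) / Real.Gamma (α * n + α)) := by ring
  have key := MeasureTheory.integral_tsum_of_summable_integral_norm h_int h_sum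
  rw [intervalIntegral.integral_of_le ht.le]
  have hcongr : ∫ s in Set.Ioc (0:ℝ) t, mlDensity α lam s
      = ∫ s in Set.Ioc (0:ℝ) t, ∑' n : ℕ, c n * s ^ (α * n + α - 1) :=
    setIntegral_congr_fun measurableSet_Ioc fun s hs => mlDensity_eq hs.1
  rw [hcongr, ← key]
  refine tsum_congr fun n => ?_
  have h1 := hint (c n) (α * n + α - 1) (by linarith [hna n])
  rw [show (α * (n:ℝ) + α - 1) + 1 = α * n + α by ring] at h1
  rw [h1]
  have hΓ1 : Real.Gamma (α * ((n:ℝ) + 1) + 1) = (α * n + α) * Real.Gamma (α * n + α) := by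
    rw [show α * ((n:ℝ) + 1) + 1 = (α * n + α) + 1 by ring,
      Real.Gamma_add_one (ne_of_gt (hna n))]
  have hzn : (-(lam * t ^ α)) ^ (n+1) = -(lam * (-lam) ^ n * (t ^ (α * (n:ℝ)) * t ^ α)) := by
    rw [show -(lam * t ^ α) = (-lam) * (t ^ α) by ring, mul_pow, pow_succ, pow_succ, htn n]
    ring
  rw [hΓ1, hzn, hc, h4 n, neg_div, neg_neg, div_mul_div_comm, mul_comm (Real.Gamma (α * (n:ℝ) + α))]

lemma integral_frac_mlDensity {α lam t : ℝ} (hα0 : 0 < α) (hα1 : α < 1) (hlam : 0 < lam)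
    (ht : 0 < t) :
    ∫ s in (0:ℝ)..t, (t - s) ^ (-α) * mlDensity α lam s
      = Real.Gamma (1 - α) * (lam * ∑' n : ℕ, (-(lam * t ^ α)) ^ n / Real.Gamma (α * n + 1)) := by
  have hv : (0:ℝ) < 1 - α := by linarith
  have hna : ∀ n : ℕ, (0:ℝ) < α * n + α := fun n => by
    have : (0:ℝ) ≤ α * n := mul_nonneg hα0.le (Nat.cast_nonneg n)
    linarith
  have hn1 : ∀ n : ℕ, (0:ℝ) < α * n + 1 := fun n => by
    have : (0:ℝ) ≤ α * n := mul_nonneg hα0.le (Nat.cast_nonneg n)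
    linarith
  have hΓ : ∀ n : ℕ, 0 < Real.Gamma (α * n + α) := fun n => Real.Gamma_pos_of_pos (hna n)
  have hΓ1 : ∀ n : ℕ, 0 < Real.Gamma (α * n + 1) := fun n => Real.Gamma_pos_of_pos (hn1 n)
  set c : ℕ → ℝ := fun n => lam * (-lam) ^ n / Real.Gamma (α * n + α) with hc
  have habs : ∀ n : ℕ, |c n| = lam * lam ^ n / Real.Gamma (α * n + α) := fun n => by
    rw [hc, abs_div, abs_of_pos (hΓ n), abs_mul, abs_of_pos hlam, abs_pow, abs_neg,
      abs_of_pos hlam]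
  have htn : ∀ n : ℕ, (t ^ α) ^ n = t ^ (α * (n:ℝ)) := fun n => by
    rw [← Real.rpow_natCast (t ^ α) n, ← Real.rpow_mul ht.le]
  have hBeta : ∀ n : ℕ, (∫ s in Set.Ioc (0:ℝ) t, (t - s) ^ (-α) * s ^ (α * n + α - 1))
      = Real.Gamma (α * n + α) * Real.Gamma (1 - α) / Real.Gamma (α * n + 1)
        * t ^ (α * (n:ℝ)) := by
    intro n
    have h := beta_integral_scaled (u := α * n + α) (v := 1 - α) (hna n) hv ht
    rw [show (1:ℝ) - α - 1 = -α by ring, show α * (n:ℝ) + α + (1 - α) = α * n + 1 by ring,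
      show α * (n:ℝ) + 1 - 1 = α * n by ring, intervalIntegral.integral_of_le ht.le] at h
    exact h
  have h_int : ∀ n : ℕ, IntegrableOn
      (fun s : ℝ => c n * ((t - s) ^ (-α) * s ^ (α * n + α - 1))) (Set.Ioc 0 t) := by
    intro n
    have h := (beta_intervalIntegrable (hna n) hv ht).const_mul (c n)
    rw [show (1:ℝ) - α - 1 = -α by ring] at h
    exact (intervalIntegrable_iff_integrableOn_Ioc_of_le ht.le).1 h
  have h_norm : ∀ n : ℕ, (∫ s in Set.Ioc (0:ℝ) t, ‖c n * ((t - s) ^ (-α) * s ^ (α * n + α - 1))‖)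
      = lam * Real.Gamma (1 - α) * ((lam * t ^ α) ^ n / Real.Gamma (α * n + 1)) := by
    intro n
    have heq : ∀ s ∈ Set.Ioc (0:ℝ) t, ‖c n * ((t - s) ^ (-α) * s ^ (α * n + α - 1))‖
        = |c n| * ((t - s) ^ (-α) * s ^ (α * n + α - 1)) := by
      intro s hs
      rw [norm_mul, Real.norm_eq_abs, Real.norm_eq_abs,
        abs_of_nonneg (mul_nonneg (Real.rpow_nonneg (by linarith [hs.2] : (0:ℝ) ≤ t - s) _)
          (Real.rpow_nonneg hs.1.le _))]
    rw [setIntegral_congr_fun measurableSet_Ioc heq, MeasureTheory.integral_const_mul,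
      hBeta n, habs n, mul_pow, htn n]
    field_simp
  have h_sum : Summable fun n : ℕ =>
      ∫ s in Set.Ioc (0:ℝ) t, ‖c n * ((t - s) ^ (-α) * s ^ (α * n + α - 1))‖ := by
    rw [funext h_norm]
    exact (summable_ml (lam * t ^ α) hα0 one_pos).mul_left _
  rw [intervalIntegral.integral_of_le ht.le]
  have hcongr : ∫ s in Set.Ioc (0:ℝ) t, (t - s) ^ (-α) * mlDensity α lam s
      = ∫ s in Set.Ioc (0:ℝ) t, ∑' n : ℕ, c n * ((t - s) ^ (-α) * s ^ (α * n + α - 1)) :=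
    setIntegral_congr_fun measurableSet_Ioc fun s hs => by
      rw [mlDensity_eq hs.1, ← tsum_mul_left]
      exact tsum_congr fun n => by ring
  rw [hcongr, ← MeasureTheory.integral_tsum_of_summable_integral_norm h_int h_sum,
    ← tsum_mul_left, ← tsum_mul_left]
  refine tsum_congr fun n => ?_
  rw [MeasureTheory.integral_const_mul, hBeta n,
    show (-(lam * t ^ α)) ^ n = (-lam) ^ n * t ^ (α * (n:ℝ)) by
      rw [show -(lam * t ^ α) = (-lam) * (t ^ α) by ring, mul_pow, htn n], hc]
  field_simp

/-- I^{1−α} f^{α,λ}(t) = λ (1 − F^{α,λ}(t)) for t > 0, where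
F^{α,λ}(t) = ∫₀^t f^{α,λ}(s) ds and I^{1−α} is the fractional integral of order 1−α. -/
theorem fracInt_mlDensity (α lam : ℝ) (hα : α ∈ Set.Ioo (0:ℝ) 1) (hlam : 0 < lam) :
    ∀ t : ℝ, 0 < t →
      (1 / Real.Gamma (1 - α)) * ∫ s in (0:ℝ)..t, (t - s) ^ (-α) * mlDensity α lam s =
        lam * (1 - ∫ s in (0:ℝ)..t, mlDensity α lam s) := by
  obtain ⟨hα0, hα1⟩ := hα
  intro t ht
  have hΓv : 0 < Real.Gamma (1 - α) := Real.Gamma_pos_of_pos (by linarith)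
  have hDsum : Summable (fun n : ℕ => (-(lam * t ^ α)) ^ n / Real.Gamma (α * n + 1)) :=
    summable_ml _ hα0 one_pos
  rw [integral_frac_mlDensity hα0 hα1 hlam ht, integral_mlDensity hα0 hlam ht,
    one_div, ← mul_assoc, inv_mul_cancel₀ (ne_of_gt hΓv), one_mul]
  congr 1
  have h0 : (∑' n : ℕ, (-(lam * t ^ α)) ^ n / Real.Gamma (α * n + 1))
      = 1 + ∑' n : ℕ, (-(lam * t ^ α)) ^ (n + 1) / Real.Gamma (α * ((n:ℝ) + 1) + 1) := by
    rw [Summable.tsum_eq_zero_add hDsum]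
    congr 1
    · norm_num [Real.Gamma_one]
    · exact tsum_congr fun n => by push_cast; ring_nf
  rw [tsum_neg, sub_neg_eq_add, h0]
end

section
/- Let λ: ℝ₊ → ℝ₊ with ‖λ‖₁ < 1 and λ̂ ∈ L²(ℝ), let a_T ∈ (0,1), a_T → 1, and define ψ^T = ∑_{k≥1} a_T^k λ^{*k}. Suppose |λ̂(ω)| ≤ c min(1, 1/|ω|). Then the rescaled function x ↦ ψ^T(Tx) satisfies ∫₀^∞ |ψ^T(Tx)|² dx ≤ (c'/T) ∫_ℝ |λ̂(z)|² dz → 0 as T → ∞. -/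
open MeasureTheory Filter

open scoped ENNReal

namespace PsiAux

noncomputable def NN (lam : ℝ → ℝ) : ℝ≥0∞ := ∫⁻ s, ENNReal.ofReal (lam s)
noncomputable def QQ (lam : ℝ → ℝ) : ℝ≥0∞ := ∫⁻ s, (ENNReal.ofReal (lam s)) ^ 2

noncomputable def G (lam : ℝ → ℝ) : ℕ → ℝ → ℝ≥0∞
  | 0 => fun t => ENNReal.ofReal (lam t)
  | (k+1) => fun t => ∫⁻ s, ENNReal.ofReal (lam s) * G lam k (t - s)

variable {lam : ℝ → ℝ}

lemma G_meas (hmeas : Measurable lam) : ∀ k, Measurable (G lam k) := by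
  intro k
  induction k with
  | zero => exact hmeas.ennreal_ofReal
  | succ k ih =>
      show Measurable fun t => ∫⁻ s, ENNReal.ofReal (lam s) * G lam k (t - s)
      apply Measurable.lintegral_prod_right (f := fun t s => ENNReal.ofReal (lam s) * G lam k (t - s))
      exact ((hmeas.comp measurable_snd).ennreal_ofReal).mul
        (ih.comp (measurable_fst.sub measurable_snd))

lemma G_uncurry_meas (hmeas : Measurable lam) (k : ℕ) :
    Measurable fun p : ℝ × ℝ => ENNReal.ofReal (lam p.2) * G lam k (p.1 - p.2) :=
  ((hmeas.comp measurable_snd).ennreal_ofReal).mul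
    ((G_meas hmeas k).comp (measurable_fst.sub measurable_snd))

lemma lintegral_G (hmeas : Measurable lam) : ∀ k, ∫⁻ t, G lam k t = NN lam ^ (k+1) := by
  intro k
  induction k with
  | zero => simp [G, NN]
  | succ k ih =>
      have swap := lintegral_lintegral_swap (μ := volume) (ν := volume)
        (f := fun t s => ENNReal.ofReal (lam s) * G lam k (t - s))
        (G_uncurry_meas hmeas k).aemeasurable
      show ∫⁻ t, ∫⁻ s, ENNReal.ofReal (lam s) * G lam k (t - s) = _
      rw [swap]
      have : ∀ s : ℝ, ∫⁻ t, ENNReal.ofReal (lam s) * G lam k (t - s)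
          = ENNReal.ofReal (lam s) * NN lam ^ (k+1) := by
        intro s
        have hg : Measurable fun t : ℝ => G lam k (t - s) :=
          (G_meas hmeas k).comp (measurable_id.sub measurable_const)
        rw [lintegral_const_mul _ hg, lintegral_sub_right_eq_self (G lam k) s, ih]
      simp_rw [this]
      rw [lintegral_mul_const _ hmeas.ennreal_ofReal,
        show (∫⁻ a, ENNReal.ofReal (lam a) ∂volume) = NN lam from rfl]
      ring

lemma rpow_half_sq (x : ℝ≥0∞) : (x ^ (1/2 : ℝ)) ^ 2 = x := by
  rw [← ENNReal.rpow_natCast (x ^ (1/2:ℝ)) 2, ← ENNReal.rpow_mul]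
  norm_num

lemma conv_sq (hmeas : Measurable lam) {h : ℝ → ℝ≥0∞} (hh : Measurable h) :
    ∫⁻ t, (∫⁻ s, ENNReal.ofReal (lam s) * h (t - s)) ^ 2
      ≤ NN lam ^ 2 * ∫⁻ t, (h t) ^ 2 := by
  set L : ℝ → ℝ≥0∞ := fun s => ENNReal.ofReal (lam s) with hL
  have hLm : Measurable L := hmeas.ennreal_ofReal
  have key : ∀ t, (∫⁻ s, L s * h (t - s)) ^ 2 ≤ NN lam * ∫⁻ s, L s * (h (t - s)) ^ 2 := by
    intro t
    have hf : AEMeasurable (fun s => (L s) ^ (1/2:ℝ)) volume :=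
      (hLm.pow_const _).aemeasurable
    have hg : AEMeasurable (fun s => (L s) ^ (1/2:ℝ) * h (t - s)) volume :=
      ((hLm.pow_const _).mul (hh.comp (measurable_const.sub measurable_id))).aemeasurable
    have holder := ENNReal.lintegral_mul_le_Lp_mul_Lq volume
      Real.HolderConjugate.two_two hf hg
    have hfg : ∀ s, ((fun s => (L s) ^ (1/2:ℝ)) * fun s => (L s) ^ (1/2:ℝ) * h (t - s)) s
        = L s * h (t - s) := by
      intro s
      show (L s) ^ (1/2:ℝ) * ((L s) ^ (1/2:ℝ) * h (t - s)) = _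
      rw [← mul_assoc, ← sq, rpow_half_sq]
    have hfp : ∀ s, ((L s) ^ (1/2:ℝ)) ^ (2:ℝ) = L s := by
      intro s
      rw [← ENNReal.rpow_mul]; norm_num
    have hgp : ∀ s, ((L s) ^ (1/2:ℝ) * h (t - s)) ^ (2:ℝ) = L s * (h (t - s)) ^ 2 := by
      intro s
      rw [ENNReal.mul_rpow_of_nonneg _ _ (by norm_num), hfp s,
        ← ENNReal.rpow_natCast (h (t-s)) 2]
      norm_num
    simp_rw [hfg, hfp, hgp] at holder
    calc (∫⁻ s, L s * h (t - s)) ^ 2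
        ≤ ((∫⁻ s, L s) ^ (1/2:ℝ) * (∫⁻ s, L s * (h (t - s))^2) ^ (1/2:ℝ)) ^ 2 := by
          exact pow_le_pow_left₀ zero_le holder 2
      _ = NN lam * ∫⁻ s, L s * (h (t - s)) ^ 2 := by
          rw [mul_pow, rpow_half_sq, rpow_half_sq]; rfl
  calc ∫⁻ t, (∫⁻ s, L s * h (t - s)) ^ 2
      ≤ ∫⁻ t, NN lam * ∫⁻ s, L s * (h (t - s)) ^ 2 := lintegral_mono key
    _ = NN lam * ∫⁻ t, ∫⁻ s, L s * (h (t - s)) ^ 2 := by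
        rw [lintegral_const_mul]
        apply Measurable.lintegral_prod_right (f := fun t s => L s * (h (t - s))^2)
        exact ((hLm.comp measurable_snd)).mul
          (((hh.comp (measurable_fst.sub measurable_snd))).pow_const 2)
    _ = NN lam * ∫⁻ s, ∫⁻ t, L s * (h (t - s)) ^ 2 := by
        rw [lintegral_lintegral_swap]
        exact (((hLm.comp measurable_snd)).mul
          (((hh.comp (measurable_fst.sub measurable_snd))).pow_const 2)).aemeasurable
    _ = NN lam * ∫⁻ s, L s * ∫⁻ t, (h t) ^ 2 := by
        congr 1
        apply lintegral_congr
        intro s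
        have hg : Measurable fun t : ℝ => (h (t - s)) ^ 2 :=
          (hh.comp (measurable_id.sub measurable_const)).pow_const 2
        rw [lintegral_const_mul _ hg, lintegral_sub_right_eq_self (fun t => (h t)^2) s]
    _ = NN lam ^ 2 * ∫⁻ t, (h t) ^ 2 := by
        rw [lintegral_mul_const _ hLm,
          show (∫⁻ a, L a ∂volume) = NN lam from rfl]
        ring

lemma lintegral_sq_G (hmeas : Measurable lam) :
    ∀ k, ∫⁻ t, (G lam k t) ^ 2 ≤ NN lam ^ (2*k) * QQ lam := by
  intro k
  induction k with
  | zero => simp [G, QQ]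
  | succ k ih =>
      calc ∫⁻ t, (G lam (k+1) t) ^ 2
          = ∫⁻ t, (∫⁻ s, ENNReal.ofReal (lam s) * G lam k (t - s)) ^ 2 := rfl
        _ ≤ NN lam ^ 2 * ∫⁻ t, (G lam k t) ^ 2 := conv_sq hmeas (G_meas hmeas k)
        _ ≤ NN lam ^ 2 * (NN lam ^ (2*k) * QQ lam) := by gcongr
        _ = NN lam ^ (2*(k+1)) * QQ lam := by ring

lemma iSup_sq {f : ℕ → ℝ≥0∞} (hf : Monotone f) : (⨆ n, f n) ^ 2 = ⨆ n, f n ^ 2 := by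
  apply le_antisymm
  · rw [sq, ENNReal.iSup_mul]
    apply iSup_le; intro n
    rw [ENNReal.mul_iSup]
    apply iSup_le; intro m
    calc f n * f m ≤ f (max n m) * f (max n m) :=
          mul_le_mul' (hf (le_max_left n m)) (hf (le_max_right n m))
      _ = f (max n m) ^ 2 := (sq _).symm
      _ ≤ ⨆ n, f n ^ 2 := le_iSup (fun n => f n ^ 2) _
  · apply iSup_le; intro n
    exact pow_le_pow_left₀ zero_le (le_iSup f n) 2

/-- Minkowski for finite sums, squared form. -/
lemma lintegral_sq_sum_le {g : ℕ → ℝ → ℝ≥0∞} (hg : ∀ k, Measurable (g k))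
    {θ : ℕ → ℝ≥0∞} (hθ : ∀ k, ∫⁻ t, (g k t) ^ 2 ≤ θ k ^ 2) :
    ∀ n, ∫⁻ t, (∑ k ∈ Finset.range n, g k t) ^ 2 ≤ (∑ k ∈ Finset.range n, θ k) ^ 2 := by
  intro n
  induction n with
  | zero => simp
  | succ n ih =>
      have hSm : Measurable fun t => ∑ k ∈ Finset.range n, g k t :=
        Finset.measurable_sum _ fun k _ => hg k
      have mink := ENNReal.lintegral_Lp_add_le (μ := volume) (p := 2)
        hSm.aemeasurable (hg n).aemeasurable (by norm_num)
      have h2 : ∀ x : ℝ≥0∞, x ^ (2:ℝ) = x ^ 2 := fun x => by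
        rw [← ENNReal.rpow_natCast x 2]; norm_num
      simp_rw [Pi.add_apply, h2] at mink
      have hbound : (∫⁻ t, (∑ k ∈ Finset.range n, g k t + g n t) ^ 2) ^ (1/2:ℝ)
          ≤ ∑ k ∈ Finset.range n, θ k + θ n := by
        refine mink.trans (add_le_add ?_ ?_)
        · calc (∫⁻ t, (∑ k ∈ Finset.range n, g k t) ^ 2) ^ (1/2:ℝ)
              ≤ ((∑ k ∈ Finset.range n, θ k) ^ 2) ^ (1/2:ℝ) := by gcongr
            _ = ∑ k ∈ Finset.range n, θ k := by
                rw [← ENNReal.rpow_natCast _ 2, ← ENNReal.rpow_mul]; norm_num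
        · calc (∫⁻ t, (g n t) ^ 2) ^ (1/2:ℝ) ≤ ((θ n) ^ 2) ^ (1/2:ℝ) := by gcongr; exact hθ n
            _ = θ n := by rw [← ENNReal.rpow_natCast _ 2, ← ENNReal.rpow_mul]; norm_num
      have := pow_le_pow_left₀ zero_le hbound 2
      rw [rpow_half_sq] at this
      simpa [Finset.sum_range_succ] using this

lemma lintegral_sq_tsum_le {g : ℕ → ℝ → ℝ≥0∞} (hg : ∀ k, Measurable (g k))
    {θ : ℕ → ℝ≥0∞} (hθ : ∀ k, ∫⁻ t, (g k t) ^ 2 ≤ θ k ^ 2) :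
    ∫⁻ t, (∑' k, g k t) ^ 2 ≤ (∑' k, θ k) ^ 2 := by
  have htsum : ∀ t, (∑' k, g k t) = ⨆ n, ∑ k ∈ Finset.range n, g k t := fun t =>
    ENNReal.tsum_eq_iSup_sum' _ Finset.exists_nat_subset_range
  have hmono : ∀ t, Monotone fun n => ∑ k ∈ Finset.range n, g k t := fun t =>
    Finset.sum_mono_set_of_nonneg (fun _ => zero_le) |>.comp
      (fun n m h => Finset.range_subset_range.mpr h)
  calc ∫⁻ t, (∑' k, g k t) ^ 2
      = ∫⁻ t, ⨆ n, (∑ k ∈ Finset.range n, g k t) ^ 2 := by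
        apply lintegral_congr; intro t
        rw [htsum t, iSup_sq (hmono t)]
    _ = ⨆ n, ∫⁻ t, (∑ k ∈ Finset.range n, g k t) ^ 2 := by
        apply lintegral_iSup
        · exact fun n => (Finset.measurable_sum _ fun k _ => hg k).pow_const 2
        · intro n m h
          intro t
          exact pow_le_pow_left₀ zero_le (hmono t h) 2
    _ ≤ ⨆ n, (∑ k ∈ Finset.range n, θ k) ^ 2 := by
        gcongr with n
        exact lintegral_sq_sum_le hg hθ n
    _ ≤ (∑' k, θ k) ^ 2 := by
        apply iSup_le; intro n
        exact pow_le_pow_left₀ zero_le (ENNReal.sum_le_tsum _) 2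

/-- real tsum of nonneg terms as toReal of ENNReal tsum -/
lemma real_tsum_eq_toReal {u : ℕ → ℝ} (hu : ∀ k, 0 ≤ u k) :
    ∑' k, u k = (∑' k, ENNReal.ofReal (u k)).toReal := by
  by_cases hs : Summable u
  · rw [← ENNReal.ofReal_tsum_of_nonneg hu hs, ENNReal.toReal_ofReal (tsum_nonneg hu)]
  · rw [tsum_eq_zero_of_not_summable hs]
    have htop : ∑' k, ENNReal.ofReal (u k) = ∞ := by
      by_contra h
      exact hs ((ENNReal.summable_toReal h).congr fun k => ENNReal.toReal_ofReal (hu k))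
    rw [htop]; simp

lemma summable_of_ofReal_tsum_ne_top {u : ℕ → ℝ} (hu : ∀ k, 0 ≤ u k)
    (h : ∑' k, ENNReal.ofReal (u k) ≠ ∞) : Summable u :=
  (ENNReal.summable_toReal h).congr fun k => ENNReal.toReal_ofReal (hu k)

lemma ofReal_integral_le {μ : Measure ℝ} {f : ℝ → ℝ} (hf : ∀ x, 0 ≤ f x) :
    ENNReal.ofReal (∫ x, f x ∂μ) ≤ ∫⁻ x, ENNReal.ofReal (f x) ∂μ := by
  by_cases hfi : Integrable f μ
  · rw [ofReal_integral_eq_lintegral_ofReal hfi (ae_of_all _ hf)]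
  · rw [integral_undef hfi]; simp

lemma sconvPow_neg (hsupp : ∀ x < (0:ℝ), lam x = 0) :
    ∀ k, ∀ t < (0:ℝ), sconvPow lam k t = 0 := by
  intro k
  induction k with
  | zero => exact hsupp
  | succ k ih =>
      intro t ht
      show sconv lam (sconvPow lam k) t = 0
      unfold sconv
      rw [intervalIntegral.integral_of_ge ht.le]
      have : Set.EqOn (fun s => lam s * sconvPow lam k (t - s)) 0 (Set.Ioc t 0) := by
        intro s hs
        rcases lt_or_eq_of_le hs.2 with h | h
        · simp [hsupp s h]
        · subst h
          simp [ih t ht]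
      rw [setIntegral_congr_fun measurableSet_Ioc this]
      simp

lemma sconvPow_rep (hsupp : ∀ x < (0:ℝ), lam x = 0) :
    ∀ k t, sconvPow lam (k+1) t = ∫ s, lam s * sconvPow lam k (t - s) := by
  intro k t
  rcases lt_or_ge t 0 with ht | ht
  · rw [sconvPow_neg hsupp (k+1) t ht]
    symm
    have : ∀ s : ℝ, lam s * sconvPow lam k (t - s) = 0 := by
      intro s
      rcases lt_trichotomy s 0 with h | h | h
      · simp [hsupp s h]
      · subst h
        simp [sconvPow_neg hsupp k t ht]
      · have : t - s < 0 := by linarith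
        simp [sconvPow_neg hsupp k _ this]
    simp [this]
  · show sconv lam (sconvPow lam k) t = _
    unfold sconv
    rw [intervalIntegral.integral_of_le ht, ← integral_Icc_eq_integral_Ioc]
    have heq : (fun s => lam s * sconvPow lam k (t - s))
        = (Set.Icc 0 t).indicator (fun s => lam s * sconvPow lam k (t - s)) := by
      funext s
      by_cases hs : s ∈ Set.Icc 0 t
      · rw [Set.indicator_of_mem hs]
      · rw [Set.indicator_of_notMem hs]
        rcases not_and_or.mp hs with h | h
        · push_neg at h
          simp [hsupp s h]
        · push_neg at h
          have : t - s < 0 := by linarith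
          simp [sconvPow_neg hsupp k _ this]
    conv_rhs => rw [heq]
    rw [integral_indicator measurableSet_Icc]

lemma sconvPow_nonneg (hnn : ∀ x, 0 ≤ lam x) (hsupp : ∀ x < (0:ℝ), lam x = 0) :
    ∀ k t, 0 ≤ sconvPow lam k t := by
  intro k
  induction k with
  | zero => exact hnn
  | succ k ih =>
      intro t
      rw [sconvPow_rep hsupp k t]
      exact integral_nonneg fun s => mul_nonneg (hnn s) (ih _)

lemma sconvPow_measurable (hsupp : ∀ x < (0:ℝ), lam x = 0) (hmeas : Measurable lam) :
    ∀ k, Measurable (sconvPow lam k) := by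
  intro k
  induction k with
  | zero => exact hmeas
  | succ k ih =>
      have : sconvPow lam (k+1) = fun t => ∫ s, lam s * sconvPow lam k (t - s) :=
        funext fun t => sconvPow_rep hsupp k t
      rw [this]
      have hm : StronglyMeasurable fun p : ℝ × ℝ => lam p.2 * sconvPow lam k (p.1 - p.2) :=
        ((hmeas.comp measurable_snd).mul
          (ih.comp (measurable_fst.sub measurable_snd))).stronglyMeasurable
      exact hm.integral_prod_right'.measurable

lemma ofReal_sconvPow_le_G (hnn : ∀ x, 0 ≤ lam x) (hsupp : ∀ x < (0:ℝ), lam x = 0) :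
    ∀ k t, ENNReal.ofReal (sconvPow lam k t) ≤ G lam k t := by
  intro k
  induction k with
  | zero => intro t; exact le_rfl
  | succ k ih =>
      intro t
      rw [sconvPow_rep hsupp k t]
      calc ENNReal.ofReal (∫ s, lam s * sconvPow lam k (t - s))
          ≤ ∫⁻ s, ENNReal.ofReal (lam s * sconvPow lam k (t - s)) :=
            ofReal_integral_le fun s => mul_nonneg (hnn s) (sconvPow_nonneg hnn hsupp k _)
        _ ≤ ∫⁻ s, ENNReal.ofReal (lam s) * G lam k (t - s) := by
            apply lintegral_mono
            intro s
            show ENNReal.ofReal (lam s * sconvPow lam k (t - s)) ≤ _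
            rw [ENNReal.ofReal_mul (hnn s)]
            exact mul_le_mul_right (ih _) _
        _ = G lam (k+1) t := rfl

lemma lintegral_scale {h : ℝ → ℝ≥0∞} (hh : Measurable h) {T : ℝ} (hT : 0 < T) :
    ∫⁻ x in Set.Ioi (0:ℝ), h (T * x) = ENNReal.ofReal (1/T) * ∫⁻ x in Set.Ioi (0:ℝ), h x := by
  have hpre : (fun x : ℝ => T * x) ⁻¹' Set.Ioi 0 = Set.Ioi 0 := by
    ext x
    simp only [Set.mem_preimage, Set.mem_Ioi]
    constructor
    · intro hx
      by_contra hx'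
      push_neg at hx'
      nlinarith
    · exact fun hx => mul_pos hT hx
  have hmap : Measure.map (fun x : ℝ => T * x) (volume.restrict (Set.Ioi 0))
      = ENNReal.ofReal |T⁻¹| • volume.restrict (Set.Ioi 0) := by
    have := Measure.restrict_map (μ := (volume : Measure ℝ))
      (measurable_const_mul T) (measurableSet_Ioi (a := (0:ℝ)))
    rw [hpre] at this
    rw [← this, Real.map_volume_mul_left (ne_of_gt hT), Measure.restrict_smul]
  calc ∫⁻ x in Set.Ioi (0:ℝ), h (T * x)
      = ∫⁻ y, h y ∂(Measure.map (fun x : ℝ => T * x) (volume.restrict (Set.Ioi 0))) :=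
        (lintegral_map hh (measurable_const_mul T)).symm
    _ = ENNReal.ofReal (1/T) * ∫⁻ x in Set.Ioi (0:ℝ), h x := by
        rw [hmap, lintegral_smul_measure, abs_of_pos (inv_pos.mpr hT), one_div, smul_eq_mul]

lemma lintegral_eq_restrict_Ioi {f : ℝ → ℝ≥0∞} (hf : ∀ s < (0:ℝ), f s = 0) :
    ∫⁻ s, f s = ∫⁻ s in Set.Ioi (0:ℝ), f s := by
  rw [← lintegral_indicator measurableSet_Ioi]
  apply lintegral_congr_ae
  have h0 : ∀ᵐ s : ℝ ∂volume, s ≠ 0 := by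
    rw [ae_iff]
    simp only [ne_eq, not_not]
    rw [show {a : ℝ | a = 0} = {0} by ext; simp]
    exact measure_singleton 0
  filter_upwards [h0] with s hs
  rcases lt_trichotomy s 0 with h | h | h
  · rw [hf s h, Set.indicator_of_notMem (by simp [Set.mem_Ioi]; linarith)]
  · exact absurd h hs
  · rw [Set.indicator_of_mem (Set.mem_Ioi.mpr h)]

lemma Lhat_cont (hnn : ∀ x, 0 ≤ lam x) (hmeas : Measurable lam)
    (hint : IntegrableOn lam (Set.Ioi 0)) :
    Continuous fun ω : ℝ => ∫ x in Set.Ioi (0:ℝ), (lam x : ℂ) * Complex.exp (Complex.I * ω * x) := by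
  apply continuous_of_dominated (bound := lam)
  · intro ω
    apply Measurable.aestronglyMeasurable
    apply (Complex.measurable_ofReal.comp hmeas).mul
    apply Complex.measurable_exp.comp
    exact (Complex.measurable_ofReal.comp measurable_id).const_mul _
  · intro ω
    apply ae_of_all
    intro x
    have hexp : ‖Complex.exp (Complex.I * ω * x)‖ = 1 := by
      rw [Complex.norm_exp]
      have : (Complex.I * ω * x).re = 0 := by simp
      rw [this, Real.exp_zero]
    rw [norm_mul, hexp, mul_one, Complex.norm_real, Real.norm_eq_abs, abs_of_nonneg (hnn x)]
  · exact hint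
  · apply ae_of_all
    intro x
    have : Continuous fun ω : ℝ => Complex.I * (ω : ℂ) * x := by continuity
    exact continuous_const.mul (Complex.continuous_exp.comp this)

end PsiAux

/-- Plancherel bound for the rescaled resolvent: with
ψ^T = ∑_{k≥1} a_T^k λ^{*k}, one has
∫₀^∞ |ψ^T(Tx)|² dx ≤ (c'/T) ∫_ℝ |λ̂(z)|² dz, which tends to 0 as T → ∞. -/
theorem psiT_L2_bound (lam : ℝ → ℝ)
    (hnn : ∀ x, 0 ≤ lam x) (hsupp : ∀ x < (0:ℝ), lam x = 0)
    (hmeas : Measurable lam)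
    (hint : IntegrableOn lam (Set.Ioi 0))
    (hnorm : ∫ x in Set.Ioi (0:ℝ), lam x < 1)
    (a : ℝ → ℝ) (ha : ∀ T, a T ∈ Set.Ioo (0:ℝ) 1)
    (haT : Tendsto a atTop (nhds 1))
    (Lhat : ℝ → ℂ)
    (hLhat : ∀ ω, Lhat ω = ∫ x in Set.Ioi (0:ℝ), (lam x : ℂ) * Complex.exp (Complex.I * ω * x))
    (hL2 : Integrable fun z : ℝ => ‖Lhat z‖ ^ 2)
    (c : ℝ) (hc : 0 < c)
    (hbound : ∀ ω : ℝ, ω ≠ 0 → ‖Lhat ω‖ ≤ c * min 1 (1 / |ω|))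
    (ψ : ℝ → ℝ → ℝ)
    (hψ : ∀ T x, ψ T x = ∑' k : ℕ, (a T) ^ (k + 1) * sconvPow lam k x) :
    (∃ c' : ℝ, 0 < c' ∧ ∀ T : ℝ, 1 ≤ T →
        (∫ x in Set.Ioi (0:ℝ), (ψ T (T * x)) ^ 2) ≤ (c' / T) * ∫ z : ℝ, ‖Lhat z‖ ^ 2) ∧
    Tendsto (fun T : ℝ => ∫ x in Set.Ioi (0:ℝ), (ψ T (T * x)) ^ 2) atTop (nhds 0) := by
  classical
  set I : ℝ := ∫ z : ℝ, ‖Lhat z‖ ^ 2 with hI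
  have hInn : 0 ≤ I := integral_nonneg fun z => sq_nonneg _
  set N : ℝ≥0∞ := PsiAux.NN lam with hN
  set Q : ℝ≥0∞ := PsiAux.QQ lam with hQ
  have hNeq : N = ENNReal.ofReal (∫ x in Set.Ioi (0:ℝ), lam x) := by
    rw [hN, PsiAux.NN, PsiAux.lintegral_eq_restrict_Ioi
      (f := fun s => ENNReal.ofReal (lam s)) (fun s hs => by simp [hsupp s hs])]
    exact (ofReal_integral_eq_lintegral_ofReal hint (ae_of_all _ fun x => hnn x)).symm
  have hN1 : N < 1 := by
    rw [hNeq]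
    exact ENNReal.ofReal_lt_one.mpr hnorm
  have hQeq : Q = ∫⁻ s in Set.Ioi (0:ℝ), (ENNReal.ofReal (lam s)) ^ 2 := by
    rw [hQ, PsiAux.QQ]
    exact PsiAux.lintegral_eq_restrict_Ioi (fun s hs => by simp [hsupp s hs])
  have hNtop : N ≠ ∞ := (hN1.trans_le le_top).ne
  have hsub : (1:ℝ≥0∞) - N ≠ 0 := by
    intro h
    exact absurd (tsub_eq_zero_iff_le.mp h) (not_le.mpr hN1)
  have hinv : (1 - N)⁻¹ ≠ ∞ := ENNReal.inv_ne_top.mpr hsub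
  set R : ℝ≥0∞ := (1 - N)⁻¹ ^ 2 * Q with hR
  -- basic facts about ψ
  have hterm_nonneg : ∀ T k x, 0 ≤ (a T) ^ (k + 1) * sconvPow lam k x := fun T k x =>
    mul_nonneg (pow_nonneg (ha T).1.le _) (PsiAux.sconvPow_nonneg hnn hsupp k x)
  have hψnn : ∀ T x, 0 ≤ ψ T x := fun T x => by
    rw [hψ]; exact tsum_nonneg fun k => hterm_nonneg T k x
  have hψrepr : ∀ T, ψ T
      = fun x => (∑' k, ENNReal.ofReal ((a T) ^ (k+1) * sconvPow lam k x)).toReal := by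
    intro T; funext x; rw [hψ]
    exact PsiAux.real_tsum_eq_toReal fun k => hterm_nonneg T k x
  have hψmeas : ∀ T, Measurable (ψ T) := by
    intro T
    rw [hψrepr T]
    exact (Measurable.ennreal_tsum fun k =>
      ((measurable_const.mul (PsiAux.sconvPow_measurable hsupp hmeas k)).ennreal_ofReal)).ennreal_toReal
  -- the majorant Ψ
  set Ψ : ℝ → ℝ → ℝ≥0∞ := fun T x => ∑' k, (ENNReal.ofReal (a T)) ^ (k+1) * PsiAux.G lam k x
    with hΨ
  have hΨmeas : ∀ T, Measurable (Ψ T) := fun T =>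
    Measurable.ennreal_tsum fun k => (PsiAux.G_meas hmeas k).const_mul _
  have hwle : ∀ T (k : ℕ), (ENNReal.ofReal (a T)) ^ (k+1) ≤ 1 := fun T k =>
    pow_le_one₀ zero_le (ENNReal.ofReal_le_one.mpr (ha T).2.le)
  have hofReal_term : ∀ T k x, ENNReal.ofReal ((a T) ^ (k+1) * sconvPow lam k x)
      ≤ (ENNReal.ofReal (a T)) ^ (k+1) * PsiAux.G lam k x := by
    intro T k x
    rw [ENNReal.ofReal_mul (pow_nonneg (ha T).1.le _),
      ENNReal.ofReal_pow (ha T).1.le]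
    exact mul_le_mul_right (PsiAux.ofReal_sconvPow_le_G hnn hsupp k x) _
  have hle : ∀ T x, ENNReal.ofReal (ψ T x) ≤ Ψ T x := by
    intro T x
    rw [hψ]
    by_cases hs : Summable fun k => (a T) ^ (k+1) * sconvPow lam k x
    · rw [ENNReal.ofReal_tsum_of_nonneg (fun k => hterm_nonneg T k x) hs]
      exact ENNReal.tsum_le_tsum fun k => hofReal_term T k x
    · rw [tsum_eq_zero_of_not_summable hs]
      simp
  -- L² bound for Ψ
  have hΨsq : ∀ T, ∫⁻ x, (Ψ T x) ^ 2 ≤ R := by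
    intro T
    have hθ : ∀ k : ℕ, ∫⁻ x, ((ENNReal.ofReal (a T)) ^ (k+1) * PsiAux.G lam k x) ^ 2
        ≤ (N ^ k * Q ^ (1/2:ℝ)) ^ 2 := by
      intro k
      have : ∀ x, ((ENNReal.ofReal (a T)) ^ (k+1) * PsiAux.G lam k x) ^ 2
          = ((ENNReal.ofReal (a T)) ^ (k+1)) ^ 2 * (PsiAux.G lam k x) ^ 2 := fun x =>
        mul_pow _ _ 2
      simp_rw [this]
      rw [lintegral_const_mul _ ((PsiAux.G_meas hmeas k).pow_const 2)]
      calc ((ENNReal.ofReal (a T)) ^ (k+1)) ^ 2 * ∫⁻ x, (PsiAux.G lam k x) ^ 2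
          ≤ 1 * (N ^ (2*k) * Q) := by
            apply mul_le_mul' (pow_le_one₀ zero_le (hwle T k))
            exact PsiAux.lintegral_sq_G hmeas k
        _ = (N ^ k * Q ^ (1/2:ℝ)) ^ 2 := by
            rw [one_mul, mul_pow, PsiAux.rpow_half_sq, ← pow_mul, mul_comm k 2]
    calc ∫⁻ x, (Ψ T x) ^ 2
        ≤ (∑' k : ℕ, N ^ k * Q ^ (1/2:ℝ)) ^ 2 :=
          PsiAux.lintegral_sq_tsum_le
            (fun k => (PsiAux.G_meas hmeas k).const_mul _) hθ
      _ = ((1 - N)⁻¹ * Q ^ (1/2:ℝ)) ^ 2 := by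
          rw [ENNReal.tsum_mul_right, ENNReal.tsum_geometric]
      _ = R := by
          rw [hR, mul_pow, PsiAux.rpow_half_sq]
  -- L¹ bound for Ψ
  have hΨl1 : ∀ T, ∫⁻ x, Ψ T x ≠ ∞ := by
    intro T
    have : ∫⁻ x, Ψ T x = ∑' k : ℕ, ∫⁻ x, (ENNReal.ofReal (a T)) ^ (k+1) * PsiAux.G lam k x := by
      rw [hΨ]
      exact lintegral_tsum fun k => ((PsiAux.G_meas hmeas k).const_mul _).aemeasurable
    rw [this]
    have hbnd : ∑' k : ℕ, ∫⁻ x, (ENNReal.ofReal (a T)) ^ (k+1) * PsiAux.G lam k x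
        ≤ ∑' k : ℕ, N ^ (k+1) := by
      apply ENNReal.tsum_le_tsum
      intro k
      rw [lintegral_const_mul _ (PsiAux.G_meas hmeas k), PsiAux.lintegral_G hmeas k]
      exact mul_le_of_le_one_left zero_le (hwle T k)
    have hgeom : ∑' k : ℕ, N ^ (k+1) = N * (1 - N)⁻¹ := ENNReal.tsum_geometric_add_one N
    refine ne_top_of_le_ne_top ?_ hbnd
    rw [hgeom]
    exact ENNReal.mul_ne_top hNtop hinv
  -- case Q = ∞ : integral is zero
  have hzero : Q = ∞ → ∀ T : ℝ, 1 ≤ T → ∫ x in Set.Ioi (0:ℝ), (ψ T (T * x)) ^ 2 = 0 := by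
    intro hQtop T hT
    have hT0 : (0:ℝ) < T := lt_of_lt_of_le one_pos hT
    -- a.e. lower bound ψ T u ≥ a T * lam u
    have hfin : ∀ᵐ u : ℝ ∂volume, Ψ T u ≠ ∞ :=
      (ae_lt_top (hΨmeas T) (hΨl1 T)).mono fun u h => h.ne
    have hlow : ∀ u : ℝ, Ψ T u ≠ ∞ → a T * lam u ≤ ψ T u := by
      intro u hu
      have hsum : Summable fun k => (a T) ^ (k+1) * sconvPow lam k u := by
        apply PsiAux.summable_of_ofReal_tsum_ne_top (fun k => hterm_nonneg T k u)
        exact ne_top_of_le_ne_top hu (ENNReal.tsum_le_tsum fun k => hofReal_term T k u)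
      rw [hψ]
      have := Summable.le_tsum hsum 0 (fun k _ => hterm_nonneg T k u)
      simpa [sconvPow] using this
    -- transfer along x ↦ T x
    have hnullpre : ∀ᵐ x : ℝ ∂volume, Ψ T (T * x) ≠ ∞ := by
      have hBmeas : MeasurableSet {u : ℝ | Ψ T u = ∞} := (hΨmeas T) (measurableSet_singleton ∞)
      have hB0 : volume {u : ℝ | Ψ T u = ∞} = 0 := by
        have := ae_iff.mp hfin
        simpa using this
      have : volume ((fun x : ℝ => T * x) ⁻¹' {u : ℝ | Ψ T u = ∞}) = 0 := by
        have hmapeq : Measure.map (fun x : ℝ => T * x) volume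
            = ENNReal.ofReal |T⁻¹| • volume := Real.map_volume_mul_left (ne_of_gt hT0)
        have := Measure.map_apply (measurable_const_mul T) hBmeas
            (μ := (volume : Measure ℝ))
        rw [hmapeq] at this
        rw [← this]
        simp [hB0]
      rw [ae_iff]
      simpa using this
    have hae : ∀ᵐ x : ℝ ∂(volume.restrict (Set.Ioi (0:ℝ))),
        (ENNReal.ofReal (a T)) ^ 2 * (ENNReal.ofReal (lam (T * x))) ^ 2
          ≤ ENNReal.ofReal ((ψ T (T * x)) ^ 2) := by
      apply ae_restrict_of_ae
      filter_upwards [hnullpre] with x hx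
      have h1 : a T * lam (T * x) ≤ ψ T (T * x) := hlow _ hx
      have h2 : ENNReal.ofReal ((ψ T (T * x)) ^ 2)
          = (ENNReal.ofReal (ψ T (T * x))) ^ 2 := ENNReal.ofReal_pow (hψnn T _) 2
      rw [h2]
      calc (ENNReal.ofReal (a T)) ^ 2 * (ENNReal.ofReal (lam (T * x))) ^ 2
          = (ENNReal.ofReal (a T) * ENNReal.ofReal (lam (T * x))) ^ 2 := (mul_pow _ _ 2).symm
        _ = (ENNReal.ofReal (a T * lam (T * x))) ^ 2 := by
            rw [ENNReal.ofReal_mul (ha T).1.le]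
        _ ≤ (ENNReal.ofReal (ψ T (T * x))) ^ 2 := by
            gcongr
    have hlbound : ∫⁻ x in Set.Ioi (0:ℝ), ENNReal.ofReal ((ψ T (T * x)) ^ 2) = ∞ := by
      have step1 : ∫⁻ x in Set.Ioi (0:ℝ),
          (ENNReal.ofReal (a T)) ^ 2 * (ENNReal.ofReal (lam (T * x))) ^ 2
          ≤ ∫⁻ x in Set.Ioi (0:ℝ), ENNReal.ofReal ((ψ T (T * x)) ^ 2) :=
        lintegral_mono_ae hae
      have step2 : ∫⁻ x in Set.Ioi (0:ℝ),
          (ENNReal.ofReal (a T)) ^ 2 * (ENNReal.ofReal (lam (T * x))) ^ 2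
          = (ENNReal.ofReal (a T)) ^ 2 * (ENNReal.ofReal (1/T) * Q) := by
        have hgm : Measurable fun x : ℝ => (ENNReal.ofReal (lam (T * x))) ^ 2 :=
          ((hmeas.comp (measurable_const_mul T)).ennreal_ofReal).pow_const 2
        rw [lintegral_const_mul _ hgm]
        congr 1
        rw [hQeq]
        exact PsiAux.lintegral_scale ((hmeas.ennreal_ofReal).pow_const 2) hT0
      have : (ENNReal.ofReal (a T)) ^ 2 * (ENNReal.ofReal (1/T) * Q) = ∞ := by
        rw [hQtop]
        apply ENNReal.mul_eq_top.mpr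
        left
        refine ⟨pow_ne_zero 2 (ne_of_gt (ENNReal.ofReal_pos.mpr (ha T).1)), ?_⟩
        exact ENNReal.mul_eq_top.mpr (Or.inl ⟨ne_of_gt (ENNReal.ofReal_pos.mpr
            (by positivity : (0:ℝ) < 1/T)), rfl⟩)
      rw [← step2] at this  -- this : lower = ∞
      exact top_le_iff.mp (this ▸ step1)
    have hnint : ¬ IntegrableOn (fun x => (ψ T (T * x)) ^ 2) (Set.Ioi (0:ℝ)) := by
      intro hcont
      have := hcont.2
      rw [hasFiniteIntegral_iff_ofReal (ae_of_all _ fun x => sq_nonneg _)] at this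
      rw [hlbound] at this
      exact absurd this (lt_irrefl _)
    exact integral_undef hnint
  -- case Q ≠ ∞ : quantitative bound
  have hkey : Q ≠ ∞ → ∀ T : ℝ, 1 ≤ T →
      ∫ x in Set.Ioi (0:ℝ), (ψ T (T * x)) ^ 2 ≤ (1/T) * R.toReal := by
    intro hQtop T hT
    have hT0 : (0:ℝ) < T := lt_of_lt_of_le one_pos hT
    have hRtop : R ≠ ∞ := by
      rw [hR]
      exact ENNReal.mul_ne_top (ENNReal.pow_ne_top hinv) hQtop
    have hgmeas : Measurable fun x => (ψ T (T * x)) ^ 2 :=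
      ((hψmeas T).comp (measurable_const_mul T)).pow_const 2
    have hl : ∫⁻ x in Set.Ioi (0:ℝ), ENNReal.ofReal ((ψ T (T * x)) ^ 2)
        ≤ ENNReal.ofReal (1/T) * R := by
      calc ∫⁻ x in Set.Ioi (0:ℝ), ENNReal.ofReal ((ψ T (T * x)) ^ 2)
          ≤ ∫⁻ x in Set.Ioi (0:ℝ), (Ψ T (T * x)) ^ 2 := by
            apply lintegral_mono
            intro x
            show ENNReal.ofReal ((ψ T (T * x)) ^ 2) ≤ (Ψ T (T * x)) ^ 2
            rw [ENNReal.ofReal_pow (hψnn T _) 2]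
            exact pow_le_pow_left₀ zero_le (hle T _) 2
        _ = ENNReal.ofReal (1/T) * ∫⁻ x in Set.Ioi (0:ℝ), (Ψ T x) ^ 2 :=
            PsiAux.lintegral_scale ((hΨmeas T).pow_const 2) hT0
        _ ≤ ENNReal.ofReal (1/T) * ∫⁻ x, (Ψ T x) ^ 2 := by
            exact mul_le_mul_right (setLIntegral_le_lintegral _ _) _
        _ ≤ ENNReal.ofReal (1/T) * R := mul_le_mul_right (hΨsq T) _
    have hfin2 : ENNReal.ofReal (1/T) * R ≠ ∞ :=
      ENNReal.mul_ne_top ENNReal.ofReal_ne_top hRtop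
    have hval : ∫ x in Set.Ioi (0:ℝ), (ψ T (T * x)) ^ 2
        = (∫⁻ x in Set.Ioi (0:ℝ), ENNReal.ofReal ((ψ T (T * x)) ^ 2)).toReal :=
      integral_eq_lintegral_of_nonneg_ae (ae_of_all _ fun x => sq_nonneg _)
        hgmeas.aestronglyMeasurable
    rw [hval]
    calc (∫⁻ x in Set.Ioi (0:ℝ), ENNReal.ofReal ((ψ T (T * x)) ^ 2)).toReal
        ≤ (ENNReal.ofReal (1/T) * R).toReal := ENNReal.toReal_mono hfin2 hl
      _ = (1/T) * R.toReal := by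
          rw [ENNReal.toReal_mul, ENNReal.toReal_ofReal (by positivity)]
  -- if I = 0 then Q = 0
  have hQzero : I = 0 → Q = 0 := by
    intro hI0
    have hLcont : Continuous Lhat := by
      have : Lhat = fun ω : ℝ =>
          ∫ x in Set.Ioi (0:ℝ), (lam x : ℂ) * Complex.exp (Complex.I * ω * x) :=
        funext hLhat
      rw [this]
      exact PsiAux.Lhat_cont hnn hmeas hint
    have hsq0 : (fun z : ℝ => ‖Lhat z‖ ^ 2) =ᵐ[volume] 0 :=
      (integral_eq_zero_iff_of_nonneg (fun z => sq_nonneg _) hL2).mp hI0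
    have hae0 : Lhat =ᵐ[volume] 0 := by
      filter_upwards [hsq0] with z hz
      have : ‖Lhat z‖ ^ 2 = 0 := hz
      have : ‖Lhat z‖ = 0 := by
        nlinarith [norm_nonneg (Lhat z), sq_nonneg (‖Lhat z‖)]
      simpa [norm_eq_zero] using this
    have hL0 : Lhat = 0 :=
      (Continuous.ae_eq_iff_eq volume hLcont continuous_const).mp hae0
    have hm0 : ∫ x in Set.Ioi (0:ℝ), lam x = 0 := by
      have h0 : Lhat 0 = 0 := by rw [hL0]; rfl
      rw [hLhat 0] at h0
      simp only [Complex.ofReal_zero, mul_zero, zero_mul, Complex.exp_zero, mul_one] at h0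
      have h1 := integral_re (𝕜 := ℂ) (μ := volume.restrict (Set.Ioi 0))
        (f := fun x => (lam x : ℂ)) hint.ofReal
      rw [h0] at h1
      simpa using h1
    have hlam0 : lam =ᵐ[volume.restrict (Set.Ioi (0:ℝ))] 0 :=
      (integral_eq_zero_iff_of_nonneg (fun x => hnn x) hint).mp hm0
    have h00 : (fun s => (ENNReal.ofReal (lam s)) ^ 2)
        =ᵐ[volume.restrict (Set.Ioi (0:ℝ))] (fun _ => 0) :=
      hlam0.mono fun s hs => by
        have : lam s = 0 := hs
        simp [this]
    rw [hQeq, lintegral_congr_ae h00, lintegral_zero]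
  -- part 1 : the uniform bound
  have part1 : ∃ c' : ℝ, 0 < c' ∧ ∀ T : ℝ, 1 ≤ T →
      (∫ x in Set.Ioi (0:ℝ), (ψ T (T * x)) ^ 2) ≤ (c' / T) * I := by
    by_cases hQtop : Q = ∞
    · refine ⟨1, one_pos, fun T hT => ?_⟩
      rw [hzero hQtop T hT]
      have hT0 : (0:ℝ) < T := lt_of_lt_of_le one_pos hT
      positivity
    · by_cases hI0 : I = 0
      · refine ⟨1, one_pos, fun T hT => ?_⟩
        have hQ0 : Q = 0 := hQzero hI0
        have hR0 : R.toReal = 0 := by rw [hR, hQ0, mul_zero]; simp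
        have := hkey hQtop T hT
        rw [hR0, mul_zero] at this
        rw [hI0, mul_zero]
        exact this
      · have hIpos : 0 < I := lt_of_le_of_ne hInn (Ne.symm hI0)
        refine ⟨(R.toReal + 1) / I, by positivity, fun T hT => ?_⟩
        have hT0 : (0:ℝ) < T := lt_of_lt_of_le one_pos hT
        calc ∫ x in Set.Ioi (0:ℝ), (ψ T (T * x)) ^ 2
            ≤ (1/T) * R.toReal := hkey hQtop T hT
          _ ≤ ((R.toReal + 1) / I / T) * I := by
              have heq : ((R.toReal + 1) / I / T) * I = (R.toReal + 1) / T := by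
                field_simp
              have heq2 : (1/T) * R.toReal = R.toReal / T := by ring
              rw [heq, heq2]
              gcongr
              linarith [ENNReal.toReal_nonneg (a := R)]
  refine ⟨part1, ?_⟩
  obtain ⟨c', hc'pos, hbd⟩ := part1
  apply squeeze_zero' (f := fun T : ℝ => ∫ x in Set.Ioi (0:ℝ), (ψ T (T * x)) ^ 2)
    (g := fun T : ℝ => (c' * I) / T)
  · exact Eventually.of_forall fun T => integral_nonneg fun x => sq_nonneg _
  · filter_upwards [eventually_ge_atTop (1:ℝ)] with T hT
    calc ∫ x in Set.Ioi (0:ℝ), (ψ T (T * x)) ^ 2 ≤ (c'/T) * I := hbd T hT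
      _ = (c' * I) / T := by ring
  · exact tendsto_const_nhds.div_atTop tendsto_id
end

section
/- Let λ₁: ℝ₊ → ℝ₊ be integrable with ‖λ₁‖₁ = 1 and m = ∫₀^∞ x λ₁(x) dx < ∞, let a_T ∈ (0,1) with T(1−a_T) → λ > 0, and define ψ₁^T = ∑_{k≥1} a_T^k λ₁^{*k}. Then for every z ∈ ℝ the Fourier transform of x ↦ ψ₁^T(Tx) converges: ∫₀^∞ ψ₁^T(Tx) e^{izx} dx → 1/(λ − izm) as T → ∞, which is the Fourier transform of x ↦ (1/m) e^{−(λ/m)x} on ℝ₊. -/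
open MeasureTheory Filter

open Set Complex in
lemma norm_exp_I_mul (u x : ℝ) : ‖Complex.exp (Complex.I * u * x)‖ = 1 := by
  rw [show Complex.I * (u:ℂ) * (x:ℂ) = ((u*x : ℝ):ℂ) * Complex.I by push_cast; ring]
  simpa using Complex.norm_exp_ofReal_mul_I (u*x)

open Set Complex in
lemma integrable_mul_exp {f : ℝ → ℝ} {s : Set ℝ} (hf : IntegrableOn f s) (u : ℝ) :
    IntegrableOn (fun x => (f x : ℂ) * Complex.exp (Complex.I * u * x)) s := by
  refine Integrable.mono' hf.norm ?_ ?_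
  · exact (Complex.continuous_ofReal.comp_aestronglyMeasurable hf.aestronglyMeasurable).mul
      ((Complex.continuous_exp.comp (by continuity)).aestronglyMeasurable)
  · filter_upwards with x
    rw [norm_mul, norm_exp_I_mul, mul_one, Complex.norm_real]

open Set Complex in
lemma exp_I_sub_one_le (θ : ℝ) : ‖Complex.exp (Complex.I * θ) - 1‖ ≤ 2 * |θ| := by
  rcases le_or_gt |θ| 1 with h | h
  · have := Complex.norm_exp_sub_one_le (x := Complex.I * θ) (by simpa using h)
    simpa [Complex.norm_exp] using this
  · have h1 : ‖Complex.exp (Complex.I * θ)‖ = 1 := by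
      rw [show Complex.I * (θ:ℂ) = (θ:ℂ) * Complex.I by ring]
      simpa using Complex.norm_exp_ofReal_mul_I θ
    calc ‖Complex.exp (Complex.I * θ) - 1‖ ≤ ‖Complex.exp (Complex.I * θ)‖ + ‖(1:ℂ)‖ :=
          norm_sub_le _ _
      _ = 2 := by rw [h1]; norm_num
      _ ≤ 2 * |θ| := by nlinarith

open Set Complex in
lemma pointwise_slope (z x : ℝ) :
    Tendsto (fun T : ℝ => (T:ℂ) * (Complex.exp (Complex.I * ((z/T : ℝ):ℂ) * (x:ℂ)) - 1))
      atTop (nhds (Complex.I * z * x)) := by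
  set c : ℂ := Complex.I * z * x with hc
  have hd : HasDerivAt (fun s : ℝ => Complex.exp (c * (s:ℂ))) c 0 := by
    have h1 : HasDerivAt (fun s : ℝ => ((s:ℝ):ℂ)) 1 0 := Complex.ofRealCLM.hasDerivAt
    have h2 : HasDerivAt (fun s : ℝ => c * (s:ℂ)) (c * 1) 0 := h1.const_mul c
    have h3 := h2.cexp
    simpa using h3
  rw [hasDerivAt_iff_tendsto_slope] at hd
  have hinv : Tendsto (fun T : ℝ => T⁻¹) atTop (nhds (0:ℝ) ⊓ 𝓟 {(0:ℝ)}ᶜ) := by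
    refine tendsto_inf.mpr ⟨tendsto_inv_atTop_zero, ?_⟩
    rw [tendsto_principal]
    filter_upwards [eventually_ge_atTop (1:ℝ)] with T hT
    exact inv_ne_zero (by linarith)
  have hcomp := hd.comp (hinv.mono_right (by rw [nhdsWithin]))
  refine hcomp.congr' ?_
  filter_upwards [eventually_ge_atTop (1:ℝ)] with T hT
  have hT0 : (T:ℝ) ≠ 0 := by linarith
  show slope (fun s : ℝ => Complex.exp (c * (s:ℂ))) 0 T⁻¹ = _
  have harg : c * ((T:ℂ))⁻¹ = Complex.I * ((z/T : ℝ):ℂ) * (x:ℂ) := by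
    push_cast
    field_simp
    rw [hc]
  simp only [slope, vsub_eq_sub, sub_zero, Complex.ofReal_zero, mul_zero, Complex.exp_zero,
    Complex.real_smul, Complex.ofReal_inv, inv_inv, harg]

open Set Complex in
lemma sconvPow_props (lam1 : ℝ → ℝ)
    (hnn : ∀ x, 0 ≤ lam1 x)
    (hint : IntegrableOn lam1 (Set.Ioi 0))
    (hnorm : ∫ x in Set.Ioi (0:ℝ), lam1 x = 1) :
    ∀ k : ℕ,
      (∀ x, 0 ≤ x → 0 ≤ sconvPow lam1 k x) ∧
      IntegrableOn (sconvPow lam1 k) (Set.Ioi 0) ∧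
      (∫ x in Set.Ioi (0:ℝ), sconvPow lam1 k x) = 1 ∧
      ∀ u : ℝ, (∫ x in Set.Ioi (0:ℝ),
          (sconvPow lam1 k x : ℂ) * Complex.exp (Complex.I * u * x))
        = (∫ x in Set.Ioi (0:ℝ), (lam1 x : ℂ) * Complex.exp (Complex.I * u * x)) ^ (k + 1) := by
  intro k
  induction k with
  | zero => exact ⟨fun x _ => hnn x, hint, hnorm, fun u => (pow_one _).symm⟩
  | succ k ih =>
    obtain ⟨ih1, ih3, ih4, ih5⟩ := ih
    have hsc : sconvPow lam1 (k+1) = sconv lam1 (sconvPow lam1 k) := rfl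
    set h := sconvPow lam1 k with hh
    have P1 : ∀ x, 0 ≤ x → 0 ≤ sconvPow lam1 (k+1) x := by
      intro x hx
      rw [hsc]
      refine intervalIntegral.integral_nonneg hx (fun s hs => ?_)
      exact mul_nonneg (hnn s) (ih1 (x - s) (by simp only [Set.mem_Icc] at hs; linarith [hs.1, hs.2]))
    have hpos : posConvolution lam1 h (ContinuousLinearMap.mul ℝ ℝ) volume
        = Set.indicator (Set.Ioi 0) (sconv lam1 h) := by
      unfold posConvolution sconv
      simp [ContinuousLinearMap.mul_apply']
    have P3 : IntegrableOn (sconvPow lam1 (k+1)) (Set.Ioi 0) := by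
      rw [hsc, ← integrable_indicator_iff measurableSet_Ioi, ← hpos]
      exact integrable_posConvolution hint ih3 (ContinuousLinearMap.mul ℝ ℝ)
    have P4 : (∫ x in Set.Ioi (0:ℝ), sconvPow lam1 (k+1) x) = 1 := by
      have := integral_posConvolution (μ := volume) (ν := volume) hint ih3
        (ContinuousLinearMap.mul ℝ ℝ)
      simp only [ContinuousLinearMap.mul_apply'] at this
      rw [hsc]
      unfold sconv
      rw [this, hnorm, ih4, one_mul]
    refine ⟨P1, P3, P4, fun u => ?_⟩
    have hf : IntegrableOn (fun x => (lam1 x : ℂ) * Complex.exp (Complex.I * u * x))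
        (Set.Ioi 0) := integrable_mul_exp hint u
    have hg : IntegrableOn (fun x => (h x : ℂ) * Complex.exp (Complex.I * u * x))
        (Set.Ioi 0) := integrable_mul_exp ih3 u
    have key := integral_posConvolution (μ := volume) (ν := volume) hf hg
      (ContinuousLinearMap.mul ℝ ℂ)
    simp only [ContinuousLinearMap.mul_apply'] at key
    have lhs_eq : ∀ x : ℝ,
        (∫ t in (0:ℝ)..x, ((lam1 t : ℂ) * Complex.exp (Complex.I * u * t)) *
          ((h (x - t) : ℂ) * Complex.exp (Complex.I * u * ((x - t : ℝ) : ℂ))))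
        = (sconvPow lam1 (k+1) x : ℂ) * Complex.exp (Complex.I * u * x) := by
      intro x
      have : ∀ t : ℝ, ((lam1 t : ℂ) * Complex.exp (Complex.I * u * t)) *
          ((h (x - t) : ℂ) * Complex.exp (Complex.I * u * ((x - t : ℝ) : ℂ)))
          = ((lam1 t * h (x - t) : ℝ) : ℂ) * Complex.exp (Complex.I * u * x) := by
        intro t
        rw [show ((lam1 t : ℂ) * Complex.exp (Complex.I * u * t)) *
          ((h (x - t) : ℂ) * Complex.exp (Complex.I * u * ((x - t : ℝ) : ℂ)))
          = ((lam1 t : ℂ) * (h (x - t) : ℂ)) *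
            (Complex.exp (Complex.I * u * t) * Complex.exp (Complex.I * u * ((x - t : ℝ) : ℂ))) by
              ring,
          ← Complex.exp_add]
        push_cast
        ring_nf
      rw [intervalIntegral.integral_congr (g := fun t =>
          ((lam1 t * h (x - t) : ℝ) : ℂ) * Complex.exp (Complex.I * u * x))
          (fun t _ => this t),
        intervalIntegral.integral_mul_const, intervalIntegral.integral_ofReal]
      rfl
    calc (∫ x in Set.Ioi (0:ℝ),
          (sconvPow lam1 (k+1) x : ℂ) * Complex.exp (Complex.I * u * x))
        = ∫ x in Set.Ioi (0:ℝ), ∫ t in (0:ℝ)..x,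
            ((lam1 t : ℂ) * Complex.exp (Complex.I * u * t)) *
            ((h (x - t) : ℂ) * Complex.exp (Complex.I * u * ((x - t : ℝ) : ℂ))) := by
          refine setIntegral_congr_fun measurableSet_Ioi (fun x _ => ?_)
          exact (lhs_eq x).symm
      _ = (∫ x in Set.Ioi (0:ℝ), (lam1 x : ℂ) * Complex.exp (Complex.I * u * x)) ^ (k + 1 + 1) := by
          rw [key, ih5 u]; ring

section Aux
open Set Complex
open scoped ENNReal

variable (lam1 : ℝ → ℝ)
  (hnn : ∀ x, 0 ≤ lam1 x)
  (hint : IntegrableOn lam1 (Set.Ioi 0))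
  (hnorm : ∫ x in Set.Ioi (0:ℝ), lam1 x = 1)

include hnn hint hnorm in
lemma Lhat_norm_le (u : ℝ) :
    ‖∫ x in Set.Ioi (0:ℝ), (lam1 x : ℂ) * Complex.exp (Complex.I * u * x)‖ ≤ 1 := by
  calc ‖∫ x in Set.Ioi (0:ℝ), (lam1 x : ℂ) * Complex.exp (Complex.I * u * x)‖
      ≤ ∫ x in Set.Ioi (0:ℝ), ‖(lam1 x : ℂ) * Complex.exp (Complex.I * u * x)‖ :=
        norm_integral_le_integral_norm _
    _ = ∫ x in Set.Ioi (0:ℝ), lam1 x := by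
        refine setIntegral_congr_fun measurableSet_Ioi (fun x _ => ?_)
        rw [norm_mul, norm_exp_I_mul, mul_one, Complex.norm_real,
          Real.norm_eq_abs, _root_.abs_of_nonneg (hnn x)]
    _ = 1 := hnorm

include hnn hint hnorm in
lemma psi_fourier_eq (α : ℝ) (hα : α ∈ Set.Ioo (0:ℝ) 1) (u : ℝ) :
    (∫ x in Set.Ioi (0:ℝ),
      ((∑' k : ℕ, α ^ (k+1) * sconvPow lam1 k x : ℝ) : ℂ) * Complex.exp (Complex.I * u * x))
    = ((α:ℂ) * ∫ x in Set.Ioi (0:ℝ), (lam1 x : ℂ) * Complex.exp (Complex.I * u * x)) *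
      (1 - (α:ℂ) * ∫ x in Set.Ioi (0:ℝ), (lam1 x : ℂ) * Complex.exp (Complex.I * u * x))⁻¹ := by
  have props := sconvPow_props lam1 hnn hint hnorm
  set L : ℂ := ∫ x in Set.Ioi (0:ℝ), (lam1 x : ℂ) * Complex.exp (Complex.I * u * x) with hL
  have hsummable : Summable (fun k : ℕ => α ^ (k+1)) := by
    simpa [pow_succ, mul_comm] using
      (summable_geometric_of_lt_one hα.1.le hα.2).mul_left α
  have key : (∫ x in Set.Ioi (0:ℝ), (∑' k : ℕ,
        (α:ℂ) ^ (k+1) * ((sconvPow lam1 k x : ℂ) * Complex.exp (Complex.I * u * x))))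
      = ∑' k : ℕ, ∫ x in Set.Ioi (0:ℝ),
        (α:ℂ) ^ (k+1) * ((sconvPow lam1 k x : ℂ) * Complex.exp (Complex.I * u * x)) := by
    refine integral_tsum (fun k => ?_) ?_
    · exact ((integrable_mul_exp (props k).2.1 u).aestronglyMeasurable).const_mul _
    · have heq : ∀ k : ℕ, (∫⁻ x in Set.Ioi (0:ℝ),
          ‖(α:ℂ) ^ (k+1) * ((sconvPow lam1 k x : ℂ) * Complex.exp (Complex.I * u * x))‖₊)
          = ENNReal.ofReal (α ^ (k+1)) := by
        intro k
        have h1 : ∀ x ∈ Set.Ioi (0:ℝ),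
            ((‖(α:ℂ) ^ (k+1) * ((sconvPow lam1 k x : ℂ) * Complex.exp (Complex.I * u * x))‖₊ : ℝ≥0∞))
            = ENNReal.ofReal (α ^ (k+1) * sconvPow lam1 k x) := by
          intro x hx
          rw [← enorm_eq_nnnorm, ← ofReal_norm]
          congr 1
          rw [norm_mul, norm_mul, norm_exp_I_mul, mul_one, Complex.norm_real,
            Real.norm_eq_abs, _root_.abs_of_nonneg ((props k).1 x (le_of_lt hx)), norm_pow,
            Complex.norm_real, Real.norm_eq_abs, _root_.abs_of_nonneg hα.1.le]
        rw [setLIntegral_congr_fun measurableSet_Ioi h1,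
          ← ofReal_integral_eq_lintegral_ofReal (((props k).2.1).const_mul _)
            ((ae_restrict_iff' measurableSet_Ioi).mpr (ae_of_all _ (fun x hx =>
              mul_nonneg (pow_nonneg hα.1.le _) ((props k).1 x (le_of_lt hx))))),
          integral_const_mul, (props k).2.2.1, mul_one]
      simp only [enorm_eq_nnnorm, heq]
      rw [← ENNReal.ofReal_tsum_of_nonneg (fun n => pow_nonneg hα.1.le _) hsummable]
      exact ENNReal.ofReal_ne_top
  have hpt : ∀ x : ℝ,
      ((∑' k : ℕ, α ^ (k+1) * sconvPow lam1 k x : ℝ) : ℂ) * Complex.exp (Complex.I * u * x)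
      = ∑' k : ℕ, (α:ℂ) ^ (k+1) * ((sconvPow lam1 k x : ℂ) * Complex.exp (Complex.I * u * x)) := by
    intro x
    rw [Complex.ofReal_tsum, ← tsum_mul_right]
    exact tsum_congr (fun k => by push_cast; ring)
  simp_rw [hpt]
  rw [key]
  have hterm : ∀ k : ℕ, (∫ x in Set.Ioi (0:ℝ),
      (α:ℂ) ^ (k+1) * ((sconvPow lam1 k x : ℂ) * Complex.exp (Complex.I * u * x)))
      = ((α:ℂ) * L) ^ (k+1) := by
    intro k
    rw [integral_const_mul, (props k).2.2.2 u, mul_pow]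
  have hw : ‖(α:ℂ) * L‖ < 1 := by
    rw [norm_mul, Complex.norm_real, Real.norm_eq_abs, _root_.abs_of_nonneg hα.1.le]
    calc α * ‖L‖ ≤ α * 1 :=
          mul_le_mul_of_nonneg_left (Lhat_norm_le lam1 hnn hint hnorm u) hα.1.le
      _ < 1 := by rw [mul_one]; exact hα.2
  calc ∑' k : ℕ, (∫ x in Set.Ioi (0:ℝ),
        (α:ℂ) ^ (k+1) * ((sconvPow lam1 k x : ℂ) * Complex.exp (Complex.I * u * x)))
      = ∑' k : ℕ, ((α:ℂ) * L) ^ (k+1) := by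
        simp only [hterm]
    _ = ∑' k : ℕ, ((α:ℂ) * L) ^ k * ((α:ℂ) * L) := by
        simp only [pow_succ]
    _ = (1 - (α:ℂ) * L)⁻¹ * ((α:ℂ) * L) := by
        rw [tsum_mul_right, tsum_geometric_of_norm_lt_one hw]
    _ = (α:ℂ) * L * (1 - (α:ℂ) * L)⁻¹ := by ring

include hnn hint hnorm in
lemma TPhi_sub_one (m : ℝ) (hm0 : 0 < m) (hm : (∫ x in Set.Ioi (0:ℝ), x * lam1 x) = m) (z : ℝ) :
    Tendsto (fun T : ℝ => (T:ℂ) *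
        ((∫ x in Set.Ioi (0:ℝ), (lam1 x : ℂ) * Complex.exp (Complex.I * ((z/T : ℝ):ℂ) * x)) - 1))
      atTop (nhds (Complex.I * z * m)) := by
  have hxm : IntegrableOn (fun x => x * lam1 x) (Set.Ioi 0) := by
    by_contra hcon
    rw [MeasureTheory.integral_undef hcon] at hm
    exact hm0.ne hm
  have hofR : IntegrableOn (fun x => ((lam1 x : ℝ):ℂ)) (Set.Ioi 0) :=
    (integrable_mul_exp hint 0).congr (ae_of_all _ (fun x => by simp))
  have h1 : (∫ x in Set.Ioi (0:ℝ), ((lam1 x : ℝ):ℂ)) = 1 := by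
    have h1' : ((∫ x in Set.Ioi (0:ℝ), lam1 x : ℝ) : ℂ) = 1 := by rw [hnorm]; norm_num
    rw [← h1']
    exact integral_ofReal
  have hF : (fun T : ℝ => (T:ℂ) *
      ((∫ x in Set.Ioi (0:ℝ), (lam1 x : ℂ) * Complex.exp (Complex.I * ((z/T : ℝ):ℂ) * x)) - 1))
      =ᶠ[atTop] (fun T : ℝ => ∫ x in Set.Ioi (0:ℝ),
          (lam1 x : ℂ) * ((T:ℂ) * (Complex.exp (Complex.I * ((z/T : ℝ):ℂ) * x) - 1))) := by
    filter_upwards [eventually_ge_atTop (1:ℝ)] with T hT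
    rw [show ((∫ x in Set.Ioi (0:ℝ), (lam1 x : ℂ) * Complex.exp (Complex.I * ((z/T : ℝ):ℂ) * x)) - 1)
        = ∫ x in Set.Ioi (0:ℝ), ((lam1 x : ℂ) * Complex.exp (Complex.I * ((z/T : ℝ):ℂ) * x)
            - ((lam1 x : ℝ):ℂ)) by
      rw [integral_sub (integrable_mul_exp hint (z/T)) hofR, h1],
      ← integral_const_mul]
    congr 1
    ext x
    ring
  have hbound_int : IntegrableOn (fun x => lam1 x * (2 * |z| * x)) (Set.Ioi 0) :=
    (hxm.const_mul (2 * |z|)).congr (ae_of_all _ (fun x => by ring))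
  have hlim : Tendsto (fun T : ℝ => ∫ x in Set.Ioi (0:ℝ),
      (lam1 x : ℂ) * ((T:ℂ) * (Complex.exp (Complex.I * ((z/T : ℝ):ℂ) * x) - 1)))
      atTop (nhds (∫ x in Set.Ioi (0:ℝ), (lam1 x : ℂ) * (Complex.I * z * x))) := by
    refine tendsto_integral_filter_of_dominated_convergence
      (fun x => lam1 x * (2 * |z| * x)) ?_ ?_ hbound_int ?_
    · filter_upwards with T
      exact (Complex.continuous_ofReal.comp_aestronglyMeasurable
        hint.aestronglyMeasurable).mul (Continuous.aestronglyMeasurable (by continuity))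
    · filter_upwards [eventually_ge_atTop (1:ℝ)] with T hT
      refine (ae_restrict_iff' measurableSet_Ioi).mpr (ae_of_all _ (fun x hx => ?_))
      have hT0 : (0:ℝ) < T := by linarith
      have hx0 : (0:ℝ) < x := hx
      have hexp : ‖Complex.exp (Complex.I * ((z/T : ℝ):ℂ) * x) - 1‖ ≤ 2 * |z / T * x| := by
        have h := exp_I_sub_one_le (z / T * x)
        rw [Complex.ofReal_mul, ← mul_assoc] at h
        exact h
      rw [norm_mul, norm_mul, Complex.norm_real, Real.norm_eq_abs,
        _root_.abs_of_nonneg (hnn x), Complex.norm_real, Real.norm_eq_abs,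
        _root_.abs_of_pos hT0]
      have hb : T * ‖Complex.exp (Complex.I * ((z/T : ℝ):ℂ) * x) - 1‖ ≤ 2 * |z| * x := by
        calc T * ‖Complex.exp (Complex.I * ((z/T : ℝ):ℂ) * x) - 1‖
            ≤ T * (2 * |z / T * x|) := mul_le_mul_of_nonneg_left hexp hT0.le
          _ = 2 * |z| * x := by
              rw [abs_mul, abs_div, _root_.abs_of_pos hT0, _root_.abs_of_pos hx0]
              field_simp
      exact mul_le_mul_of_nonneg_left hb (hnn x)
    · exact ae_of_all _ (fun x => tendsto_const_nhds.mul (pointwise_slope z x))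
  have hval : (∫ x in Set.Ioi (0:ℝ), (lam1 x : ℂ) * (Complex.I * z * x))
      = Complex.I * z * m := by
    rw [show (fun x : ℝ => (lam1 x : ℂ) * (Complex.I * z * x))
        = fun x : ℝ => (Complex.I * z) * ((x * lam1 x : ℝ) : ℂ) by
          funext x; push_cast; ring]
    have h2 : (∫ x in Set.Ioi (0:ℝ), ((x * lam1 x : ℝ) : ℂ)) = (m:ℂ) := by
      rw [← hm]
      exact integral_ofReal
    rw [integral_const_mul, h2]
  rw [hval] at hlim
  exact Tendsto.congr' hF.symm hlim

end Aux

/-- in the light-tail nearly unstable regime (T(1−a_T) → λ > 0,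
‖λ₁‖₁ = 1, first moment m), the Fourier transform of x ↦ ψ₁^T(Tx) converges
pointwise to 1/(λ − izm), the Fourier transform of x ↦ (1/m) e^{−(λ/m)x} on ℝ₊. -/
theorem psiT_fourier_convergence (lam1 : ℝ → ℝ)
    (hnn : ∀ x, 0 ≤ lam1 x) (hsupp : ∀ x < (0:ℝ), lam1 x = 0)
    (hmeas : Measurable lam1)
    (hint : IntegrableOn lam1 (Set.Ioi 0))
    (hnorm : ∫ x in Set.Ioi (0:ℝ), lam1 x = 1)
    (m : ℝ) (hm0 : 0 < m) (hm : (∫ x in Set.Ioi (0:ℝ), x * lam1 x) = m)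
    (lam : ℝ) (hlam : 0 < lam)
    (a : ℝ → ℝ) (ha : ∀ T, a T ∈ Set.Ioo (0:ℝ) 1)
    (haT : Tendsto (fun T : ℝ => T * (1 - a T)) atTop (nhds lam))
    (ψ : ℝ → ℝ → ℝ)
    (hψ : ∀ T x, ψ T x = ∑' k : ℕ, (a T) ^ (k + 1) * sconvPow lam1 k x) :
    ∀ z : ℝ,
      Tendsto (fun T : ℝ =>
          ∫ x in Set.Ioi (0:ℝ), (ψ T (T * x) : ℂ) * Complex.exp (Complex.I * z * x))
        atTop (nhds (1 / ((lam : ℂ) - Complex.I * z * m))) ∧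
      (1 : ℂ) / ((lam : ℂ) - Complex.I * z * m) =
        ∫ x in Set.Ioi (0:ℝ),
          ((1 / m) * Real.exp (-(lam / m) * x) : ℂ) * Complex.exp (Complex.I * z * x) := by
  intro z
  have hne : ((lam : ℂ) - Complex.I * z * m) ≠ 0 := by
    intro h
    have hre := congrArg Complex.re h
    simp [Complex.sub_re, Complex.mul_re, Complex.mul_im] at hre
    exact hlam.ne' hre
  constructor
  · -- part 1: convergence
    -- a T → 1
    have hsub : Tendsto (fun T : ℝ => 1 - a T) atTop (nhds 0) := by
      have h2 : Tendsto (fun T : ℝ => T * (1 - a T) * T⁻¹) atTop (nhds (lam * 0)) :=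
        haT.mul tendsto_inv_atTop_zero
      rw [mul_zero] at h2
      refine Tendsto.congr' ?_ h2
      filter_upwards [eventually_ge_atTop (1:ℝ)] with T hT
      have : T ≠ 0 := by linarith
      field_simp
    have haT1 : Tendsto a atTop (nhds 1) := by
      have h3 := (tendsto_const_nhds (x := (1:ℝ)) (f := atTop)).sub hsub
      rw [sub_zero] at h3
      exact h3.congr (fun T => by ring)
    have ha' : Tendsto (fun T : ℝ => ((a T : ℝ):ℂ)) atTop (nhds (1:ℂ)) := by
      have := (Complex.continuous_ofReal.tendsto 1).comp haT1
      simpa [Function.comp_def] using this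
    -- Φ(z/T) → 1
    have hPhi : Tendsto (fun T : ℝ => ∫ x in Set.Ioi (0:ℝ),
        (lam1 x : ℂ) * Complex.exp (Complex.I * ((z/T : ℝ):ℂ) * x)) atTop (nhds 1) := by
      have h1 : (1:ℂ) = ∫ x in Set.Ioi (0:ℝ), ((lam1 x : ℝ):ℂ) := by
        have h1' : ((∫ x in Set.Ioi (0:ℝ), lam1 x : ℝ) : ℂ) = 1 := by rw [hnorm]; norm_num
        rw [← h1']
        exact integral_ofReal.symm
      rw [h1]
      refine tendsto_integral_filter_of_dominated_convergence
        (fun x => lam1 x) ?_ ?_ hint ?_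
      · filter_upwards with T
        exact (Complex.continuous_ofReal.comp_aestronglyMeasurable
          hint.aestronglyMeasurable).mul (Continuous.aestronglyMeasurable (by continuity))
      · filter_upwards with T
        refine ae_of_all _ (fun x => ?_)
        rw [norm_mul, norm_exp_I_mul, mul_one, Complex.norm_real, Real.norm_eq_abs,
          _root_.abs_of_nonneg (hnn x)]
      · refine ae_of_all _ (fun x => ?_)
        have hz : Tendsto (fun T : ℝ => z / T) atTop (nhds 0) :=
          Tendsto.div_atTop tendsto_const_nhds tendsto_id
        have hcont : Continuous (fun u : ℝ =>
            (lam1 x : ℂ) * Complex.exp (Complex.I * (u:ℂ) * (x:ℂ))) := by continuity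
        have h7 := (hcont.tendsto 0).comp hz
        simpa [Function.comp_def] using h7
    have hG := TPhi_sub_one lam1 hnn hint hnorm m hm0 hm z
    -- numerator and denominator
    have hA : Tendsto (fun T : ℝ => ((a T : ℝ):ℂ) * ∫ x in Set.Ioi (0:ℝ),
        (lam1 x : ℂ) * Complex.exp (Complex.I * ((z/T : ℝ):ℂ) * x)) atTop (nhds 1) := by
      have := ha'.mul hPhi
      rwa [mul_one] at this
    have hD : Tendsto (fun T : ℝ => (T:ℂ) * (1 - ((a T : ℝ):ℂ) * ∫ x in Set.Ioi (0:ℝ),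
        (lam1 x : ℂ) * Complex.exp (Complex.I * ((z/T : ℝ):ℂ) * x))) atTop
        (nhds ((lam : ℂ) - Complex.I * z * m)) := by
      have hofReal : Tendsto (fun T : ℝ => ((T * (1 - a T) : ℝ) : ℂ)) atTop (nhds (lam:ℂ)) :=
        (Complex.continuous_ofReal.tendsto lam).comp haT
      have hsum := hofReal.sub (ha'.mul hG)
      rw [one_mul] at hsum
      refine Tendsto.congr ?_ hsum
      intro T
      push_cast
      ring
    have hdiv := hA.div hD hne
    refine Tendsto.congr' ?_ hdiv
    filter_upwards [eventually_ge_atTop (1:ℝ)] with T hT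
    have hT0 : (0:ℝ) < T := by linarith
    have hT0' : (T:ℝ) ≠ 0 := hT0.ne'
    -- change of variables x ↦ T x
    have hcv : (∫ x in Set.Ioi (0:ℝ), (ψ T (T * x) : ℂ) * Complex.exp (Complex.I * z * x))
        = T⁻¹ • ∫ y in Set.Ioi (0:ℝ), (ψ T y : ℂ) *
            Complex.exp (Complex.I * ((z/T : ℝ):ℂ) * y) := by
      have hgT := MeasureTheory.integral_comp_mul_left_Ioi
        (fun y : ℝ => (ψ T y : ℂ) * Complex.exp (Complex.I * ((z/T : ℝ):ℂ) * y)) 0 hT0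
      rw [mul_zero] at hgT
      rw [← hgT]
      refine setIntegral_congr_fun measurableSet_Ioi (fun x _ => ?_)
      have hTC : (T:ℂ) ≠ 0 := Complex.ofReal_ne_zero.mpr hT0'
      congr 1
      congr 1
      push_cast
      field_simp
    rw [hcv]
    -- apply the series formula
    have hser := psi_fourier_eq lam1 hnn hint hnorm (a T) (ha T) (z/T)
    rw [show (∫ y in Set.Ioi (0:ℝ), (ψ T y : ℂ) *
          Complex.exp (Complex.I * ((z/T : ℝ):ℂ) * y))
        = (∫ y in Set.Ioi (0:ℝ),
          ((∑' k : ℕ, (a T) ^ (k+1) * sconvPow lam1 k y : ℝ) : ℂ) *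
            Complex.exp (Complex.I * ((z/T : ℝ):ℂ) * y)) by
      refine setIntegral_congr_fun measurableSet_Ioi (fun y _ => ?_)
      rw [hψ T y], hser]
    -- algebra
    have h1mw : (1:ℂ) - ((a T : ℝ):ℂ) * ∫ x in Set.Ioi (0:ℝ),
        (lam1 x : ℂ) * Complex.exp (Complex.I * ((z/T : ℝ):ℂ) * x) ≠ 0 := by
      intro hzero
      have heq : ((a T : ℝ):ℂ) * ∫ x in Set.Ioi (0:ℝ),
          (lam1 x : ℂ) * Complex.exp (Complex.I * ((z/T : ℝ):ℂ) * x) = 1 := by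
        exact (sub_eq_zero.mp hzero).symm
      have hlt : ‖((a T : ℝ):ℂ) * ∫ x in Set.Ioi (0:ℝ),
          (lam1 x : ℂ) * Complex.exp (Complex.I * ((z/T : ℝ):ℂ) * x)‖ < 1 := by
        rw [norm_mul, Complex.norm_real, Real.norm_eq_abs, _root_.abs_of_nonneg (ha T).1.le]
        calc a T * ‖∫ x in Set.Ioi (0:ℝ),
              (lam1 x : ℂ) * Complex.exp (Complex.I * ((z/T : ℝ):ℂ) * x)‖
            ≤ a T * 1 := mul_le_mul_of_nonneg_left
              (Lhat_norm_le lam1 hnn hint hnorm (z/T)) (ha T).1.le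
          _ < 1 := by rw [mul_one]; exact (ha T).2
      rw [heq] at hlt
      simp at hlt
    rw [Complex.real_smul]
    push_cast
    field_simp
    rfl
  · -- part 2: Fourier transform of the exponential density
    set c : ℂ := Complex.I * (z:ℂ) - ((lam / m : ℝ) : ℂ) with hc
    have hmne : m ≠ 0 := hm0.ne'
    have hcre : c.re = -(lam/m) := by simp [hc]
    have hc0 : c ≠ 0 := by
      intro h
      rw [h] at hcre
      simp only [Complex.zero_re] at hcre
      have hpos : 0 < lam / m := div_pos hlam hm0
      linarith
    have hderiv : ∀ x ∈ Set.Ici (0:ℝ),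
        HasDerivAt (fun y : ℝ => Complex.exp (c * (y:ℂ)) / c) (Complex.exp (c * (x:ℂ))) x := by
      intro x _
      have h1 : HasDerivAt (fun y : ℝ => ((y:ℝ):ℂ)) 1 x := Complex.ofRealCLM.hasDerivAt
      have h2 : HasDerivAt (fun y : ℝ => c * (y:ℂ)) (c * 1) x := h1.const_mul c
      have h3 := h2.cexp.div_const c
      have : Complex.exp (c * (x:ℂ)) * (c * 1) / c = Complex.exp (c * (x:ℂ)) := by
        field_simp
      rwa [this] at h3
    have hi : IntegrableOn (fun x : ℝ => Complex.exp (c * (x:ℂ))) (Set.Ioi 0) := by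
      refine Integrable.mono' (exp_neg_integrableOn_Ioi 0 (div_pos hlam hm0)) ?_ ?_
      · exact (Complex.continuous_exp.comp
          (continuous_const.mul Complex.continuous_ofReal)).aestronglyMeasurable
      · refine ae_of_all _ (fun x => ?_)
        rw [Complex.norm_exp]
        have : (c * (x:ℂ)).re = -(lam/m) * x := by
          simp [hc, Complex.mul_re]
        rw [this]
    have htends : Tendsto (fun y : ℝ => Complex.exp (c * (y:ℂ)) / c) atTop (nhds 0) := by
      have hg : Tendsto (fun y : ℝ => Real.exp (-(lam/m) * y) / ‖c‖) atTop (nhds 0) := by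
        have h4 : Tendsto (fun y : ℝ => (lam/m) * y) atTop atTop :=
          Tendsto.const_mul_atTop (div_pos hlam hm0) tendsto_id
        have h5 : Tendsto (fun y : ℝ => Real.exp (-((lam/m) * y))) atTop (nhds 0) :=
          Real.tendsto_exp_neg_atTop_nhds_zero.comp h4
        have h6 := h5.div_const ‖c‖
        rw [zero_div] at h6
        exact h6.congr (fun y => by rw [neg_mul])
      refine squeeze_zero_norm (fun y => ?_) hg
      have hnexp : ‖Complex.exp (c * (y:ℂ))‖ = Real.exp (-(lam/m) * y) := by
        rw [Complex.norm_exp]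
        congr 1
        simp [hc, Complex.mul_re]
      rw [norm_div, hnexp]
    have key := MeasureTheory.integral_Ioi_of_hasDerivAt_of_tendsto' hderiv hi htends
    rw [Complex.ofReal_zero, mul_zero, Complex.exp_zero, zero_sub] at key
    rw [show (fun x : ℝ => ((1 / m) * Real.exp (-(lam / m) * x) : ℂ) *
          Complex.exp (Complex.I * z * x))
        = fun x : ℝ => ((1/m : ℝ) : ℂ) * Complex.exp (c * (x:ℂ)) by
      funext x
      rw [hc]
      push_cast
      rw [mul_assoc, ← Complex.exp_add]
      congr 2
      ring]
    rw [integral_const_mul, key]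
    have hmC : (m:ℂ) ≠ 0 := Complex.ofReal_ne_zero.mpr hmne
    have hc0' : Complex.I * (z:ℂ) - ((lam / m : ℝ) : ℂ) ≠ 0 := by rw [← hc]; exact hc0
    rw [hc]
    push_cast at hc0' ⊢
    field_simp
    have hd : Complex.I * (z:ℂ) * (m:ℂ) - (lam:ℂ) ≠ 0 := fun h => hne (by linear_combination -h)
    rw [show (lam:ℂ) - Complex.I * (z:ℂ) * (m:ℂ) = -(Complex.I * (z:ℂ) * (m:ℂ) - (lam:ℂ)) by ring,
      neg_div, div_self hd, neg_neg]
end
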